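/- arXiv:2103.03403 — 10 statements merged into one kernel-verified Lean document; each statement's English description precedes it below -/
import Mathlib

section
/- Let F be a cumulative distribution function on [0, v̄] and R(v) = v·(1 - F(v)) the revenue function with maximizer p* and optimal value R* = R(p*). For any ε > 0 and any pair of functions x : [0,v̄] → [0,1], t : [0,v̄] → ℝ satisfying individual rationality (v·x(v) - t(v) ≥ 0 for all v) and ε-incentive compatibility (v·x(v) - t(v) ≥ v·x(v') - t(v') - ε for all v, v'), the expected revenue satisfies E[t(v)] - R* ≤ 2·δ·R* + ε/δ for every δ ∈ (0, 1/2], where the expectation is over v ~ F. -/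
open MeasureTheory Set
open scoped ENNReal

section NisanAux
lemma aux_ftc (U g : ℝ → ℝ) (vbar : ℝ) (hgmono : Monotone g)
    (hg0 : ∀ v, 0 ≤ g v) (hg1 : ∀ v, g v ≤ 1)
    (hslope : ∀ a b, 0 ≤ a → a < b → b ≤ vbar → g a * (b - a) ≤ U b - U a)
    (v : ℝ) (hv0 : 0 ≤ v) (hvb : v ≤ vbar) :
    ∫ s in (0:ℝ)..v, g s ≤ U v - U 0 := by
  rcases hv0.eq_or_lt with rfl | hvpos
  · simp
  have hgi : ∀ a b : ℝ, IntervalIntegrable g volume a b := fun a b => hgmono.intervalIntegrable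
  apply le_of_forall_pos_le_add
  intro c hc
  obtain ⟨n, hn⟩ := exists_nat_gt (v / c)
  have hn0 : 0 < (n : ℝ) := lt_trans (div_pos hvpos hc) hn
  have hvn : v / n < c := by
    rw [div_lt_iff₀ hn0]
    calc v = (v / c) * c := by field_simp
    _ < n * c := by nlinarith
    _ = c * n := by ring
  set p : ℕ → ℝ := fun i => i * (v / n) with hp
  have hΔpos : 0 < v / n := div_pos hvpos hn0
  have hpstep : ∀ i : ℕ, p (i + 1) - p i = v / n := by
    intro i; simp only [hp]; push_cast; ring
  have hpmono : ∀ i : ℕ, p i < p (i + 1) := fun i => by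
    have := hpstep i; linarith
  have hp0 : ∀ i : ℕ, 0 ≤ p i := fun i => by
    simp only [hp]; positivity
  have hple : ∀ i : ℕ, i ≤ n → p i ≤ v := by
    intro i hi
    simp only [hp]
    have hin : (i : ℝ) ≤ (n : ℝ) := by exact_mod_cast hi
    calc (i : ℝ) * (v / n) ≤ (n : ℝ) * (v / n) := mul_le_mul_of_nonneg_right hin hΔpos.le
      _ = v := by field_simp
  have hsplit : ∑ i ∈ Finset.range n, ∫ s in p i..p (i + 1), g s = ∫ s in (0:ℝ)..v, g s := by
    have := intervalIntegral.sum_integral_adjacent_intervals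
      (a := p) (n := n) (f := g) (μ := volume) (fun k _ => hgi _ _)
    rw [this]
    congr 1
    · simp [hp]
    · simp only [hp]; field_simp
  have hstep1 : ∀ i : ℕ, ∫ s in p i..p (i + 1), g s ≤ (v / n) * g (p (i + 1)) := by
    intro i
    calc ∫ s in p i..p (i + 1), g s ≤ ∫ _s in p i..p (i + 1), g (p (i + 1)) := by
          apply intervalIntegral.integral_mono_on (hpmono i).le (hgi _ _)
            intervalIntegrable_const
          intro s hs
          exact hgmono hs.2
      _ = (v / n) * g (p (i + 1)) := by
          rw [intervalIntegral.integral_const, hpstep i, smul_eq_mul]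
  have hstep2 : ∀ i ∈ Finset.range n, (v / n) * g (p i) ≤ U (p (i + 1)) - U (p i) := by
    intro i hi
    have := hslope (p i) (p (i + 1)) (hp0 i) (hpmono i)
      (le_trans (hple (i + 1) (Finset.mem_range.mp hi)) hvb)
    calc (v / n) * g (p i) = g (p i) * (p (i + 1) - p i) := by rw [hpstep i]; ring
      _ ≤ U (p (i + 1)) - U (p i) := this
  have htel1 : ∑ i ∈ Finset.range n, (U (p (i + 1)) - U (p i)) = U v - U 0 := by
    rw [Finset.sum_range_sub (fun i => U (p i))]
    congr 2
    · simp only [hp]; field_simp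
    · simp [hp]
  have htel2 : ∑ i ∈ Finset.range n, ((v / n) * g (p (i + 1)) - (v / n) * g (p i))
      = (v / n) * g (p n) - (v / n) * g (p 0) := by
    exact Finset.sum_range_sub (fun i => (v / n) * g (p i)) n
  have hshift : ∑ i ∈ Finset.range n, (v / n) * g (p (i + 1))
      ≤ ∑ i ∈ Finset.range n, (v / n) * g (p i) + v / n := by
    have h1 : ∑ i ∈ Finset.range n, ((v / n) * g (p (i + 1)) - (v / n) * g (p i))
        ≤ v / n := by
      rw [htel2]
      have := hg1 (p n); have := hg0 (p 0)
      nlinarith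
    have := Finset.sum_sub_distrib (s := Finset.range n)
      (f := fun i => (v / n) * g (p (i + 1))) (g := fun i => (v / n) * g (p i))
    linarith [h1, this.symm.le, this.le]
  calc ∫ s in (0:ℝ)..v, g s = ∑ i ∈ Finset.range n, ∫ s in p i..p (i + 1), g s := hsplit.symm
    _ ≤ ∑ i ∈ Finset.range n, (v / n) * g (p (i + 1)) := Finset.sum_le_sum (fun i _ => hstep1 i)
    _ ≤ ∑ i ∈ Finset.range n, (v / n) * g (p i) + v / n := hshift
    _ ≤ ∑ i ∈ Finset.range n, (U (p (i + 1)) - U (p i)) + v / n := by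
        linarith [Finset.sum_le_sum hstep2]
    _ = U v - U 0 + v / n := by rw [htel1]
    _ ≤ U v - U 0 + c := by linarith
lemma aux_layer (vbar : ℝ) (hvbar : 0 ≤ vbar) (P : Measure ℝ) [IsProbabilityMeasure P]
    (hsupp : P (Set.Icc 0 vbar) = 1)
    (g : ℝ → ℝ) (hgmono : Monotone g) (hg0 : ∀ v, 0 ≤ g v) (hg1 : ∀ v, g v ≤ 1)
    (Rstar : ℝ) (hRstar : 0 ≤ Rstar)
    (hprice : ∀ p, 0 ≤ p → p ≤ vbar → p * (P (Set.Ioi p)).toReal ≤ Rstar) :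
    Integrable (fun v => v * g v - ∫ s in (0:ℝ)..v, g s) P ∧
      ∫ v, (v * g v - ∫ s in (0:ℝ)..v, g s) ∂P ≤ Rstar := by
  have hgmeas : Measurable g := hgmono.measurable
  have hgi : ∀ a b : ℝ, IntervalIntegrable g volume a b := fun a b => hgmono.intervalIntegrable
  set Φ : ℝ → ℝ := fun v => v * g v - ∫ s in (0:ℝ)..v, g s with hΦ
  have hprim : Continuous (fun v : ℝ => ∫ s in (0:ℝ)..v, g s) :=
    intervalIntegral.continuous_primitive (fun a b => hgi a b) 0
  have hΦmeas : Measurable Φ := (measurable_id.mul hgmeas).sub hprim.measurable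
  have hcomplzero : P (Set.Icc 0 vbar)ᶜ = 0 := by
    rw [measure_compl measurableSet_Icc (measure_ne_top P _), hsupp, measure_univ]
    simp
  have haeI : ∀ᵐ v ∂P, v ∈ Set.Icc 0 vbar := by
    rw [ae_iff]
    simpa [Set.compl_def] using hcomplzero
  have hΦ0 : ∀ v ∈ Set.Icc 0 vbar, 0 ≤ Φ v := by
    intro v hv
    have h : ∫ s in (0:ℝ)..v, g s ≤ ∫ _s in (0:ℝ)..v, g v := by
      apply intervalIntegral.integral_mono_on hv.1 (hgi _ _) intervalIntegrable_const
      exact fun s hs => hgmono hs.2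
    rw [intervalIntegral.integral_const, smul_eq_mul, sub_zero] at h
    simp only [hΦ]; linarith [h]
  have hΦub : ∀ v ∈ Set.Icc 0 vbar, Φ v ≤ vbar := by
    intro v hv
    have h1 : 0 ≤ ∫ s in (0:ℝ)..v, g s :=
      intervalIntegral.integral_nonneg hv.1 (fun s _ => hg0 s)
    have h2 : v * g v ≤ v := by nlinarith [hg1 v, hg0 v, hv.1]
    simp only [hΦ]; linarith [hv.2]
  have hΦint : Integrable Φ P := by
    refine Integrable.mono' (integrable_const vbar) hΦmeas.aestronglyMeasurable ?_
    filter_upwards [haeI] with v hv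
    rw [Real.norm_eq_abs, abs_le]
    exact ⟨by linarith [hΦ0 v hv, hvbar], hΦub v hv⟩
  refine ⟨hΦint, ?_⟩
  set c : ℝ → ℝ := fun θ => sInf (insert vbar {u | u ∈ Set.Icc 0 vbar ∧ θ < g u}) with hc
  have hclb : ∀ θ : ℝ, ∀ y ∈ insert vbar {u | u ∈ Set.Icc 0 vbar ∧ θ < g u}, (0:ℝ) ≤ y := by
    intro θ y hy
    rcases hy with rfl | hy
    · exact hvbar
    · exact hy.1.1
  have hcne : ∀ θ : ℝ, (insert vbar {u | u ∈ Set.Icc 0 vbar ∧ θ < g u}).Nonempty :=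
    fun θ => ⟨vbar, Set.mem_insert _ _⟩
  have hcbdd : ∀ θ : ℝ, BddBelow (insert vbar {u | u ∈ Set.Icc 0 vbar ∧ θ < g u}) :=
    fun θ => ⟨0, hclb θ⟩
  have hc0 : ∀ θ, 0 ≤ c θ := fun θ => le_csInf (hcne θ) (hclb θ)
  have hcv : ∀ θ, c θ ≤ vbar := fun θ => csInf_le (hcbdd θ) (Set.mem_insert _ _)
  have hc_le : ∀ θ v, v ∈ Set.Icc 0 vbar → θ < g v → c θ ≤ v :=
    fun θ v hv h => csInf_le (hcbdd θ) (Set.mem_insert_of_mem _ ⟨hv, h⟩)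
  have hc_ge : ∀ θ s, 0 ≤ s → s ≤ vbar → g s ≤ θ → s ≤ c θ := by
    intro θ s hs0 hsv hgs
    apply le_csInf (hcne θ)
    rintro y (rfl | ⟨hy1, hy2⟩)
    · exact hsv
    · by_contra hys
      push_neg at hys
      exact absurd (lt_of_lt_of_le hy2 (le_trans (hgmono hys.le) hgs)) (lt_irrefl _)
  have hcmono : Monotone c := by
    intro θ1 θ2 h
    apply csInf_le_csInf (hcbdd θ1) (hcne θ2)
    apply Set.insert_subset_insert
    exact fun u hu => ⟨hu.1, lt_of_le_of_lt h hu.2⟩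
  have hcmeas : Measurable c := hcmono.measurable
  have hcR : ∀ θ, c θ * (P (Set.Ici (c θ))).toReal ≤ Rstar := by
    intro θ
    set cc := c θ with hccdef
    set A := (P (Set.Ici cc)).toReal with hA
    have hA0 : 0 ≤ A := ENNReal.toReal_nonneg
    have hA1 : A ≤ 1 := by
      rw [hA]
      simpa using ENNReal.toReal_mono ENNReal.one_ne_top (prob_le_one (μ := P) (s := Set.Ici cc))
    have key : ∀ p, 0 ≤ p → p < cc → p * A ≤ Rstar := by
      intro p hp0 hpc
      have hsub : P (Set.Ici cc) ≤ P (Set.Ioi p) :=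
        measure_mono (fun y hy => lt_of_lt_of_le hpc hy)
      have h : p * A ≤ p * (P (Set.Ioi p)).toReal :=
        mul_le_mul_of_nonneg_left (ENNReal.toReal_mono (measure_ne_top P _) hsub) hp0
      exact le_trans h (hprice p hp0 (le_trans hpc.le (hcv θ)))
    rcases (hc0 θ).eq_or_lt with hcc | hcc
    · simp only [hccdef]; rw [← hcc, zero_mul]; exact hRstar
    · apply le_of_forall_pos_le_add
      intro η hη
      have hmax0 : (0:ℝ) ≤ max 0 (cc - η) := le_max_left _ _
      have hmaxlt : max 0 (cc - η) < cc := max_lt hcc (by linarith)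
      have hp := key _ hmax0 hmaxlt
      have hd : cc - max 0 (cc - η) ≤ η := by
        have := le_max_right 0 (cc - η); linarith
      have h6 : (cc - max 0 (cc - η)) * A ≤ η :=
        le_trans (mul_le_mul_of_nonneg_right hd hA0) (by nlinarith)
      nlinarith [hp, h6]
  -- pointwise layer-cake bound
  have hrepr : ∀ v ∈ Set.Icc 0 vbar,
      ENNReal.ofReal (Φ v)
        ≤ ∫⁻ θ in Set.Ico (0:ℝ) 1, (if θ < g v then ENNReal.ofReal (c θ) else 0) := by
    intro v hv
    have hint1 : IntegrableOn g (Set.Ioc 0 v) volume := (hgi 0 v).1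
    have hint2 : IntegrableOn (fun _ : ℝ => g v) (Set.Ioc 0 v) volume :=
      integrableOn_const (by rw [Real.volume_Ioc]; exact ENNReal.ofReal_ne_top)
    have hΦeq : Φ v = ∫ s in Set.Ioc 0 v, (g v - g s) := by
      rw [integral_sub hint2 hint1, setIntegral_const, smul_eq_mul, measureReal_def, Real.volume_Ioc,
        ENNReal.toReal_ofReal (by linarith [hv.1] : (0:ℝ) ≤ v - 0)]
      simp only [hΦ]
      rw [intervalIntegral.integral_of_le hv.1]
      ring
    have hnn : 0 ≤ᵐ[volume.restrict (Set.Ioc 0 v)] fun s => g v - g s := by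
      filter_upwards [ae_restrict_mem measurableSet_Ioc] with s hs
      exact sub_nonneg.mpr (hgmono hs.2)
    have hofr : ENNReal.ofReal (Φ v) = ∫⁻ s in Set.Ioc 0 v, ENNReal.ofReal (g v - g s) := by
      rw [hΦeq]
      exact ofReal_integral_eq_lintegral_ofReal (hint2.sub hint1) hnn
    have hlayer : ∀ s, s ∈ Set.Ioc 0 v →
        ENNReal.ofReal (g v - g s)
          = ∫⁻ θ in Set.Ico (0:ℝ) 1, (if g s ≤ θ ∧ θ < g v then 1 else 0) := by
      intro s hs
      have hmem : Set.Ico (g s) (g v) ⊆ Set.Ico (0:ℝ) 1 :=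
        fun θ hθ => ⟨le_trans (hg0 s) hθ.1, lt_of_lt_of_le hθ.2 (hg1 v)⟩
      have hfun : (fun θ : ℝ => (if g s ≤ θ ∧ θ < g v then (1:ℝ≥0∞) else 0))
          = (Set.Ico (g s) (g v)).indicator (fun _ => 1) := by
        funext θ; simp [Set.indicator_apply, Set.mem_Ico]
      rw [hfun, lintegral_indicator measurableSet_Ico, Measure.restrict_restrict measurableSet_Ico,
        setLIntegral_one, Set.inter_eq_self_of_subset_left hmem, Real.volume_Ico]
    have hset : MeasurableSet {p : ℝ × ℝ | g p.1 ≤ p.2 ∧ p.2 < g v} := by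
      exact (measurableSet_le (hgmeas.comp measurable_fst) measurable_snd).inter
        (measurableSet_lt measurable_snd measurable_const)
    have hswap : ∫⁻ s in Set.Ioc 0 v, ∫⁻ θ in Set.Ico (0:ℝ) 1,
          (if g s ≤ θ ∧ θ < g v then (1:ℝ≥0∞) else 0)
        = ∫⁻ θ in Set.Ico (0:ℝ) 1, ∫⁻ s in Set.Ioc 0 v,
          (if g s ≤ θ ∧ θ < g v then (1:ℝ≥0∞) else 0) := by
      apply lintegral_lintegral_swap
      exact (Measurable.ite hset measurable_const measurable_const).aemeasurable
    have hinner : ∀ θ : ℝ, (∫⁻ s in Set.Ioc 0 v, (if g s ≤ θ ∧ θ < g v then (1:ℝ≥0∞) else 0))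
        ≤ (if θ < g v then ENNReal.ofReal (c θ) else 0) := by
      intro θ
      by_cases hθ : θ < g v
      · simp only [hθ, and_true, if_true]
        have hfun : (fun s : ℝ => if g s ≤ θ then (1:ℝ≥0∞) else 0)
            = ({s : ℝ | g s ≤ θ}).indicator (fun _ => 1) := by
          funext s; simp [Set.indicator_apply]
        rw [hfun, lintegral_indicator (measurableSet_le hgmeas measurable_const),
          Measure.restrict_restrict (measurableSet_le hgmeas measurable_const), setLIntegral_one]
        calc volume ({s : ℝ | g s ≤ θ} ∩ Set.Ioc 0 v)
            ≤ volume (Set.Ioc 0 (c θ)) := by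
              apply measure_mono
              rintro s ⟨hs1, hs2⟩
              exact ⟨hs2.1, hc_ge θ s hs2.1.le (le_trans hs2.2 hv.2) hs1⟩
          _ = ENNReal.ofReal (c θ) := by rw [Real.volume_Ioc, sub_zero]
      · simp only [hθ, and_false, if_false]
        simp
    calc ENNReal.ofReal (Φ v)
        = ∫⁻ s in Set.Ioc 0 v, ENNReal.ofReal (g v - g s) := hofr
      _ = ∫⁻ s in Set.Ioc 0 v, ∫⁻ θ in Set.Ico (0:ℝ) 1,
            (if g s ≤ θ ∧ θ < g v then 1 else 0) :=
          setLIntegral_congr_fun measurableSet_Ioc hlayer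
      _ = ∫⁻ θ in Set.Ico (0:ℝ) 1, ∫⁻ s in Set.Ioc 0 v,
            (if g s ≤ θ ∧ θ < g v then 1 else 0) := hswap
      _ ≤ ∫⁻ θ in Set.Ico (0:ℝ) 1, (if θ < g v then ENNReal.ofReal (c θ) else 0) :=
          lintegral_mono hinner
  have h1 : ∫ v, Φ v ∂P = (∫⁻ v, ENNReal.ofReal (Φ v) ∂P).toReal := by
    apply integral_eq_lintegral_of_nonneg_ae
    · filter_upwards [haeI] with v hv; exact hΦ0 v hv
    · exact hΦmeas.aestronglyMeasurable
  have h2 : ∫⁻ v, ENNReal.ofReal (Φ v) ∂P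
      ≤ ∫⁻ v, (∫⁻ θ in Set.Ico (0:ℝ) 1, (if θ < g v then ENNReal.ofReal (c θ) else 0)) ∂P := by
    apply lintegral_mono_ae
    filter_upwards [haeI] with v hv
    exact hrepr v hv
  have h3 : ∫⁻ v, (∫⁻ θ in Set.Ico (0:ℝ) 1, (if θ < g v then ENNReal.ofReal (c θ) else 0)) ∂P
      = ∫⁻ θ in Set.Ico (0:ℝ) 1, (∫⁻ v, (if θ < g v then ENNReal.ofReal (c θ) else 0) ∂P) := by
    apply lintegral_lintegral_swap
    apply Measurable.aemeasurable
    apply Measurable.ite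
    · exact measurableSet_lt measurable_snd (hgmeas.comp measurable_fst)
    · exact (ENNReal.measurable_ofReal.comp hcmeas).comp measurable_snd
    · exact measurable_const
  have h4 : ∀ θ : ℝ, (∫⁻ v, (if θ < g v then ENNReal.ofReal (c θ) else 0) ∂P)
      ≤ ENNReal.ofReal Rstar := by
    intro θ
    have hSm : MeasurableSet {v : ℝ | θ < g v} := measurableSet_lt measurable_const hgmeas
    have heq : (fun v => if θ < g v then ENNReal.ofReal (c θ) else 0)
        = ({v : ℝ | θ < g v}).indicator (fun _ => ENNReal.ofReal (c θ)) := by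
      funext w; simp [Set.indicator_apply]
    rw [heq, lintegral_indicator hSm, setLIntegral_const]
    have hPle : P {v : ℝ | θ < g v} ≤ P (Set.Ici (c θ)) := by
      calc P {v : ℝ | θ < g v}
          ≤ P (({v : ℝ | θ < g v} ∩ Set.Icc 0 vbar) ∪ (Set.Icc 0 vbar)ᶜ) := by
            apply measure_mono
            intro v hv
            by_cases hvI : v ∈ Set.Icc 0 vbar
            · exact Or.inl ⟨hv, hvI⟩
            · exact Or.inr hvI
        _ ≤ P ({v : ℝ | θ < g v} ∩ Set.Icc 0 vbar) + P ((Set.Icc 0 vbar)ᶜ) :=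
            measure_union_le _ _
        _ = P ({v : ℝ | θ < g v} ∩ Set.Icc 0 vbar) := by rw [hcomplzero, add_zero]
        _ ≤ P (Set.Ici (c θ)) := measure_mono (fun v hv => hc_le θ v hv.2 hv.1)
    calc ENNReal.ofReal (c θ) * P {v : ℝ | θ < g v}
        ≤ ENNReal.ofReal (c θ) * P (Set.Ici (c θ)) := mul_le_mul_right hPle _
      _ = ENNReal.ofReal (c θ * (P (Set.Ici (c θ))).toReal) := by
          rw [ENNReal.ofReal_mul (hc0 θ), ENNReal.ofReal_toReal (measure_ne_top P _)]
      _ ≤ ENNReal.ofReal Rstar := ENNReal.ofReal_le_ofReal (hcR θ)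
  have h5 : ∫⁻ θ in Set.Ico (0:ℝ) 1, (∫⁻ v, (if θ < g v then ENNReal.ofReal (c θ) else 0) ∂P)
      ≤ ENNReal.ofReal Rstar := by
    calc ∫⁻ θ in Set.Ico (0:ℝ) 1, (∫⁻ v, (if θ < g v then ENNReal.ofReal (c θ) else 0) ∂P)
        ≤ ∫⁻ _θ in Set.Ico (0:ℝ) 1, ENNReal.ofReal Rstar := lintegral_mono (fun θ => h4 θ)
      _ = ENNReal.ofReal Rstar * volume (Set.Ico (0:ℝ) 1) := setLIntegral_const _ _
      _ = ENNReal.ofReal Rstar := by rw [Real.volume_Ico]; norm_num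
  rw [h1]
  apply ENNReal.toReal_le_of_le_ofReal hRstar
  exact le_trans h2 (le_trans (le_of_eq h3) h5)

end NisanAux

set_option maxHeartbeats 1000000 in
/-- Nisan's rounding upper bound: for any IR, ε-IC mechanism `(x, t)` on `[0, v̄]`,
the expected revenue exceeds the optimal posted-price revenue `R* = R(p*)` by at most
`2·δ·R* + ε/δ` for every `δ ∈ (0, 1/2]`. -/
theorem nisan_rounding_bound
    (vbar : ℝ) (P : Measure ℝ) [IsProbabilityMeasure P]
    (hsupp : P (Set.Icc 0 vbar) = 1)
    (F : ℝ → ℝ) (hF : ∀ v, F v = (P (Set.Iic v)).toReal)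
    (R : ℝ → ℝ) (hR : ∀ v, R v = v * (1 - F v))
    (pstar : ℝ) (hpstar : pstar ∈ Set.Icc 0 vbar)
    (hmax : ∀ v ∈ Set.Icc 0 vbar, R v ≤ R pstar)
    (ε : ℝ) (hε : 0 < ε)
    (x t : ℝ → ℝ)
    (hx : ∀ v ∈ Set.Icc 0 vbar, x v ∈ Set.Icc (0:ℝ) 1)
    (hIR : ∀ v ∈ Set.Icc 0 vbar, 0 ≤ v * x v - t v)
    (hIC : ∀ v ∈ Set.Icc 0 vbar, ∀ v' ∈ Set.Icc 0 vbar,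
      v * x v' - t v' - ε ≤ v * x v - t v)
    (ht : Integrable t P)
    (δ : ℝ) (hδ : δ ∈ Set.Ioc (0:ℝ) (1/2)) :
    (∫ v, t v ∂P) - R pstar ≤ 2 * δ * R pstar + ε / δ := by
  obtain ⟨hδ0, hδ2⟩ := hδ
  have hvbar0 : (0:ℝ) ≤ vbar := le_trans hpstar.1 hpstar.2
  have h0I : (0:ℝ) ∈ Set.Icc 0 vbar := ⟨le_refl 0, hvbar0⟩
  have hR0 : 0 ≤ R pstar := by
    have h := hmax 0 h0I
    rw [hR 0] at h
    linarith [h]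
  have ht0 : t 0 ≤ 0 := by have := hIR 0 h0I; linarith [this]
  have htlb : ∀ w ∈ Set.Icc 0 vbar, t 0 - ε ≤ t w := by
    intro w hw
    have := hIC 0 h0I w hw
    linarith [this]
  have hδ1 : δ < 1 := lt_of_le_of_lt hδ2 (by norm_num)
  have hβ0 : (0:ℝ) < 1 - δ := by linarith
  set U : ℝ → ℝ := fun v => sSup ((fun w => v * x w - (1 - δ) * t w) '' Set.Icc 0 vbar) with hU
  have hUne : ∀ v : ℝ, ((fun w => v * x w - (1 - δ) * t w) '' Set.Icc 0 vbar).Nonempty :=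
    fun v => ⟨_, Set.mem_image_of_mem _ h0I⟩
  have hUub : ∀ v : ℝ, ∀ y ∈ (fun w => v * x w - (1 - δ) * t w) '' Set.Icc 0 vbar,
      y ≤ |v| + (1 - δ) * (ε - t 0) := by
    rintro v y ⟨w, hw, rfl⟩
    have hxw := hx w hw
    have h1 : v * x w ≤ |v| := by
      rcases le_or_gt 0 v with h | h
      · calc v * x w ≤ v * 1 := mul_le_mul_of_nonneg_left hxw.2 h
          _ = v := mul_one v
          _ ≤ |v| := le_abs_self v
      · calc v * x w ≤ 0 := mul_nonpos_of_nonpos_of_nonneg h.le hxw.1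
          _ ≤ |v| := abs_nonneg v
    have h2 := htlb w hw
    have h3 : (1 - δ) * (t 0 - ε) ≤ (1 - δ) * t w := mul_le_mul_of_nonneg_left h2 hβ0.le
    show v * x w - (1 - δ) * t w ≤ |v| + (1 - δ) * (ε - t 0)
    nlinarith [h1, h3]
  have hUbdd : ∀ v : ℝ, BddAbove ((fun w => v * x w - (1 - δ) * t w) '' Set.Icc 0 vbar) :=
    fun v => ⟨_, hUub v⟩
  have hUge : ∀ v w : ℝ, w ∈ Set.Icc 0 vbar → v * x w - (1 - δ) * t w ≤ U v :=
    fun v w hw => le_csSup (hUbdd v) (Set.mem_image_of_mem _ hw)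
  have hUle : ∀ v a : ℝ, (∀ w ∈ Set.Icc 0 vbar, v * x w - (1 - δ) * t w ≤ a) → U v ≤ a := by
    intro v a h
    apply csSup_le (hUne v)
    rintro y ⟨w, hw, rfl⟩
    exact h w hw
  have hUapprox : ∀ v η : ℝ, 0 < η → ∃ w ∈ Set.Icc 0 vbar,
      U v - η < v * x w - (1 - δ) * t w := by
    intro v η hη
    obtain ⟨y, hy, hy2⟩ := exists_lt_of_lt_csSup (hUne v) (show U v - η < U v by linarith)
    obtain ⟨w, hw, rfl⟩ := hy
    exact ⟨w, hw, hy2⟩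
  have hU0 : 0 ≤ U 0 := by
    have h := hUge 0 0 h0I
    have hh : 0 ≤ (1 - δ) * (-(t 0)) := mul_nonneg hβ0.le (by linarith)
    nlinarith [h, hh]
  have hUmono : Monotone U := by
    intro a b hab
    apply hUle
    intro w hw
    have hxw := hx w hw
    have h := hUge b w hw
    have hh : 0 ≤ (b - a) * x w := mul_nonneg (by linarith) hxw.1
    nlinarith [h, hh]
  have hUlip : ∀ a b : ℝ, a ≤ b → U b ≤ U a + (b - a) := by
    intro a b hab
    apply hUle
    intro w hw
    have hxw := hx w hw
    have h := hUge a w hw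
    have hh : (b - a) * x w ≤ (b - a) * 1 := mul_le_mul_of_nonneg_left hxw.2 (by linarith)
    nlinarith [h, hh]
  have hUconv : ConvexOn ℝ Set.univ U := by
    refine ⟨convex_univ, ?_⟩
    intro a _ b _ p q hp hq hpq
    apply hUle
    intro w hw
    have h1 := hUge a w hw
    have h2 := hUge b w hw
    have hq1 : q = 1 - p := by linarith
    subst hq1
    have e1 : p * (a * x w - (1 - δ) * t w) ≤ p * U a := mul_le_mul_of_nonneg_left h1 hp
    have e2 : (1 - p) * (b * x w - (1 - δ) * t w) ≤ (1 - p) * U b :=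
      mul_le_mul_of_nonneg_left h2 hq
    simp only [smul_eq_mul]
    nlinarith [e1, e2]

  have hslope3 : ∀ a b w : ℝ, a < b → b < w →
      (U b - U a) / (b - a) ≤ (U w - U b) / (w - b) :=
    fun a b w h1 h2 => hUconv.slope_mono_adjacent (Set.mem_univ a) (Set.mem_univ w) h1 h2
  set T : ℝ → Set ℝ := fun a => (fun w => (U w - U a) / (w - a)) '' Set.Ioc a vbar with hT
  have hTel : ∀ a : ℝ, 0 ≤ a → ∀ y ∈ T a, 0 ≤ y ∧ y ≤ 1 := by
    rintro a ha0 y ⟨w, hw, rfl⟩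
    have hwa : 0 < w - a := by linarith [hw.1]
    constructor
    · exact div_nonneg (sub_nonneg.mpr (hUmono hw.1.le)) hwa.le
    · rw [div_le_one hwa]
      linarith [hUlip a w hw.1.le]
  have hTbdd : ∀ a : ℝ, 0 ≤ a → BddBelow (T a) :=
    fun a ha => ⟨0, fun y hy => (hTel a ha y hy).1⟩
  have hTne : ∀ a : ℝ, a < vbar → (T a).Nonempty :=
    fun a ha => ⟨_, ⟨vbar, ⟨ha, le_refl vbar⟩, rfl⟩⟩
  set g : ℝ → ℝ := fun v => if max v 0 < vbar then sInf (T (max v 0)) else 1 with hg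
  have hgeq : ∀ v : ℝ, 0 ≤ v → v < vbar → g v = sInf (T v) := by
    intro v h0 h1
    simp only [hg]
    rw [max_eq_left h0, if_pos h1]
  have hgvbar : g vbar = 1 := by
    simp only [hg]
    rw [max_eq_left hvbar0, if_neg (lt_irrefl vbar)]
  have hg0 : ∀ v, 0 ≤ g v := by
    intro v
    simp only [hg]
    split
    · next h => exact le_csInf (hTne _ h) (fun y hy => (hTel _ (le_max_right v 0) y hy).1)
    · norm_num
  have hg1 : ∀ v, g v ≤ 1 := by
    intro v
    simp only [hg]
    split
    · next h =>
      exact csInf_le_of_le (hTbdd _ (le_max_right v 0)) ⟨vbar, ⟨h, le_refl _⟩, rfl⟩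
        (hTel _ (le_max_right v 0) _ ⟨vbar, ⟨h, le_refl _⟩, rfl⟩).2
    · exact le_refl 1
  have hg_le_slope : ∀ v w : ℝ, 0 ≤ v → v < w → w ≤ vbar → g v ≤ (U w - U v) / (w - v) := by
    intro v w h0 h1 h2
    rw [hgeq v h0 (lt_of_lt_of_le h1 h2)]
    exact csInf_le (hTbdd v h0) ⟨w, ⟨h1, h2⟩, rfl⟩
  have hle_g : ∀ v b : ℝ, 0 ≤ v → v < vbar →
      (∀ w, v < w → w ≤ vbar → b ≤ (U w - U v) / (w - v)) → b ≤ g v := by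
    intro v b h0 h1 h
    rw [hgeq v h0 h1]
    apply le_csInf (hTne v h1)
    rintro y ⟨w, hw, rfl⟩
    exact h w hw.1 hw.2
  have hgc : ∀ v : ℝ, g v = g (max v 0) := by
    intro v
    simp only [hg]
    rw [max_eq_left (le_max_right v 0)]
  have hg_mono' : ∀ a b : ℝ, 0 ≤ a → a ≤ b → g a ≤ g b := by
    intro a b ha hab
    have hb : 0 ≤ b := le_trans ha hab
    by_cases hbv : b < vbar
    · have hav : a < vbar := lt_of_le_of_lt hab hbv
      rcases hab.eq_or_lt with rfl | hlt
      · exact le_refl _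
      · rw [hgeq a ha hav, hgeq b hb hbv]
        apply le_csInf (hTne b hbv)
        rintro y ⟨w, hw, rfl⟩
        calc sInf (T a) ≤ (U b - U a) / (b - a) :=
              csInf_le (hTbdd a ha) ⟨b, ⟨hlt, hbv.le⟩, rfl⟩
          _ ≤ (U w - U b) / (w - b) := hslope3 a b w hlt hw.1
    · have hgb : g b = 1 := by
        simp only [hg]
        rw [max_eq_left hb, if_neg hbv]
      rw [hgb]
      exact hg1 a
  have hgmono : Monotone g := by
    intro a b hab
    rw [hgc a, hgc b]
    exact hg_mono' _ _ (le_max_right a 0) (max_le_max hab (le_refl 0))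
  -- pointwise payment bound via approximate maximizers
  have hcore : ∀ v ∈ Set.Icc 0 vbar, ∀ η : ℝ, 0 < η → ∃ w ∈ Set.Icc 0 vbar,
      ((1 - δ) * t v ≤ v * x w - U v + η + (1 - δ) * ((ε + η) / δ) ∧
        U v - η < v * x w - (1 - δ) * t w) := by
    intro v hv η hη
    obtain ⟨w, hwI, hw⟩ := hUapprox v η hη
    refine ⟨w, hwI, ?_, hw⟩
    have hic := hIC v hv w hwI
    have hge := hUge v v hv
    have h1 : δ * t v - ε - η ≤ δ * t w := by linarith [hw, hge, hic]
    have h2 : t v - t w ≤ (ε + η) / δ := by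
      rw [le_div_iff₀ hδ0]
      linarith [h1]
    have h3 : (1 - δ) * (t v - t w) ≤ (1 - δ) * ((ε + η) / δ) :=
      mul_le_mul_of_nonneg_left h2 hβ0.le
    linarith [hw, h3]
  have hF3 : ∀ v ∈ Set.Icc 0 vbar,
      (1 - δ) * t v ≤ v * g v - U v + (1 - δ) * (ε / δ) := by
    intro v hv
    by_cases hmid : 0 < v ∧ v < vbar
    · obtain ⟨hv0, hvv⟩ := hmid
      have hkey : ∀ w, v < w → w ≤ vbar →
          (1 - δ) * t v + U v - (1 - δ) * (ε / δ) ≤ v * ((U w - U v) / (w - v)) := by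
        intro w hw1 hw2
        apply le_of_forall_pos_le_add
        intro η' hη'
        have hwv : 0 < w - v := by linarith
        set K : ℝ := v / (w - v) + 1 + (1 - δ) / δ with hK
        have hK0 : 0 < K := by
          have k1 : 0 ≤ v / (w - v) := div_nonneg hv0.le hwv.le
          have k2 : 0 ≤ (1 - δ) / δ := div_nonneg hβ0.le hδ0.le
          simp only [hK]; linarith
        set η := η' / K with hηdef
        have hηpos : 0 < η := div_pos hη' hK0
        obtain ⟨ws, hwsI, hws1, hws2⟩ := hcore v hv η hηpos
        have hUw := hUge w ws hwsI
        have hxws : x ws * (w - v) < U w - U v + η := by linarith [hws2, hUw]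
        have hxb : x ws ≤ (U w - U v + η) / (w - v) :=
          ((lt_div_iff₀ hwv).mpr hxws).le
        have hmul : v * x ws ≤ v * ((U w - U v + η) / (w - v)) :=
          mul_le_mul_of_nonneg_left hxb hv0.le
        rw [show (ε + η) / δ = ε / δ + η / δ from add_div _ _ _] at hws1
        rw [show (U w - U v + η) / (w - v)
            = (U w - U v) / (w - v) + η / (w - v) from add_div _ _ _] at hmul
        have hslack : v * (η / (w - v)) + η + (1 - δ) * (η / δ) = η * K := by
          simp only [hK]
          field_simp
        have hηK : η * K = η' := by
          simp only [hηdef]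
          field_simp
        set s1 : ℝ := (U w - U v) / (w - v) with hs1
        set s2 : ℝ := η / (w - v) with hs2
        set s3 : ℝ := ε / δ with hs3
        set s4 : ℝ := η / δ with hs4
        linarith [hws1, hmul, hslack, hηK]
      have hdiv : ((1 - δ) * t v + U v - (1 - δ) * (ε / δ)) / v ≤ g v := by
        apply hle_g v _ hv0.le hvv
        intro w hw1 hw2
        rw [div_le_iff₀ hv0]
        linarith [hkey w hw1 hw2]
      rw [div_le_iff₀ hv0] at hdiv
      linarith [hdiv]
    · have hvg : ∀ w ∈ Set.Icc 0 vbar, v * x w ≤ v * g v := by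
        intro w hw
        rcases not_and_or.mp hmid with h | h
        · have hv00 : v = 0 := le_antisymm (not_lt.mp h) hv.1
          rw [hv00]; simp
        · have hveq : v = vbar := le_antisymm hv.2 (not_lt.mp h)
          rw [hveq, hgvbar, mul_one]
          calc vbar * x w ≤ vbar * 1 := mul_le_mul_of_nonneg_left (hx w hw).2 hvbar0
            _ = vbar := mul_one vbar
      apply le_of_forall_pos_le_add
      intro η' hη'
      have hηpos : 0 < η' * δ := mul_pos hη' hδ0
      obtain ⟨ws, hwsI, hws1, _⟩ := hcore v hv (η' * δ) hηpos
      have h4 : (ε + η' * δ) / δ = ε / δ + η' := by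
        rw [add_div, mul_div_assoc, div_self hδ0.ne', mul_one]
      rw [h4] at hws1
      have h5 := hvg ws hwsI
      linarith [hws1, h5]
  have hprice : ∀ p : ℝ, 0 ≤ p → p ≤ vbar → p * (P (Set.Ioi p)).toReal ≤ R pstar := by
    intro p hp0 hpv
    have h1 : P (Set.Ioi p) = 1 - P (Set.Iic p) := by
      rw [← Set.compl_Iic, measure_compl measurableSet_Iic (measure_ne_top P _), measure_univ]
    have h2 : (P (Set.Ioi p)).toReal = 1 - F p := by
      rw [hF, h1, ENNReal.toReal_sub_of_le prob_le_one ENNReal.one_ne_top]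
      simp
    rw [h2, ← hR p]
    exact hmax p ⟨hp0, hpv⟩
  obtain ⟨hΦint, hΦle⟩ := aux_layer vbar hvbar0 P hsupp g hgmono hg0 hg1 (R pstar) hR0 hprice
  have hF4 : ∀ v ∈ Set.Icc 0 vbar, ∫ s in (0:ℝ)..v, g s ≤ U v - U 0 := by
    intro v hv
    apply aux_ftc U g vbar hgmono hg0 hg1 _ v hv.1 hv.2
    intro a b ha0 hab hbv
    have hs := hg_le_slope a b ha0 hab hbv
    have hba : 0 < b - a := by linarith
    calc g a * (b - a) ≤ ((U b - U a) / (b - a)) * (b - a) :=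
          mul_le_mul_of_nonneg_right hs hba.le
      _ = U b - U a := by field_simp
  have hcomplzero : P (Set.Icc 0 vbar)ᶜ = 0 := by
    rw [measure_compl measurableSet_Icc (measure_ne_top P _), hsupp, measure_univ]
    simp
  have haeI : ∀ᵐ v ∂P, v ∈ Set.Icc 0 vbar := by
    rw [ae_iff]
    simpa [Set.compl_def] using hcomplzero
  have hmain : ∀ᵐ v ∂P, (1 - δ) * t v
      ≤ (v * g v - ∫ s in (0:ℝ)..v, g s) + (1 - δ) * (ε / δ) := by
    filter_upwards [haeI] with v hv
    have h3 := hF3 v hv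
    have h4 := hF4 v hv
    linarith [hU0]
  have hint1 : Integrable (fun v => (1 - δ) * t v) P := ht.const_mul _
  have hint2 : Integrable (fun v => (v * g v - ∫ s in (0:ℝ)..v, g s) + (1 - δ) * (ε / δ)) P :=
    hΦint.add (integrable_const _)
  have h6 := integral_mono_ae hint1 hint2 hmain
  rw [integral_const_mul, integral_add hΦint (integrable_const _), integral_const] at h6
  simp only [measureReal_def, measure_univ, ENNReal.toReal_one, one_smul] at h6
  -- h6 : (1 - δ) * ∫ t ≤ ∫ Φ + (1 - δ) * (ε / δ)
  have h7 : 0 ≤ δ * (1 - 2 * δ) * R pstar :=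
    mul_nonneg (mul_nonneg hδ0.le (by linarith)) hR0
  have h8 : (1 - δ) * ((∫ v, t v ∂P) - R pstar) ≤ (1 - δ) * (2 * δ * R pstar + ε / δ) := by
    nlinarith [h6, hΦle, h7]
  exact le_of_mul_le_mul_left h8 hβ0
end

section
/- Let F be a CDF on [0, v̄] with revenue function R(v) = v·(1-F(v)) and optimal posted price p* ∈ argmax R. For any ε > 0, there exist positive constants C and ε₀ such that for all ε ∈ (0, ε₀], sup over ε-IC and IR mechanisms of expected revenue minus R(p*) is at most C·√ε. -/
open MeasureTheory Set
open scoped ENNReal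


lemma abel_bound (N : ℕ) (p D : ℕ → ℝ) (A M : ℝ)
    (hp : ∀ k, 0 ≤ p k) (hD0 : 0 ≤ D 0) (hmono : ∀ j, D j ≤ D (j+1)) (hDM : ∀ j, D j ≤ M)
    (hA : 0 ≤ A)
    (hT : ∀ i, i ≤ N + 1 → ((i:ℝ)+1) * (∑ k ∈ Finset.range N, if i ≤ k + 1 then p k else 0) ≤ A) :
    ∑ k ∈ Finset.range N, p k * (((k:ℝ)+1) * D (k+1) - ∑ j ∈ Finset.range k, D j) ≤ A * M := by
  set E : ℕ → ℝ := fun i => if i = 0 then D 0 else D i - D (i-1) with hE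
  have hEnn : ∀ i, 0 ≤ E i := by
    intro i
    cases i with
    | zero => simpa [hE] using hD0
    | succ n => simpa [hE] using sub_nonneg.2 (hmono n)
  have hsumE : ∀ m, ∑ i ∈ Finset.range (m+1), E i = D m := by
    intro m
    induction m with
    | zero => simp [hE]
    | succ n ih => rw [Finset.sum_range_succ, ih]; simp [hE]
  have hid : ∀ k : ℕ, ((k:ℝ)+1) * D (k+1) - ∑ j ∈ Finset.range k, D j
      = (∑ i ∈ Finset.range (k+1), ((i:ℝ)+1) * E i) + ((k:ℝ)+1) * E (k+1) := by
    intro k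
    induction k with
    | zero => simp [hE]
    | succ n ih =>
      rw [Finset.sum_range_succ (f := fun j => D j),
        Finset.sum_range_succ (f := fun i => ((i:ℝ)+1) * E i)]
      have h1 : E (n+1) = D (n+1) - D n := by simp [hE]
      have h2 : E (n+2) = D (n+2) - D (n+1) := by simp [hE]
      push_cast
      push_cast at ih
      nlinarith [ih, h1, h2]
  have hbr : ∀ k : ℕ, ((k:ℝ)+1) * D (k+1) - ∑ j ∈ Finset.range k, D j
      ≤ ∑ i ∈ Finset.range (k+2), ((i:ℝ)+1) * E i := by
    intro k
    rw [hid k]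
    have hs : ∑ i ∈ Finset.range (k+2), ((i:ℝ)+1) * E i
        = (∑ i ∈ Finset.range (k+1), ((i:ℝ)+1) * E i) + (((k+1:ℕ):ℝ)+1) * E (k+1) :=
      Finset.sum_range_succ _ (k+1)
    rw [hs]
    have h : ((k:ℝ)+1) * E (k+1) ≤ (((k+1:ℕ):ℝ)+1) * E (k+1) := by
      apply mul_le_mul_of_nonneg_right _ (hEnn (k+1))
      push_cast; linarith
    linarith
  calc ∑ k ∈ Finset.range N, p k * (((k:ℝ)+1) * D (k+1) - ∑ j ∈ Finset.range k, D j)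
      ≤ ∑ k ∈ Finset.range N, p k * ∑ i ∈ Finset.range (k+2), ((i:ℝ)+1) * E i := by
        exact Finset.sum_le_sum fun k _ => mul_le_mul_of_nonneg_left (hbr k) (hp k)
    _ = ∑ k ∈ Finset.range N, ∑ i ∈ Finset.range (N+2),
          (if i ≤ k+1 then p k * (((i:ℝ)+1) * E i) else 0) := by
        apply Finset.sum_congr rfl
        intro k hk
        rw [Finset.mul_sum, ← Finset.sum_filter]
        have hfil : (Finset.range (N+2)).filter (· ≤ k+1) = Finset.range (k+2) := by
          ext i
          simp only [Finset.mem_filter, Finset.mem_range]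
          have := Finset.mem_range.mp hk
          omega
        rw [hfil]
    _ = ∑ i ∈ Finset.range (N+2), ((i:ℝ)+1) *
          (∑ k ∈ Finset.range N, if i ≤ k+1 then p k else 0) * E i := by
        rw [Finset.sum_comm]
        apply Finset.sum_congr rfl
        intro i _
        rw [Finset.mul_sum, Finset.sum_mul]
        apply Finset.sum_congr rfl
        intro k _
        split_ifs <;> ring
    _ ≤ ∑ i ∈ Finset.range (N+2), A * E i := by
        apply Finset.sum_le_sum
        intro i hi
        have hi' := Finset.mem_range.mp hi
        exact mul_le_mul_of_nonneg_right (hT i (by omega)) (hEnn i)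
    _ = A * D (N+1) := by rw [← Finset.mul_sum, hsumE]
    _ ≤ A * M := mul_le_mul_of_nonneg_left (hDM (N+1)) hA


lemma convex_shift {f : ℝ → ℝ} (hf : ConvexOn ℝ Set.univ f) {a b c : ℝ}
    (hab : a ≤ b) (hc : 0 ≤ c) : f (a + c) - f a ≤ f (b + c) - f b := by
  rcases eq_or_lt_of_le hab with rfl | hab'
  · simp
  have hL : 0 < b + c - a := by linarith
  have hlam0 : 0 ≤ c / (b + c - a) := div_nonneg hc hL.le
  have hmu0 : 0 ≤ (b - a) / (b + c - a) := div_nonneg (by linarith) hL.le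
  have hsum1 : (b - a) / (b + c - a) + c / (b + c - a) = 1 := by field_simp; ring
  have hsum2 : c / (b + c - a) + (b - a) / (b + c - a) = 1 := by field_simp; ring
  have h1 := hf.2 (Set.mem_univ a) (Set.mem_univ (b + c)) hmu0 hlam0 hsum1
  have h2 := hf.2 (Set.mem_univ a) (Set.mem_univ (b + c)) hlam0 hmu0 hsum2
  simp only [smul_eq_mul] at h1 h2
  have e1 : (b - a) / (b + c - a) * a + c / (b + c - a) * (b + c) = a + c := by
    field_simp; ring
  have e2 : c / (b + c - a) * a + (b - a) / (b + c - a) * (b + c) = b := by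
    field_simp; ring
  rw [e1] at h1
  rw [e2] at h2
  have hkey : (b - a) / (b + c - a) * f a + c / (b + c - a) * f (b + c)
      + (c / (b + c - a) * f a + (b - a) / (b + c - a) * f (b + c))
      = f a + f (b + c) := by
    linear_combination (f a + f (b + c)) * hsum1
  linarith


set_option maxHeartbeats 1000000 in
/-- The revenue gain of any IR, ε-IC mechanism over the optimal posted-price
revenue `R(p*)` is at most `C·√ε` for all sufficiently small `ε`. -/
theorem sqrt_eps_upper_bound
    (vbar : ℝ) (P : Measure ℝ) [IsProbabilityMeasure P]
    (hsupp : P (Set.Icc 0 vbar) = 1)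
    (F : ℝ → ℝ) (hF : ∀ v, F v = (P (Set.Iic v)).toReal)
    (R : ℝ → ℝ) (hR : ∀ v, R v = v * (1 - F v))
    (pstar : ℝ) (hpstar : pstar ∈ Set.Icc 0 vbar)
    (hmax : ∀ v ∈ Set.Icc 0 vbar, R v ≤ R pstar) :
    ∃ C > 0, ∃ ε₀ > 0, ∀ ε ∈ Set.Ioc (0:ℝ) ε₀,
      ∀ x t : ℝ → ℝ,
        (∀ v ∈ Set.Icc 0 vbar, x v ∈ Set.Icc (0:ℝ) 1) →
        (∀ v ∈ Set.Icc 0 vbar, 0 ≤ v * x v - t v) →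
        (∀ v ∈ Set.Icc 0 vbar, ∀ v' ∈ Set.Icc 0 vbar,
          v * x v' - t v' - ε ≤ v * x v - t v) →
        Integrable t P →
        (∫ v, t v ∂P) - R pstar ≤ C * Real.sqrt ε := by
  obtain ⟨hp0, hpv⟩ := hpstar
  have hvbar : (0:ℝ) ≤ vbar := le_trans hp0 hpv
  have hPfin : ∀ s : Set ℝ, P s ≠ ⊤ := fun s => measure_ne_top P s
  have hFle : ∀ s : ℝ, F s ≤ 1 := by
    intro s; rw [hF]
    calc (P (Set.Iic s)).toReal ≤ (1 : ℝ≥0∞).toReal :=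
          ENNReal.toReal_mono (by simp) prob_le_one
      _ = 1 := by simp
  have hF0 : ∀ s, 0 ≤ F s := fun s => by rw [hF]; exact ENNReal.toReal_nonneg
  have hRstar : 0 ≤ R pstar := by
    rw [hR]; have := hFle pstar; nlinarith
  refine ⟨vbar + 5, by linarith, 1, one_pos, ?_⟩
  rintro ε ⟨hε0, hε1⟩ x t hx hIR hIC ht
  set δ := Real.sqrt ε with hδdef
  have hδ0 : 0 < δ := Real.sqrt_pos.mpr hε0
  have hδδ : δ * δ = ε := Real.mul_self_sqrt hε0.le
  have hδ1 : δ ≤ 1 := by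
    rw [hδdef, show (1:ℝ) = Real.sqrt 1 by simp]
    exact Real.sqrt_le_sqrt hε1
  have hεδ : ε ≤ δ := by nlinarith
  -- the sup-of-affine "ironed utility"
  set u : ℝ → ℝ := fun w => sSup ((fun v' => w * x v' - t v') '' Set.Icc 0 vbar) with hu
  have hmem0 : (0:ℝ) ∈ Set.Icc 0 vbar := ⟨le_rfl, hvbar⟩
  have hne : ∀ w : ℝ, ((fun v' => w * x v' - t v') '' Set.Icc 0 vbar).Nonempty :=
    fun w => ⟨_, Set.mem_image_of_mem _ hmem0⟩
  have ht0 : ∀ v' ∈ Set.Icc 0 vbar, -t v' ≤ -t 0 + ε := by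
    intro v' hv'
    have h := hIC 0 hmem0 v' hv'
    simp only [zero_mul, zero_sub] at h
    linarith
  have hbdd : ∀ w : ℝ, BddAbove ((fun v' => w * x v' - t v') '' Set.Icc 0 vbar) := by
    intro w
    refine ⟨|w| + (-t 0 + ε), ?_⟩
    rintro y ⟨v', hv', rfl⟩
    have hx' := hx v' hv'
    have h1 : w * x v' ≤ |w| := by
      calc w * x v' ≤ |w * x v'| := le_abs_self _
        _ = |w| * |x v'| := abs_mul _ _
        _ ≤ |w| * 1 := by
            apply mul_le_mul_of_nonneg_left _ (abs_nonneg w)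
            rw [abs_of_nonneg hx'.1]; exact hx'.2
        _ = |w| := mul_one _
    have h2 := ht0 v' hv'
    simp only []
    linarith
  have husup_le : ∀ v ∈ Set.Icc 0 vbar, u v ≤ v * x v - t v + ε := by
    intro v hv
    apply csSup_le (hne v)
    rintro y ⟨v', hv', rfl⟩
    have := hIC v hv v' hv'
    simp only []
    linarith
  have hle_usup : ∀ w : ℝ, ∀ v ∈ Set.Icc 0 vbar, w * x v - t v ≤ u w := by
    intro w v hv
    exact le_csSup (hbdd w) (Set.mem_image_of_mem _ hv)
  have humono : ∀ a b : ℝ, a ≤ b → u a ≤ u b := by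
    intro a b hab
    apply csSup_le (hne a)
    rintro y ⟨v', hv', rfl⟩
    have hx' := hx v' hv'
    calc a * x v' - t v' ≤ b * x v' - t v' := by nlinarith [hx'.1]
      _ ≤ u b := hle_usup b v' hv'
  have hulip : ∀ a c : ℝ, 0 ≤ c → u (a + c) ≤ u a + c := by
    intro a c hc
    apply csSup_le (hne _)
    rintro y ⟨v', hv', rfl⟩
    have hx' := hx v' hv'
    have h := hle_usup a v' hv'
    simp only []
    nlinarith [hx'.2]
  have hconv : ConvexOn ℝ Set.univ u := by
    refine ⟨convex_univ, ?_⟩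
    intro a _ b _ mu nu hmu hnu hmunu
    simp only [smul_eq_mul]
    apply csSup_le (hne _)
    rintro y ⟨v', hv', rfl⟩
    have h1 := hle_usup a v' hv'
    have h2 := hle_usup b v' hv'
    have e : (mu * a + nu * b) * x v' - t v'
        = mu * (a * x v' - t v') + nu * (b * x v' - t v') := by
      linear_combination (t v') * hmunu
    simp only []
    rw [e]
    exact add_le_add (mul_le_mul_of_nonneg_left h1 hmu) (mul_le_mul_of_nonneg_left h2 hnu)
  have hshift : ∀ a b c : ℝ, a ≤ b → 0 ≤ c → u (a + c) - u a ≤ u (b + c) - u b :=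
    fun a b c hab hc => convex_shift hconv hab hc
  -- grid
  set N : ℕ := Nat.floor (vbar / δ) + 1 with hN
  set D : ℕ → ℝ := fun j => u (δ * ((j:ℝ)+1)) - u (δ * (j:ℝ)) with hD
  have hD0 : 0 ≤ D 0 := by
    simp only [hD]
    push_cast
    have := humono (δ * 0) (δ * (0+1)) (by nlinarith)
    simp only [mul_zero] at this ⊢
    linarith [this]
  have hDmono : ∀ j, D j ≤ D (j+1) := by
    intro j
    have h := hshift (δ * (j:ℝ)) (δ * ((j:ℝ)+1)) δ (by nlinarith [Nat.cast_nonneg (α := ℝ) j]) hδ0.le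
    have e1 : δ * (j:ℝ) + δ = δ * ((j:ℝ)+1) := by ring
    have e2 : δ * ((j:ℝ)+1) + δ = δ * (((j:ℝ)+1)+1) := by ring
    rw [e1, e2] at h
    simp only [hD]
    push_cast
    linarith [h]
  have hDM : ∀ j, D j ≤ δ := by
    intro j
    have h := hulip (δ * (j:ℝ)) δ hδ0.le
    have e1 : δ * (j:ℝ) + δ = δ * ((j:ℝ)+1) := by ring
    rw [e1] at h
    simp only [hD]
    linarith
  set Q : ℕ → Set ℝ := fun k => Set.Ico (δ * (k:ℝ)) (δ * ((k:ℝ)+1)) ∩ Set.Icc 0 vbar with hQ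
  have hQmeas : ∀ k, MeasurableSet (Q k) := fun k => measurableSet_Ico.inter measurableSet_Icc
  have hIcoDisj : ∀ j k : ℕ, j ≠ k → Disjoint (Q j) (Q k) := by
    intro j k hjk
    have main : ∀ j k : ℕ, j < k → Disjoint (Q j) (Q k) := by
      intro j k h
      have h1 : δ * ((j:ℝ)+1) ≤ δ * (k:ℝ) := by
        have : (j:ℝ) + 1 ≤ (k:ℝ) := by exact_mod_cast h
        nlinarith
      have : Disjoint (Set.Ico (δ * (j:ℝ)) (δ * ((j:ℝ)+1))) (Set.Ico (δ * (k:ℝ)) (δ * ((k:ℝ)+1))) := by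
        rw [Set.Ico_disjoint_Ico]
        exact le_trans (min_le_left _ _) (le_trans h1 (le_max_right _ _))
      exact Disjoint.mono Set.inter_subset_left Set.inter_subset_left this
    rcases hjk.lt_or_gt with h | h
    · exact main j k h
    · exact (main k j h).symm
  have hQdisj : Set.Pairwise ↑(Finset.range N) (Function.onFun Disjoint Q) := by
    intro j _ k _ hjk
    exact hIcoDisj j k hjk
  have hcover : Set.Icc (0:ℝ) vbar = ⋃ k ∈ Finset.range N, Q k := by
    apply Set.Subset.antisymm
    · intro v hv
      obtain ⟨hv0, hvv⟩ := hv
      have hvδ : 0 ≤ v / δ := by positivity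
      set k := Nat.floor (v / δ) with hk
      have hk1 : (k:ℝ) ≤ v / δ := Nat.floor_le hvδ
      have hk2 : v / δ < (k:ℝ) + 1 := Nat.lt_floor_add_one _
      have hkN : k < N := by
        have h := Nat.floor_mono (show v / δ ≤ vbar / δ by gcongr)
        omega
      refine Set.mem_biUnion (Finset.mem_range.mpr hkN) ⟨⟨?_, ?_⟩, hv0, hvv⟩
      · have h := (le_div_iff₀ hδ0).mp hk1
        nlinarith
      · have h := (div_lt_iff₀ hδ0).mp hk2
        nlinarith
    · apply Set.iUnion₂_subset
      intro k _
      exact Set.inter_subset_right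
  set p : ℕ → ℝ := fun k => (P (Q k)).toReal with hp
  have hpnn : ∀ k, 0 ≤ p k := fun k => ENNReal.toReal_nonneg
  have hpsum : ∑ k ∈ Finset.range N, p k = 1 := by
    calc ∑ k ∈ Finset.range N, p k
        = (∑ k ∈ Finset.range N, P (Q k)).toReal :=
          (ENNReal.toReal_sum (fun k _ => hPfin _)).symm
      _ = (P (⋃ k ∈ Finset.range N, Q k)).toReal := by
          rw [measure_biUnion_finset hQdisj (fun k _ => hQmeas k)]
      _ = 1 := by rw [← hcover, hsupp]; simp
  have hintQ : ∀ k, IntegrableOn t (Q k) P := fun k => ht.integrableOn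
  have hsplit : (∫ v, t v ∂P) = ∑ k ∈ Finset.range N, ∫ v in Q k, t v ∂P := by
    have hcompl : P (Set.Icc (0:ℝ) vbar)ᶜ = 0 := by
      rw [measure_compl measurableSet_Icc (hPfin _), hsupp, measure_univ, tsub_self]
    have hae : Set.univ =ᵐ[P] Set.Icc (0:ℝ) vbar := (ae_eq_univ.mpr hcompl).symm
    calc ∫ v, t v ∂P = ∫ v in Set.univ, t v ∂P := by rw [setIntegral_univ]
      _ = ∫ v in Set.Icc 0 vbar, t v ∂P := setIntegral_congr_set hae
      _ = ∑ k ∈ Finset.range N, ∫ v in Q k, t v ∂P := by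
          rw [hcover]
          exact integral_biUnion_finset _ (fun k _ => hQmeas k) hQdisj (fun k _ => hintQ k)
  set c : ℕ → ℝ := fun k => (((k:ℝ)+1) * D (k+1) - ∑ j ∈ Finset.range k, D j) + ((N:ℝ)*ε + ε)
    with hc
  have hptwise : ∀ k ∈ Finset.range N, ∀ v ∈ Q k, t v ≤ c k := by
    intro k hk v hv
    obtain ⟨⟨hv1, hv2⟩, hvIcc⟩ := hv
    have hxv := hx v hvIcc
    have hu_le := husup_le v hvIcc
    have h1 : (v + δ) * x v - t v ≤ u (v + δ) := hle_usup (v+δ) v hvIcc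
    have hDk1 : D (k+1) = u (δ * (((k:ℝ)+1)+1)) - u (δ * ((k:ℝ)+1)) := by
      simp only [hD]; push_cast; ring_nf
    have h2 : u (v + δ) - u v ≤ D (k+1) := by
      have h3 := hshift v (δ * ((k:ℝ)+1)) δ hv2.le hδ0.le
      have e2 : δ * ((k:ℝ)+1) + δ = δ * (((k:ℝ)+1)+1) := by ring
      rw [e2] at h3
      rw [hDk1]
      linarith
    have hδx : δ * x v ≤ D (k+1) + ε := by nlinarith [h1, hu_le, h2]
    have hkN : (k:ℝ) + 1 ≤ (N:ℝ) := by
      have := Finset.mem_range.mp hk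
      exact_mod_cast Nat.succ_le_of_lt this
    have hvxv : v * x v ≤ ((k:ℝ)+1) * D (k+1) + (N:ℝ) * ε := by
      have ha : v * x v ≤ (δ * ((k:ℝ)+1)) * x v := mul_le_mul_of_nonneg_right hv2.le hxv.1
      have hb : ((k:ℝ)+1) * (δ * x v) ≤ ((k:ℝ)+1) * (D (k+1) + ε) :=
        mul_le_mul_of_nonneg_left hδx (by positivity)
      have hce : ((k:ℝ)+1) * ε ≤ (N:ℝ) * ε := mul_le_mul_of_nonneg_right hkN hε0.le
      have hab : (δ * ((k:ℝ)+1)) * x v = ((k:ℝ)+1) * (δ * x v) := by ring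
      have hexp : ((k:ℝ)+1) * (D (k+1) + ε) = ((k:ℝ)+1) * D (k+1) + ((k:ℝ)+1) * ε := by ring
      linarith
    have hlb : ∑ j ∈ Finset.range k, D j ≤ u v := by
      have htel : ∑ j ∈ Finset.range k, D j = u (δ * (k:ℝ)) - u (δ * ((0:ℕ):ℝ)) := by
        have h := Finset.sum_range_sub (f := fun j => u (δ * (j:ℝ))) k
        rw [← h]
        apply Finset.sum_congr rfl
        intro j _
        simp only [hD]
        push_cast
        ring_nf
      have hu0 : 0 ≤ u 0 := by
        have hIR0 := hIR 0 hmem0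
        have := hle_usup 0 0 hmem0
        linarith
      have hmono' : u (δ * (k:ℝ)) ≤ u v := humono _ _ hv1
      rw [htel]
      simp only [Nat.cast_zero, mul_zero] at *
      linarith
    simp only [hc]
    linarith
  have hint_le : ∀ k ∈ Finset.range N, ∫ v in Q k, t v ∂P ≤ c k * p k := by
    intro k hk
    calc ∫ v in Q k, t v ∂P ≤ ∫ _ in Q k, c k ∂P :=
          setIntegral_mono_on (hintQ k)
            ((integrableOn_const_iff).mpr (Or.inr (measure_lt_top P _))) (hQmeas k) (hptwise k hk)
      _ = (P (Q k)).toReal • c k := setIntegral_const _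
      _ = c k * p k := by rw [smul_eq_mul, hp]; ring
  have habel : ∑ k ∈ Finset.range N, p k * (((k:ℝ)+1) * D (k+1) - ∑ j ∈ Finset.range k, D j)
      ≤ R pstar + 3*δ := by
    have hA : 0 ≤ (R pstar + 3*δ)/δ := by positivity
    have hT : ∀ i, i ≤ N + 1 →
        ((i:ℝ)+1) * (∑ k ∈ Finset.range N, if i ≤ k + 1 then p k else 0)
          ≤ (R pstar + 3*δ)/δ := by
      intro i hi
      rw [le_div_iff₀ hδ0]
      have hSnn : 0 ≤ ∑ k ∈ Finset.range N, if i ≤ k + 1 then p k else 0 := by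
        apply Finset.sum_nonneg
        intro k _
        split_ifs
        · exact hpnn k
        · exact le_rfl
      by_cases hi2 : i ≤ 1
      · have hSeq : (∑ k ∈ Finset.range N, if i ≤ k + 1 then p k else 0)
            = ∑ k ∈ Finset.range N, p k := by
          apply Finset.sum_congr rfl
          intro k _
          rw [if_pos (by omega)]
        rw [hSeq, hpsum]
        have : (i:ℝ) ≤ 1 := by exact_mod_cast hi2
        nlinarith
      · push_neg at hi2
        have hi2' : (2:ℝ) ≤ (i:ℝ) := by exact_mod_cast hi2
        set s' : ℝ := δ * ((i:ℝ) - 2) with hs'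
        have hs'0 : 0 ≤ s' := by
          apply mul_nonneg hδ0.le
          linarith
        have hsub : (∑ k ∈ Finset.range N, if i ≤ k + 1 then p k else 0)
            ≤ (P (Set.Ioc s' vbar)).toReal := by
          have hfe : (∑ k ∈ Finset.range N, if i ≤ k + 1 then p k else 0)
              = ∑ k ∈ (Finset.range N).filter (fun k => i ≤ k + 1), p k :=
            (Finset.sum_filter _ _).symm
          have hdisj' : Set.Pairwise ↑((Finset.range N).filter (fun k => i ≤ k + 1))
              (Function.onFun Disjoint Q) := by
            intro a _ b _ hab
            exact hIcoDisj a b hab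
          rw [hfe]
          calc ∑ k ∈ (Finset.range N).filter (fun k => i ≤ k + 1), p k
              = (∑ k ∈ (Finset.range N).filter (fun k => i ≤ k + 1), P (Q k)).toReal :=
                (ENNReal.toReal_sum (fun k _ => hPfin _)).symm
            _ = (P (⋃ k ∈ (Finset.range N).filter (fun k => i ≤ k + 1), Q k)).toReal := by
                rw [measure_biUnion_finset hdisj' (fun k _ => hQmeas k)]
            _ ≤ (P (Set.Ioc s' vbar)).toReal := by
                apply ENNReal.toReal_mono (hPfin _)
                apply measure_mono
                apply Set.iUnion₂_subset
                intro k hkf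
                obtain ⟨_, hik⟩ := Finset.mem_filter.mp hkf
                intro v hv
                obtain ⟨⟨hva, _⟩, _, hvv⟩ := hv
                refine ⟨?_, hvv⟩
                have hki : ((i:ℝ) - 1) ≤ (k:ℝ) := by
                  have h1 : (i:ℝ) ≤ (k:ℝ) + 1 := by exact_mod_cast hik
                  linarith
                have h2 : s' < δ * (k:ℝ) := by
                  rw [hs']
                  nlinarith [mul_le_mul_of_nonneg_left hki hδ0.le, hδ0]
                linarith
        set q := (P (Set.Ioc s' vbar)).toReal with hqdef
        have hq0 : (0:ℝ) ≤ q := ENNReal.toReal_nonneg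
        have hFq : F s' + q ≤ 1 := by
          have hdisj : Disjoint (Set.Iic s') (Set.Ioc s' vbar) := Set.Iic_disjoint_Ioc le_rfl
          have hun := measure_union (μ := P) hdisj measurableSet_Ioc
          have hle : P (Set.Iic s' ∪ Set.Ioc s' vbar) ≤ 1 := prob_le_one
          rw [hun] at hle
          rw [hF]
          calc (P (Set.Iic s')).toReal + q
              = (P (Set.Iic s') + P (Set.Ioc s' vbar)).toReal :=
                (ENNReal.toReal_add (hPfin _) (hPfin _)).symm
            _ ≤ (1 : ℝ≥0∞).toReal := ENNReal.toReal_mono (by simp) hle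
            _ = 1 := by simp
        have hδi : ((i:ℝ)+1) * δ = s' + 3*δ := by rw [hs']; ring
        have key : (((i:ℝ)+1) * (∑ k ∈ Finset.range N, if i ≤ k + 1 then p k else 0)) * δ
            ≤ (s' + 3*δ) * q := by
          have h1 : (((i:ℝ)+1) * (∑ k ∈ Finset.range N, if i ≤ k + 1 then p k else 0)) * δ
              = (s' + 3*δ) * (∑ k ∈ Finset.range N, if i ≤ k + 1 then p k else 0) := by
            rw [← hδi]; ring
          rw [h1]
          exact mul_le_mul_of_nonneg_left hsub (by linarith [hδ0.le])
        by_cases hs'v : s' ≤ vbar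
        · have hRs' := hmax s' ⟨hs'0, hs'v⟩
          have h2 : (s' + 3*δ) * q ≤ (s' + 3*δ) * (1 - F s') :=
            mul_le_mul_of_nonneg_left (by linarith) (by linarith [hδ0.le])
          have hexp : (s' + 3*δ) * (1 - F s') = R s' + 3*δ*(1 - F s') := by rw [hR]; ring
          have h3 : 3*δ*(1 - F s') ≤ 3*δ := by nlinarith [hF0 s', hδ0.le]
          linarith
        · push_neg at hs'v
          have hF1 : 1 ≤ F s' := by
            rw [hF]
            have hmle : P (Set.Icc 0 vbar) ≤ P (Set.Iic s') :=
              measure_mono (fun z hz => le_trans hz.2 hs'v.le)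
            rw [hsupp] at hmle
            calc (1:ℝ) = (1 : ℝ≥0∞).toReal := by simp
              _ ≤ (P (Set.Iic s')).toReal := ENNReal.toReal_mono (hPfin _) hmle
          have hq0' : q ≤ 0 := by linarith
          nlinarith [hs'0, hδ0.le]
    have h := abel_bound N p D ((R pstar + 3*δ)/δ) δ hpnn hD0 hDmono hDM hA hT
    calc ∑ k ∈ Finset.range N, p k * (((k:ℝ)+1) * D (k+1) - ∑ j ∈ Finset.range k, D j)
        ≤ (R pstar + 3*δ)/δ * δ := h
      _ = R pstar + 3*δ := div_mul_cancel₀ _ hδ0.ne'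
  have hNle : (N:ℝ) ≤ vbar / δ + 1 := by
    rw [hN]
    push_cast
    linarith [Nat.floor_le (show (0:ℝ) ≤ vbar / δ by positivity)]
  have hNε : (N:ℝ) * ε ≤ vbar * δ + ε := by
    have h1 : (N:ℝ) * ε ≤ (vbar/δ + 1) * ε := mul_le_mul_of_nonneg_right hNle hε0.le
    have h2 : (vbar/δ) * ε = vbar * δ := by
      rw [div_mul_eq_mul_div, ← hδδ]
      field_simp
    nlinarith
  have hfinal : (∫ v, t v ∂P) ≤ R pstar + (vbar + 5) * δ := by
    calc (∫ v, t v ∂P) = ∑ k ∈ Finset.range N, ∫ v in Q k, t v ∂P := hsplit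
      _ ≤ ∑ k ∈ Finset.range N, c k * p k := Finset.sum_le_sum hint_le
      _ = (∑ k ∈ Finset.range N, p k * (((k:ℝ)+1) * D (k+1) - ∑ j ∈ Finset.range k, D j))
          + ((N:ℝ)*ε + ε) * ∑ k ∈ Finset.range N, p k := by
          rw [Finset.mul_sum, ← Finset.sum_add_distrib]
          apply Finset.sum_congr rfl
          intro k _
          simp only [hc]
          ring
      _ ≤ (R pstar + 3*δ) + ((N:ℝ)*ε + ε) * 1 := by
          rw [hpsum]
          exact add_le_add habel le_rfl
      _ ≤ R pstar + (vbar + 5) * δ := by nlinarith [hNε, hεδ, hδ0.le]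
  linarith
end

section
/- Let F be a CDF with density f on [0, v̄], and let w : [0, ν₀] → [μ, v̄] be strictly increasing and differentiable with w(v) > v. Define the thresholds ν_{-1} = v̄, ν_k = w^{-1}(ν_{k-1}), and let λ satisfy λ(v) = f(v) on [ν₀, v̄] and λ(v) = f(v) + w'(v)·λ(w(v)) on [μ, ν₀]. Then for each k ∈ {0, …, K} and almost every v ∈ [ν_k, ν_{k-1}] with v ≥ μ, λ(v) = (d/dv) Σ_{j=0}^{k} F(w^j(v)), where w^j denotes the j-th composition of w and w^0(v) = v. -/
open Set MeasureTheory

/-- Solution to the dual functional equation: the dual variable `λ` satisfying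
`λ(v) = f(v)` on `[ν₀, v̄]` and `λ(v) = f(v) + w'(v)·λ(w(v))` on `[μ₀, ν₀]`
equals, for each `k ∈ {0,…,K}` and almost every `v ∈ [ν_k, ν_{k-1}]` with `v ≥ μ₀`,
the derivative of `Σ_{j=0}^k F(wʲ(v))`.  (Shifted indexing: `ν 0 = v̄` is `ν₋₁` and
`ν (k+1)` is `ν_k`.) -/
theorem dual_variable_closed_form
    (vbar μ₀ ν₀ : ℝ) (hμ : 0 < μ₀) (hμν : μ₀ < ν₀) (hν₀ : ν₀ < vbar)
    (F f lam w : ℝ → ℝ)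
    (hF : ∀ v, HasDerivAt F (f v) v)
    (hwmono : StrictMonoOn w (Set.Icc 0 ν₀))
    (hwdiff : ∀ v ∈ Set.Icc 0 ν₀, DifferentiableAt ℝ w v)
    (hwgt : ∀ v ∈ Set.Icc 0 ν₀, v < w v)
    (hw0 : w 0 = μ₀) (hwν₀ : w ν₀ = vbar)
    (ν : ℕ → ℝ) (hν0 : ν 0 = vbar)
    (K : ℕ)
    (hrec : ∀ k ≤ K, ν (k + 1) ∈ Set.Icc 0 ν₀ ∧ w (ν (k + 1)) = ν k)
    (hK : ν (K + 1) ≤ μ₀ ∧ μ₀ ≤ ν K)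
    (hlam1 : ∀ v ∈ Set.Icc ν₀ vbar, lam v = f v)
    (hlam2 : ∀ v ∈ Set.Icc μ₀ ν₀, lam v = f v + deriv w v * lam (w v)) :
    ∀ k ≤ K,
      ∀ᵐ v ∂(volume.restrict (Set.Icc (ν (k + 1)) (ν k) ∩ Set.Ici μ₀)),
        lam v = deriv (fun u => ∑ j ∈ Finset.range (k + 1), F (w^[j] u)) v := by
  -- Pointwise claim, by induction on k
  have main : ∀ k, k ≤ K → ∀ v, μ₀ ≤ v → ν (k + 1) ≤ v → v ≤ ν k →
      HasDerivAt (fun u => ∑ j ∈ Finset.range (k + 1), F (w^[j] u)) (lam v) v := by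
    intro k
    induction k with
    | zero =>
      intro _ v hv1 hv2 hv3
      -- ν 1 = ν₀
      have hν1 : ν 1 = ν₀ := by
        have h0 := hrec 0 (Nat.zero_le _)
        have hν₀mem : ν₀ ∈ Set.Icc 0 ν₀ :=
          ⟨le_of_lt (lt_trans hμ hμν), le_refl _⟩
        apply hwmono.injOn h0.1 hν₀mem
        rw [h0.2, hν0, hwν₀]
      have hv2' : ν₀ ≤ v := hν1 ▸ hv2
      have hlamv : lam v = f v := hlam1 v ⟨hv2', hν0 ▸ hv3⟩
      have : HasDerivAt F (lam v) v := hlamv ▸ hF v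
      convert this using 1
      funext u
      simp
    | succ k ih =>
      intro hk v hv1 hv2 hv3
      have hkK : k ≤ K := Nat.le_of_succ_le hk
      have hmem1 : ν (k + 1) ∈ Set.Icc 0 ν₀ := (hrec k hkK).1
      have hmem2 : ν (k + 2) ∈ Set.Icc 0 ν₀ := (hrec (k + 1) hk).1
      have hvmem : v ∈ Set.Icc 0 ν₀ :=
        ⟨le_trans (le_of_lt hμ) hv1, le_trans hv3 hmem1.2⟩
      -- w v bounds
      have hwv1 : ν (k + 1) ≤ w v := by
        rw [← (hrec (k + 1) hk).2]
        exact (hwmono.monotoneOn hmem2 hvmem hv2)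
      have hwv2 : w v ≤ ν k := by
        rw [← (hrec k hkK).2]
        exact (hwmono.monotoneOn hvmem hmem1 hv3)
      have hwvμ : μ₀ ≤ w v := le_trans hv1 (le_of_lt (hwgt v hvmem))
      have hg : HasDerivAt (fun u => ∑ j ∈ Finset.range (k + 1), F (w^[j] u))
          (lam (w v)) (w v) := ih hkK (w v) hwvμ hwv1 hwv2
      have hw : HasDerivAt w (deriv w v) v := (hwdiff v hvmem).hasDerivAt
      have hcomp : HasDerivAt
          (fun u => ∑ j ∈ Finset.range (k + 1), F (w^[j] (w u)))
          (lam (w v) * deriv w v) v := hg.comp v hw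
      have hsum : HasDerivAt
          (fun u => (∑ j ∈ Finset.range (k + 1), F (w^[j] (w u))) + F u)
          (lam (w v) * deriv w v + f v) v := hcomp.add (hF v)
      have hlamv : lam v = lam (w v) * deriv w v + f v := by
        rw [hlam2 v ⟨hv1, le_trans hv3 hmem1.2⟩]; ring
      rw [hlamv]
      convert hsum using 1
      funext u
      rw [Finset.sum_range_succ']
      simp [Function.iterate_succ_apply]
  intro k hk
  refine (MeasureTheory.ae_restrict_iff' ?_).2 (Filter.Eventually.of_forall ?_)
  · exact (measurableSet_Icc.inter measurableSet_Ici)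
  · intro v hv
    exact ((main k hk v hv.2 hv.1.1 hv.1.2).deriv).symm
end

section
/- Under the setting of the path-based dual (λ(v) = (d/dv) Σ_{j=0}^{k} F(w^j(v)) on [ν_k, ν_{k-1}], with thresholds ν_k defined by ν_k = w^{-1}(ν_{k-1}), ν_{-1} = v̄, and K the number of steps), the integral of the dual variable satisfies ∫_μ^{v̄} λ(v) dv ≤ K + 1. -/
open Set MeasureTheory intervalIntegral

/-- Bound on the integral of the dual variable: if `λ` equals the derivative of
`Σ_{j=0}^k F(wʲ(·))` on each step `[ν_k, ν_{k-1}]`, then `∫_{μ₀}^{v̄} λ ≤ K + 1`,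
where `K` is the number of steps.  (Shifted indexing: `ν 0 = v̄` is `ν₋₁` and
`ν (k+1)` is `ν_k`.) -/
theorem dual_variable_integral_bound
    (vbar μ₀ ν₀ : ℝ) (hμ : 0 < μ₀) (hμν : μ₀ < ν₀) (hν₀ : ν₀ < vbar)
    (F f lam w : ℝ → ℝ)
    (hF : ∀ v, HasDerivAt F (f v) v)
    (hFmono : Monotone F)
    (hF0 : ∀ v, 0 ≤ F v) (hF1 : ∀ v, F v ≤ 1)
    (hwmono : StrictMonoOn w (Set.Icc 0 ν₀))
    (hwdiff : ∀ v ∈ Set.Icc 0 ν₀, DifferentiableAt ℝ w v)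
    (hwgt : ∀ v ∈ Set.Icc 0 ν₀, v < w v)
    (hw0 : w 0 = μ₀) (hwν₀ : w ν₀ = vbar)
    (ν : ℕ → ℝ) (hν0 : ν 0 = vbar)
    (K : ℕ)
    (hrec : ∀ k ≤ K, ν (k + 1) ∈ Set.Icc 0 ν₀ ∧ w (ν (k + 1)) = ν k)
    (hK : ν (K + 1) ≤ μ₀ ∧ μ₀ ≤ ν K)
    (hlamform : ∀ k ≤ K, ∀ v ∈ Set.Icc (ν (k + 1)) (ν k),
      lam v = deriv (fun u => ∑ j ∈ Finset.range (k + 1), F (w^[j] u)) v)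
    (hlamtop : ∀ v ∈ Set.Icc ν₀ vbar, lam v = f v)
    (hint : IntervalIntegrable lam volume μ₀ vbar) :
    ∫ v in μ₀..vbar, lam v ≤ (K : ℝ) + 1 := by
  -- ν is strictly decreasing along the steps
  have hdec : ∀ k ≤ K, ν (k + 1) < ν k := by
    intro k hk
    have h := hwgt (ν (k + 1)) (hrec k hk).1
    rwa [(hrec k hk).2] at h
  have hanti : ∀ j, j ≤ K + 1 → ∀ i, i ≤ j → ν j ≤ ν i := by
    intro j
    induction j with
    | zero =>
      intro _ i hi
      have : i = 0 := Nat.le_zero.mp hi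
      simp [this]
    | succ j ih =>
      intro hj i hi
      have h1 : ν (j + 1) ≤ ν j := le_of_lt (hdec j (by omega))
      rcases Nat.lt_or_ge i (j + 1) with h | h
      · exact h1.trans (ih (by omega) i (by omega))
      · have : i = j + 1 := by omega
        simp [this]
  have hμle : ∀ m, m ≤ K → μ₀ ≤ ν m := by
    intro m hm
    exact hK.2.trans (hanti K (by omega) m hm)
  have hlev : ∀ m, m ≤ K + 1 → ν m ≤ vbar := by
    intro m hm
    have := hanti m hm 0 (Nat.zero_le _)
    rwa [hν0] at this
  have hmemν : ∀ m, 1 ≤ m → m ≤ K + 1 → ν m ∈ Set.Icc 0 ν₀ := by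
    intro m h1 h2
    have := (hrec (m - 1) (by omega)).1
    rwa [show m - 1 + 1 = m by omega] at this
  -- iterate formula on the thresholds
  have hiter : ∀ i, i ≤ K + 1 → ∀ j, j ≤ i → w^[j] (ν i) = ν (i - j) := by
    intro i hi j
    induction j with
    | zero => simp
    | succ j ih =>
      intro hj
      rw [Function.iterate_succ_apply', ih (by omega)]
      have h1 : i - j = (i - j - 1) + 1 := by omega
      rw [h1, (hrec (i - j - 1) (by omega)).2]
      congr 1
  -- iterates stay in the right intervals
  have hiterMem : ∀ k, k ≤ K → ∀ v ∈ Set.Icc (ν (k + 1)) (ν k), ∀ j, j ≤ k →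
      w^[j] v ∈ Set.Icc (ν (k + 1 - j)) (ν (k - j)) := by
    intro k hk v hv j
    induction j with
    | zero => simpa using hv
    | succ j ih =>
      intro hj
      have hx := ih (by omega)
      have ha : ν (k + 1 - j) ∈ Set.Icc 0 ν₀ := hmemν _ (by omega) (by omega)
      have hb : ν (k - j) ∈ Set.Icc 0 ν₀ := hmemν _ (by omega) (by omega)
      have hxmem : w^[j] v ∈ Set.Icc 0 ν₀ :=
        ⟨ha.1.trans hx.1, hx.2.trans hb.2⟩
      have h1 : w (ν (k + 1 - j)) = ν (k - j) := by
        have := (hrec (k - j) (by omega)).2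
        rwa [show k - j + 1 = k + 1 - j by omega] at this
      have h2 : w (ν (k - j)) = ν (k - j - 1) := by
        have := (hrec (k - j - 1) (by omega)).2
        rwa [show k - j - 1 + 1 = k - j by omega] at this
      rw [Function.iterate_succ_apply']
      constructor
      · rw [show k + 1 - (j + 1) = k - j by omega, ← h1]
        exact hwmono.monotoneOn ha hxmem hx.1
      · rw [show k - (j + 1) = k - j - 1 by omega, ← h2]
        exact hwmono.monotoneOn hxmem hb hx.2
  -- iterates are differentiable on the step intervals
  have hdiffIter : ∀ k, k ≤ K → ∀ v ∈ Set.Icc (ν (k + 1)) (ν k), ∀ j, j ≤ k →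
      DifferentiableAt ℝ (w^[j]) v := by
    intro k hk v hv j
    induction j with
    | zero =>
      intro _
      simpa using differentiableAt_id'
    | succ j ih =>
      intro hj
      have hx := hiterMem k hk v hv j (by omega)
      have ha : ν (k + 1 - j) ∈ Set.Icc 0 ν₀ := hmemν _ (by omega) (by omega)
      have hb : ν (k - j) ∈ Set.Icc 0 ν₀ := hmemν _ (by omega) (by omega)
      have hxmem : w^[j] v ∈ Set.Icc 0 ν₀ :=
        ⟨ha.1.trans hx.1, hx.2.trans hb.2⟩
      rw [Function.iterate_succ']
      exact (hwdiff _ hxmem).comp v (ih (by omega))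
  -- the partial sums are differentiable on the step intervals
  have hGdiff : ∀ k, k ≤ K → ∀ v ∈ Set.Icc (ν (k + 1)) (ν k),
      DifferentiableAt ℝ (fun u => ∑ j ∈ Finset.range (k + 1), F (w^[j] u)) v := by
    intro k hk v hv
    apply DifferentiableAt.fun_sum
    intro j hj
    have hj' : j ≤ k := by
      have := Finset.mem_range.mp hj; omega
    exact ((hF (w^[j] v)).differentiableAt).comp v (hdiffIter k hk v hv j hj')
  -- integrability on subintervals
  have hsubint : ∀ a b : ℝ, μ₀ ≤ a → a ≤ b → b ≤ vbar →
      IntervalIntegrable lam volume a b := by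
    intro a b ha hab hb
    apply hint.mono_set
    rw [Set.uIcc_of_le hab, Set.uIcc_of_le (le_of_lt (hμν.trans hν₀))]
    exact Set.Icc_subset_Icc ha hb
  -- fundamental theorem of calculus on each step interval
  have hFTC : ∀ k, k ≤ K → ∀ a b : ℝ, ν (k + 1) ≤ a → a ≤ b → b ≤ ν k → μ₀ ≤ a →
      ∫ v in a..b, lam v =
        (∑ j ∈ Finset.range (k + 1), F (w^[j] b)) -
        (∑ j ∈ Finset.range (k + 1), F (w^[j] a)) := by
    intro k hk a b ha hab hb hμa
    have hbv : b ≤ vbar := hb.trans (hlev k (by omega))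
    apply intervalIntegral.integral_eq_sub_of_hasDerivAt
    · intro v hv
      rw [Set.uIcc_of_le hab] at hv
      have hv' : v ∈ Set.Icc (ν (k + 1)) (ν k) := ⟨ha.trans hv.1, hv.2.trans hb⟩
      rw [hlamform k hk v hv']
      exact (hGdiff k hk v hv').hasDerivAt
    · exact hsubint a b hμa hab hbv
  -- evaluation of the partial sums at the endpoints
  have hGtop : ∀ k, k ≤ K →
      (∑ j ∈ Finset.range (k + 1), F (w^[j] (ν k))) =
      ∑ i ∈ Finset.range (k + 1), F (ν i) := by
    intro k hk
    have h1 : (∑ j ∈ Finset.range (k + 1), F (w^[j] (ν k))) =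
        ∑ j ∈ Finset.range (k + 1), F (ν (k - j)) := by
      apply Finset.sum_congr rfl
      intro j hj
      rw [hiter k (by omega) j (by have := Finset.mem_range.mp hj; omega)]
    rw [h1]
    have := Finset.sum_range_reflect (fun i => F (ν i)) (k + 1)
    simpa using this
  have hGbot : ∀ k, k ≤ K →
      (∑ j ∈ Finset.range (k + 1), F (w^[j] (ν (k + 1)))) =
      ∑ i ∈ Finset.range (k + 1), F (ν (i + 1)) := by
    intro k hk
    have h1 : (∑ j ∈ Finset.range (k + 1), F (w^[j] (ν (k + 1)))) =
        ∑ j ∈ Finset.range (k + 1), F (ν ((k - j) + 1)) := by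
      apply Finset.sum_congr rfl
      intro j hj
      have hj' : j ≤ k := by have := Finset.mem_range.mp hj; omega
      rw [hiter (k + 1) (by omega) j (by omega),
        show k + 1 - j = k - j + 1 from by omega]
    rw [h1]
    have := Finset.sum_range_reflect (fun i => F (ν (i + 1))) (k + 1)
    simpa using this
  -- telescoping computation of the integral down to ν m
  have hT : ∀ m, m ≤ K → ∫ v in (ν m)..vbar, lam v =
      (m : ℝ) * F vbar - ∑ j ∈ Finset.range m, F (ν (j + 1)) := by
    intro m
    induction m with
    | zero => intro _; simp [hν0]
    | succ m ih =>
      intro hm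
      have hm' : m ≤ K := by omega
      have hi1 : IntervalIntegrable lam volume (ν (m + 1)) (ν m) :=
        hsubint _ _ (hμle (m + 1) hm) (le_of_lt (hdec m hm')) (hlev m (by omega))
      have hi2 : IntervalIntegrable lam volume (ν m) vbar :=
        hsubint _ _ (hμle m hm') (hlev m (by omega)) le_rfl
      have hsplit := intervalIntegral.integral_add_adjacent_intervals hi1 hi2
      have hpiece : ∫ v in (ν (m + 1))..(ν m), lam v =
          (∑ i ∈ Finset.range (m + 1), F (ν i)) -
          ∑ i ∈ Finset.range (m + 1), F (ν (i + 1)) := by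
        rw [hFTC m hm' (ν (m + 1)) (ν m) le_rfl (le_of_lt (hdec m hm')) le_rfl
          (hμle (m + 1) hm), hGtop m hm', hGbot m hm']
      rw [← hsplit, ih hm', hpiece]
      rw [Finset.sum_range_succ' (fun i => F (ν i)) m]
      rw [Finset.sum_range_succ (fun i => F (ν (i + 1))) m]
      push_cast
      rw [hν0]
      ring
  -- final splitting at ν K
  have hiK1 : IntervalIntegrable lam volume μ₀ (ν K) :=
    hsubint _ _ le_rfl hK.2 (hlev K (by omega))
  have hiK2 : IntervalIntegrable lam volume (ν K) vbar :=
    hsubint _ _ (hμle K le_rfl) (hlev K (by omega)) le_rfl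
  have hsplit := intervalIntegral.integral_add_adjacent_intervals hiK1 hiK2
  have hlast : ∫ v in μ₀..(ν K), lam v =
      (∑ i ∈ Finset.range (K + 1), F (ν i)) -
      ∑ j ∈ Finset.range (K + 1), F (w^[j] μ₀) := by
    rw [hFTC K le_rfl μ₀ (ν K) hK.1 hK.2 le_rfl le_rfl, hGtop K le_rfl]
  have hnonneg : (0 : ℝ) ≤ ∑ j ∈ Finset.range (K + 1), F (w^[j] μ₀) :=
    Finset.sum_nonneg fun j _ => hF0 _
  rw [← hsplit, hlast, hT K le_rfl]
  rw [Finset.sum_range_succ' (fun i => F (ν i)) K]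
  have hb1 : F vbar ≤ 1 := hF1 vbar
  have hb0 : (0 : ℝ) ≤ (K : ℝ) := Nat.cast_nonneg K
  rw [hν0]
  nlinarith [hF0 vbar]
end

section
/- Let Δ(v) = v·f(v) - w'(v)·(w(v) - v)·λ(w(v))·1{v ∈ [0, ν₀]} be the dual virtual value, where λ solves the dual functional equation and w is strictly increasing with w(v) ≥ v. If Δ(v) ≥ 0 for all v in [x, ν₀] for some x ∈ [0, ν₀), then ∫_x^{v̄} Δ(v) dv ≤ x·(1 - F(x)) + 2·(w(x) - x). -/
open Set MeasureTheory intervalIntegral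

private def Hs (F w : ℝ → ℝ) (k : ℕ) : ℝ → ℝ :=
  fun v => ∑ j ∈ Finset.range (k + 1), F (w^[j] v)

private lemma Hs_succ (F w : ℝ → ℝ) (k : ℕ) (v : ℝ) :
    Hs F w (k + 1) v = F v + Hs F w k (w v) := by
  unfold Hs
  rw [Finset.sum_range_succ']
  simp [Function.iterate_succ_apply, add_comm]

private lemma Hs_top (F w : ℝ → ℝ) (k : ℕ) (v : ℝ) :
    Hs F w (k + 1) v = Hs F w k v + F (w^[k+1] v) :=
  Finset.sum_range_succ _ _

section Aux

variable {vbar ν₀ : ℝ} {F f lam w Δ : ℝ → ℝ} {ν : ℕ → ℝ} {K : ℕ}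

private lemma nu_le
    (hwge : ∀ v ∈ Icc (0:ℝ) ν₀, v ≤ w v)
    (hrec : ∀ k ≤ K, ν (k + 1) ∈ Icc 0 ν₀ ∧ w (ν (k + 1)) = ν k) :
    ∀ i j, 1 ≤ i → i ≤ j → j ≤ K + 1 → ν j ≤ ν i := by
  have anti : ∀ k, k ≤ K → ν (k+1) ≤ ν k := fun k hk =>
    (hrec k hk).2 ▸ hwge _ (hrec k hk).1
  intro i j h1 hij hjK
  induction j with
  | zero => omega
  | succ j ih =>
    rcases Nat.eq_or_lt_of_le hij with h | h
    · rw [h]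
    · exact le_trans (anti j (by omega)) (ih (by omega) (by omega))

private lemma nu_mem
    (hrec : ∀ k ≤ K, ν (k + 1) ∈ Icc 0 ν₀ ∧ w (ν (k + 1)) = ν k) :
    ∀ i, 1 ≤ i → i ≤ K + 1 → ν i ∈ Icc (0:ℝ) ν₀ := by
  intro i h1 h2
  obtain ⟨i', rfl⟩ : ∃ i', i = i' + 1 := ⟨i - 1, by omega⟩
  exact (hrec i' (by omega)).1

private lemma nu_le0 (hν1 : ν 1 = ν₀)
    (hwge : ∀ v ∈ Icc (0:ℝ) ν₀, v ≤ w v)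
    (hrec : ∀ k ≤ K, ν (k + 1) ∈ Icc 0 ν₀ ∧ w (ν (k + 1)) = ν k) :
    ∀ i, 1 ≤ i → i ≤ K + 1 → ν i ≤ ν₀ := by
  intro i h1 h2
  rw [← hν1]
  exact nu_le hwge hrec 1 i le_rfl h1 h2

private lemma iterMem
    (hwmono : StrictMonoOn w (Icc 0 ν₀)) (hν1 : ν 1 = ν₀)
    (hwge : ∀ v ∈ Icc (0:ℝ) ν₀, v ≤ w v)
    (hrec : ∀ k ≤ K, ν (k + 1) ∈ Icc 0 ν₀ ∧ w (ν (k + 1)) = ν k) :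
    ∀ j k, j ≤ k → k ≤ K → ∀ u ∈ Icc (ν (k+1)) (ν k),
      w^[j] u ∈ Icc (ν (k+1-j)) (ν (k-j)) := by
  intro j
  induction j with
  | zero => intro k _ _ u hu; simpa using hu
  | succ j ih =>
    intro k hjk hkK u hu
    have h1 : w^[j] u ∈ Icc (ν (k+1-j)) (ν (k-j)) := ih k (by omega) hkK u hu
    have hlow : ν (k+1-j) ∈ Icc (0:ℝ) ν₀ := nu_mem hrec _ (by omega) (by omega)
    have hhigh : ν (k-j) ≤ ν₀ := nu_le0 hν1 hwge hrec _ (by omega) (by omega)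
    have hmem2 : w^[j] u ∈ Icc (0:ℝ) ν₀ :=
      ⟨le_trans hlow.1 h1.1, le_trans h1.2 hhigh⟩
    have hhighm : ν (k-j) ∈ Icc (0:ℝ) ν₀ := nu_mem hrec _ (by omega) (by omega)
    have e1 : w (ν (k+1-j)) = ν (k-j) := by
      have h : k+1-j = (k-j)+1 := by omega
      rw [h]; exact (hrec (k-j) (by omega)).2
    have e2 : w (ν (k-j)) = ν (k-j-1) := by
      have h : k-j = (k-j-1)+1 := by omega
      rw [h]; exact (hrec (k-j-1) (by omega)).2
    rw [Function.iterate_succ_apply']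
    constructor
    · have h : k+1-(j+1) = k-j := by omega
      rw [h, ← e1]
      exact hwmono.monotoneOn hlow hmem2 h1.1
    · have h : k-(j+1) = k-j-1 := by omega
      rw [h, ← e2]
      exact hwmono.monotoneOn hmem2 hhighm h1.2

private lemma iterMem01
    (hwmono : StrictMonoOn w (Icc 0 ν₀)) (hν1 : ν 1 = ν₀)
    (hwge : ∀ v ∈ Icc (0:ℝ) ν₀, v ≤ w v)
    (hrec : ∀ k ≤ K, ν (k + 1) ∈ Icc 0 ν₀ ∧ w (ν (k + 1)) = ν k) :
    ∀ j k, j < k → k ≤ K → ∀ u ∈ Icc (ν (k+1)) (ν k),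
      w^[j] u ∈ Icc (0:ℝ) ν₀ := by
  intro j k hjk hkK u hu
  have h1 := iterMem hwmono hν1 hwge hrec j k (by omega) hkK u hu
  exact ⟨le_trans (nu_mem hrec _ (by omega) (by omega)).1 h1.1,
    le_trans h1.2 (nu_le0 hν1 hwge hrec _ (by omega) (by omega))⟩

private lemma iterMono
    (hwmono : StrictMonoOn w (Icc 0 ν₀)) (hν1 : ν 1 = ν₀)
    (hwge : ∀ v ∈ Icc (0:ℝ) ν₀, v ≤ w v)
    (hrec : ∀ k ≤ K, ν (k + 1) ∈ Icc 0 ν₀ ∧ w (ν (k + 1)) = ν k) :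
    ∀ j k, j ≤ k → k ≤ K → ∀ u v, u ∈ Icc (ν (k+1)) (ν k) → v ∈ Icc (ν (k+1)) (ν k) →
      u ≤ v → w^[j] u ≤ w^[j] v := by
  intro j
  induction j with
  | zero => intro k _ _ u v _ _ h; simpa using h
  | succ j ih =>
    intro k hjk hkK u v hu hv huv
    rw [Function.iterate_succ_apply', Function.iterate_succ_apply']
    exact hwmono.monotoneOn
      (iterMem01 hwmono hν1 hwge hrec j k (by omega) hkK u hu)
      (iterMem01 hwmono hν1 hwge hrec j k (by omega) hkK v hv)
      (ih k (by omega) hkK u v hu hv huv)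

private lemma iterDiff
    (hwmono : StrictMonoOn w (Icc 0 ν₀)) (hν1 : ν 1 = ν₀)
    (hwge : ∀ v ∈ Icc (0:ℝ) ν₀, v ≤ w v)
    (hwdiff : ∀ v ∈ Icc (0:ℝ) ν₀, DifferentiableAt ℝ w v)
    (hrec : ∀ k ≤ K, ν (k + 1) ∈ Icc 0 ν₀ ∧ w (ν (k + 1)) = ν k) :
    ∀ j k, j ≤ k → k ≤ K → ∀ u ∈ Icc (ν (k+1)) (ν k), DifferentiableAt ℝ (w^[j]) u := by
  intro j
  induction j with
  | zero => intro k _ _ u _; simpa using differentiableAt_id'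
  | succ j ih =>
    intro k hjk hkK u hu
    rw [Function.iterate_succ']
    exact DifferentiableAt.comp u
      (hwdiff _ (iterMem01 hwmono hν1 hwge hrec j k (by omega) hkK u hu))
      (ih k (by omega) hkK u hu)

private lemma Hs_diffAt
    (hF : ∀ v, HasDerivAt F (f v) v)
    (hwmono : StrictMonoOn w (Icc 0 ν₀)) (hν1 : ν 1 = ν₀)
    (hwge : ∀ v ∈ Icc (0:ℝ) ν₀, v ≤ w v)
    (hwdiff : ∀ v ∈ Icc (0:ℝ) ν₀, DifferentiableAt ℝ w v)
    (hrec : ∀ k ≤ K, ν (k + 1) ∈ Icc 0 ν₀ ∧ w (ν (k + 1)) = ν k) :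
    ∀ k, k ≤ K → ∀ u ∈ Icc (ν (k+1)) (ν k), DifferentiableAt ℝ (Hs F w k) u := by
  intro k hk u hu
  apply DifferentiableAt.fun_sum
  intro j hj
  have hj' : j ≤ k := by simpa [Nat.lt_succ_iff] using hj
  have := ((hF (w^[j] u)).differentiableAt).comp u
    (iterDiff hwmono hν1 hwge hwdiff hrec j k hj' hk u hu)
  exact this

private lemma Hs_mono
    (hFmono : Monotone F)
    (hwmono : StrictMonoOn w (Icc 0 ν₀)) (hν1 : ν 1 = ν₀)
    (hwge : ∀ v ∈ Icc (0:ℝ) ν₀, v ≤ w v)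
    (hrec : ∀ k ≤ K, ν (k + 1) ∈ Icc 0 ν₀ ∧ w (ν (k + 1)) = ν k) :
    ∀ k, k ≤ K → ∀ u v, u ∈ Icc (ν (k+1)) (ν k) → v ∈ Icc (ν (k+1)) (ν k) → u ≤ v →
      Hs F w k u ≤ Hs F w k v := by
  intro k hk u v hu hv huv
  apply Finset.sum_le_sum
  intro j hj
  have hj' : j ≤ k := by simpa [Nat.lt_succ_iff] using hj
  exact hFmono (iterMono hwmono hν1 hwge hrec j k hj' hk u v hu hv huv)

private lemma iterNu
    (hrec : ∀ k ≤ K, ν (k + 1) ∈ Icc 0 ν₀ ∧ w (ν (k + 1)) = ν k) :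
    ∀ j i, j ≤ i → i ≤ K + 1 → w^[j] (ν i) = ν (i - j) := by
  intro j
  induction j with
  | zero => intro i _ _; simp
  | succ j ih =>
    intro i hji hiK
    rw [Function.iterate_succ_apply', ih i (by omega) hiK]
    have h : i - j = (i - j - 1) + 1 := by omega
    have h2 : i - (j+1) = i - j - 1 := by omega
    rw [h, (hrec (i-j-1) (by omega)).2, h2]

/-- The integral of `Δ` over one piece `[a, b]` with `w([a,b]) ⊆ [ν (k+1), ν k]`. -/
private lemma piece
    (hν₀0 : (0:ℝ) ≤ ν₀)
    (hF : ∀ v, HasDerivAt F (f v) v)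
    (hFmono : Monotone F)
    (hwmono : StrictMonoOn w (Icc 0 ν₀))
    (hwdiff : ∀ v ∈ Icc (0:ℝ) ν₀, DifferentiableAt ℝ w v)
    (hwge : ∀ v ∈ Icc (0:ℝ) ν₀, v ≤ w v)
    (hν1 : ν 1 = ν₀)
    (hrec : ∀ k ≤ K, ν (k + 1) ∈ Icc 0 ν₀ ∧ w (ν (k + 1)) = ν k)
    (hlamform : ∀ k ≤ K, ∀ v ∈ Icc (ν (k + 1)) (ν k),
      lam v = deriv (fun u => ∑ j ∈ Finset.range (k + 1), F (w^[j] u)) v)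
    (hΔ : ∀ v, Δ v = v * f v -
      (if v ∈ Icc (0:ℝ) ν₀ then deriv w v * (w v - v) * lam (w v) else 0))
    (k : ℕ) (hk : k ≤ K) (a b : ℝ) (ha : 0 ≤ a) (hab : a ≤ b)
    (hb : b ≤ ν (k + 1)) (hwa : ν (k + 1) ≤ w a)
    (hint : IntervalIntegrable Δ volume a b) :
    ∫ v in a..b, Δ v
      = b * F b - a * F a
        - ((w b - b) * Hs F w k (w b) - (w a - a) * Hs F w k (w a))
        + (∫ t in (w a)..(w b), Hs F w k t)
        - ∫ t in a..b, Hs F w (k + 1) t := by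
  have hFd : Differentiable ℝ F := fun v => (hF v).differentiableAt
  have hFc : Continuous F := hFd.continuous
  have hνk1m : ν (k+1) ∈ Icc (0:ℝ) ν₀ := (hrec k hk).1
  have hab0 : Icc a b ⊆ Icc (0:ℝ) ν₀ := fun t ht =>
    ⟨le_trans ha ht.1, le_trans ht.2 (le_trans hb hνk1m.2)⟩
  have ham : a ∈ Icc (0:ℝ) ν₀ := ⟨ha, le_trans (hab.trans hb) hνk1m.2⟩
  have hbm : b ∈ Icc (0:ℝ) ν₀ := ⟨ha.trans hab, hb.trans hνk1m.2⟩
  have hwab : w a ≤ w b := hwmono.monotoneOn ham hbm hab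
  have hwbk : w b ≤ ν k := by
    rw [← (hrec k hk).2]; exact hwmono.monotoneOn hbm hνk1m hb
  have hwak : w a ≤ ν k := hwab.trans hwbk
  have hmaps : ∀ t ∈ Icc a b, w t ∈ Icc (ν (k+1)) (ν k) := by
    intro t ht
    refine ⟨le_trans hwa (hwmono.monotoneOn ham (hab0 ht) ht.1), ?_⟩
    rw [← (hrec k hk).2]
    exact hwmono.monotoneOn (hab0 ht) hνk1m (ht.2.trans hb)
  have hHdiff : ∀ u ∈ Icc (ν (k+1)) (ν k), DifferentiableAt ℝ (Hs F w k) u :=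
    Hs_diffAt hF hwmono hν1 hwge hwdiff hrec k hk
  have hHcontOn : ContinuousOn (Hs F w k) (Icc (ν (k+1)) (ν k)) := fun u hu =>
    ((hHdiff u hu).continuousAt).continuousWithinAt
  have hwcont : ContinuousOn w (Icc a b) := fun t ht =>
    ((hwdiff t (hab0 ht)).continuousAt).continuousWithinAt
  have hH1At : ∀ t ∈ Icc a b, ContinuousAt (Hs F w (k+1)) t := by
    intro t ht
    have he : Hs F w (k+1) = fun v => F v + Hs F w k (w v) := funext (Hs_succ F w k)
    rw [he]
    exact (hFc.continuousAt).add
      (((hHdiff _ (hmaps t ht)).continuousAt).comp ((hwdiff t (hab0 ht)).continuousAt))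
  have hH1contOn : ContinuousOn (Hs F w (k+1)) (Icc a b) := fun t ht =>
    (hH1At t ht).continuousWithinAt
  set Φ : ℝ → ℝ := fun v => v * F v - (w v - v) * Hs F w k (w v)
      + (∫ t in (w a)..(w v), Hs F w k t) - ∫ t in a..v, Hs F w (k+1) t with hΦdef
  have hΦcont : ContinuousOn Φ (Icc a b) := by
    apply ContinuousOn.sub
    apply ContinuousOn.add
    apply ContinuousOn.sub
    · exact continuousOn_id.mul hFc.continuousOn
    · exact (hwcont.sub continuousOn_id).mul
        (hHcontOn.comp hwcont (fun t ht => hmaps t ht))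
    · have hIO : IntegrableOn (Hs F w k) (uIcc (w a) (ν k)) volume := by
        rw [uIcc_of_le hwak]
        exact (hHcontOn.mono (Icc_subset_Icc hwa le_rfl)).integrableOn_Icc
      have hprim : ContinuousOn (fun u => ∫ t in (w a)..u, Hs F w k t)
          (uIcc (w a) (ν k)) := continuousOn_primitive_interval hIO
      refine hprim.comp hwcont ?_
      intro t ht
      rw [uIcc_of_le hwak]
      exact ⟨hwmono.monotoneOn ham (hab0 ht) ht.1, (hmaps t ht).2⟩
    · have hIO : IntegrableOn (Hs F w (k+1)) (uIcc a b) volume := by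
        rw [uIcc_of_le hab]
        exact hH1contOn.integrableOn_Icc
      have := continuousOn_primitive_interval hIO
      rwa [uIcc_of_le hab] at this
  have hderiv : ∀ v ∈ Ioo a b, HasDerivAt Φ (Δ v) v := by
    intro v hv
    have hvm : v ∈ Icc a b := Ioo_subset_Icc_self hv
    have hv01 : v ∈ Icc (0:ℝ) ν₀ := hab0 hvm
    have hwv : HasDerivAt w (deriv w v) v := (hwdiff v hv01).hasDerivAt
    have hwvm : w v ∈ Icc (ν (k+1)) (ν k) := hmaps v hvm
    have hwvo : w v ∈ Ioo (ν (k+1)) (ν k) :=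
      ⟨lt_of_le_of_lt hwa (hwmono ham hv01 hv.1),
       lt_of_lt_of_le (hwmono hv01 hbm hv.2) hwbk⟩
    have hHk : HasDerivAt (Hs F w k) (deriv (Hs F w k) (w v)) (w v) :=
      (hHdiff _ hwvm).hasDerivAt
    have h1 : HasDerivAt (fun t => t * F t) (1 * F v + v * f v) v :=
      (hasDerivAt_id v).mul (hF v)
    have hHkw : HasDerivAt (fun t => Hs F w k (w t))
        (deriv (Hs F w k) (w v) * deriv w v) v := by
      exact hHk.comp v hwv
    have h2 : HasDerivAt (fun t => (w t - t) * Hs F w k (w t))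
        ((deriv w v - 1) * Hs F w k (w v)
          + (w v - v) * (deriv (Hs F w k) (w v) * deriv w v)) v :=
      (hwv.sub (hasDerivAt_id v)).mul hHkw
    have h3' : HasDerivAt (fun u => ∫ t in (w a)..u, Hs F w k t) (Hs F w k (w v)) (w v) := by
      apply intervalIntegral.integral_hasDerivAt_right
      · apply ContinuousOn.intervalIntegrable
        apply hHcontOn.mono
        rw [uIcc_of_le (hwmono.monotoneOn ham hv01 (le_of_lt hv.1))]
        exact Icc_subset_Icc hwa hwvm.2
      · exact (hHcontOn.mono Ioo_subset_Icc_self).stronglyMeasurableAtFilter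
          isOpen_Ioo _ hwvo
      · exact (hHdiff _ hwvm).continuousAt
    have h3 : HasDerivAt (fun t => ∫ s in (w a)..(w t), Hs F w k s)
        (Hs F w k (w v) * deriv w v) v := by
      exact h3'.comp v hwv
    have h4 : HasDerivAt (fun t => ∫ s in a..t, Hs F w (k+1) s) (Hs F w (k+1) v) v := by
      apply intervalIntegral.integral_hasDerivAt_right
      · apply ContinuousOn.intervalIntegrable
        apply hH1contOn.mono
        rw [uIcc_of_le hvm.1]
        exact Icc_subset_Icc le_rfl hvm.2
      · exact ContinuousAt.stronglyMeasurableAtFilter isOpen_Ioo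
          (fun t ht => hH1At t (Ioo_subset_Icc_self ht)) v hv
      · exact hH1At v hvm
    have hsum := ((h1.sub h2).add h3).sub h4
    have hLam : lam (w v) = deriv (Hs F w k) (w v) := hlamform k hk (w v) hwvm
    have hΔv : Δ v = v * f v - deriv w v * (w v - v) * deriv (Hs F w k) (w v) := by
      rw [hΔ v, if_pos hv01, hLam]
    refine hsum.congr_deriv ?_
    rw [hΔv, Hs_succ F w k v]
    ring
  have key : ∫ v in a..b, Δ v = Φ b - Φ a :=
    intervalIntegral.integral_eq_sub_of_hasDeriv_right_of_le hab hΦcont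
      (fun v hv => (hderiv v hv).hasDerivWithinAt) hint
  rw [key]
  simp only [hΦdef, intervalIntegral.integral_same]
  ring

end Aux

/-- Dual virtual value bound: if the dual virtual value
`Δ(v) = v·f(v) − w'(v)·(w(v) − v)·λ(w(v))·1{v ∈ [0, ν₀]}` is nonnegative on
`[x, ν₀]`, then `∫_x^{v̄} Δ ≤ x·(1 − F(x)) + 2·(w(x) − x)`.
(Shifted indexing: `ν 0 = v̄` is `ν₋₁` and `ν (k+1)` is `ν_k`.) -/
theorem dual_virtual_value_bound
    (vbar μ₀ ν₀ : ℝ) (hμ : 0 < μ₀) (hμν : μ₀ < ν₀) (hν₀ : ν₀ < vbar)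
    (F f lam w Δ : ℝ → ℝ)
    (hF : ∀ v, HasDerivAt F (f v) v)
    (hFmono : Monotone F)
    (hF0 : ∀ v, 0 ≤ F v) (hF1 : ∀ v, F v ≤ 1)
    (hwmono : StrictMonoOn w (Set.Icc 0 ν₀))
    (hwdiff : ∀ v ∈ Set.Icc 0 ν₀, DifferentiableAt ℝ w v)
    (hwge : ∀ v ∈ Set.Icc 0 ν₀, v ≤ w v)
    (hw0 : w 0 = μ₀) (hwν₀ : w ν₀ = vbar)
    (ν : ℕ → ℝ) (hν0 : ν 0 = vbar)
    (K : ℕ)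
    (hrec : ∀ k ≤ K, ν (k + 1) ∈ Set.Icc 0 ν₀ ∧ w (ν (k + 1)) = ν k)
    (hK : ν (K + 1) ≤ μ₀ ∧ μ₀ ≤ ν K)
    (hlamform : ∀ k ≤ K, ∀ v ∈ Set.Icc (ν (k + 1)) (ν k),
      lam v = deriv (fun u => ∑ j ∈ Finset.range (k + 1), F (w^[j] u)) v)
    (hlamtop : ∀ v ∈ Set.Icc ν₀ vbar, lam v = f v)
    (hΔ : ∀ v, Δ v = v * f v -
      (if v ∈ Set.Icc (0:ℝ) ν₀ then deriv w v * (w v - v) * lam (w v) else 0))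
    (x : ℝ) (hx : x ∈ Set.Ico (0:ℝ) ν₀)
    (hpos : ∀ v ∈ Set.Icc x ν₀, 0 ≤ Δ v)
    (hΔint : IntervalIntegrable Δ volume x vbar) :
    ∫ v in x..vbar, Δ v ≤ x * (1 - F x) + 2 * (w x - x) := by
  classical
  have hν₀0 : (0:ℝ) ≤ ν₀ := by linarith
  have hν₀m : ν₀ ∈ Icc (0:ℝ) ν₀ := ⟨hν₀0, le_rfl⟩
  have hFd : Differentiable ℝ F := fun v => (hF v).differentiableAt
  have hFc : Continuous F := hFd.continuous
  have hν1 : ν 1 = ν₀ := by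
    have h0 := hrec 0 (Nat.zero_le K)
    have he : w (ν 1) = w ν₀ := by rw [h0.2, hν0, hwν₀]
    exact hwmono.injOn h0.1 hν₀m he
  have hnmem : ∀ i, 1 ≤ i → i ≤ K + 1 → ν i ∈ Icc (0:ℝ) ν₀ := nu_mem hrec
  have hnle0 : ∀ i, 1 ≤ i → i ≤ K + 1 → ν i ≤ ν₀ := nu_le0 hν1 hwge hrec
  have hnle : ∀ i j, 1 ≤ i → i ≤ j → j ≤ K + 1 → ν j ≤ ν i := nu_le hwge hrec
  have hxvb : x ≤ vbar := le_of_lt (lt_trans hx.2 hν₀)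
  have hsubInt : ∀ c d : ℝ, x ≤ c → c ≤ d → d ≤ vbar → IntervalIntegrable Δ volume c d := by
    intro c d h1 h2 h3
    apply hΔint.mono_set
    rw [uIcc_of_le h2, uIcc_of_le hxvb]
    exact Icc_subset_Icc h1 h3
  have hxm : x ∈ Icc (0:ℝ) ν₀ := ⟨hx.1, le_of_lt hx.2⟩
  have Hs0 : ∀ t : ℝ, Hs F w 0 t = F t := by
    intro t; simp [Hs]
  -- the inductive identity
  have Qid : ∀ p, p ≤ K → x ≤ ν (p+1) →
      ∫ v in ν (p+1)..vbar, Δ v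
        = ν (p+1) * (F vbar - F (ν (p+1)))
          + (ν p - ν (p+1)) * Hs F w p (ν p)
          - ∫ t in ν (p+1)..ν p, Hs F w p t := by
    intro p
    induction p with
    | zero =>
      intro _ _
      have hΔtop : ∀ v ∈ Ioo ν₀ vbar, Δ v = v * f v := by
        intro v hv
        rw [hΔ v, if_neg (fun hm => absurd hm.2 (not_le.mpr hv.1))]
        ring
      have hcont : ContinuousOn (fun v => v * F v - ∫ t in ν₀..v, F t) (Icc ν₀ vbar) := by
        apply ContinuousOn.sub
        · exact continuousOn_id.mul hFc.continuousOn
        · have hIO : IntegrableOn F (uIcc ν₀ vbar) volume :=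
            hFc.continuousOn.integrableOn_uIcc
          have := continuousOn_primitive_interval hIO
          rwa [uIcc_of_le (le_of_lt hν₀)] at this
      have hderiv : ∀ v ∈ Ioo ν₀ vbar,
          HasDerivAt (fun v => v * F v - ∫ t in ν₀..v, F t) (Δ v) v := by
        intro v hv
        have h1 : HasDerivAt (fun t => t * F t) (1 * F v + v * f v) v :=
          (hasDerivAt_id v).mul (hF v)
        have h2 : HasDerivAt (fun u => ∫ t in ν₀..u, F t) (F v) v :=
          intervalIntegral.integral_hasDerivAt_right
            (hFc.intervalIntegrable _ _)
            (hFc.stronglyMeasurableAtFilter _ _)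
            hFc.continuousAt
        have := h1.sub h2
        refine this.congr_deriv ?_
        rw [hΔtop v hv]; ring
      have hki : IntervalIntegrable Δ volume ν₀ vbar :=
        hsubInt ν₀ vbar (le_of_lt hx.2) (le_of_lt hν₀) le_rfl
      have key : ∫ v in ν₀..vbar, Δ v
          = (vbar * F vbar - ∫ t in ν₀..vbar, F t) - (ν₀ * F ν₀ - ∫ t in ν₀..ν₀, F t) :=
        intervalIntegral.integral_eq_sub_of_hasDeriv_right_of_le (le_of_lt hν₀) hcont
          (fun v hv => (hderiv v hv).hasDerivWithinAt) hki
      simp only [Nat.zero_add] at *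
      rw [hν1, hν0]
      simp only [Hs0]
      rw [key]
      simp only [intervalIntegral.integral_same]
      ring
    | succ p ih =>
      intro hpK hxν
      have hanti : ν (p+2) ≤ ν (p+1) := hnle (p+1) (p+2) (by omega) (by omega) (by omega)
      have hxp1 : x ≤ ν (p+1) := le_trans hxν hanti
      have hIH := ih (by omega) hxp1
      have hwrec1 : w (ν (p+2)) = ν (p+1) := (hrec (p+1) hpK).2
      have hwrec0 : w (ν (p+1)) = ν p := (hrec p (by omega)).2
      have hpiece := piece hν₀0 hF hFmono hwmono hwdiff hwge hν1 hrec hlamform hΔ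
        p (by omega) (ν (p+2)) (ν (p+1)) (hnmem (p+2) (by omega) (by omega)).1
        hanti le_rfl (le_of_eq hwrec1.symm)
        (hsubInt _ _ hxν hanti (le_trans (hnle0 (p+1) (by omega) (by omega)) (le_of_lt hν₀)))
      rw [hwrec1, hwrec0] at hpiece
      have hadd : (∫ v in ν (p+2)..ν (p+1), Δ v) + (∫ v in ν (p+1)..vbar, Δ v)
          = ∫ v in ν (p+2)..vbar, Δ v :=
        intervalIntegral.integral_add_adjacent_intervals
          (hsubInt _ _ hxν hanti (le_trans (hnle0 (p+1) (by omega) (by omega)) (le_of_lt hν₀)))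
          (hsubInt _ _ hxp1 (le_trans (hnle0 (p+1) (by omega) (by omega)) (le_of_lt hν₀)) le_rfl)
      have hHsucc1 : Hs F w (p+1) (ν (p+1)) = Hs F w p (ν (p+1)) + F vbar := by
        rw [Hs_top, iterNu hrec (p+1) (p+1) le_rfl (by omega), Nat.sub_self, hν0]
      rw [← hadd, hIH, hpiece, hHsucc1]
      ring
  -- choose the piece containing x
  let P : ℕ → Prop := fun k => x ≤ ν (k+1)
  have hP0 : P 0 := by
    show x ≤ ν 1
    rw [hν1]; exact le_of_lt hx.2
  let p := Nat.findGreatest P K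
  have hpK : p ≤ K := Nat.findGreatest_le K
  have hxνp : x ≤ ν (p+1) := Nat.findGreatest_spec (Nat.zero_le K) hP0
  have hcm : ν (p+1) ∈ Icc (0:ℝ) ν₀ := hnmem (p+1) (by omega) (by omega)
  have hνwx : ν (p+1) ≤ w x := by
    rcases eq_or_lt_of_le hpK with h | h
    · have : ν (K+1) ≤ w x := by
        calc ν (K+1) ≤ μ₀ := hK.1
        _ = w 0 := hw0.symm
        _ ≤ w x := hwmono.monotoneOn ⟨le_rfl, hν₀0⟩ hxm hx.1
      rw [h]; exact this
    · have hnp : ¬ P (p+1) :=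
        Nat.findGreatest_is_greatest (Nat.lt_succ_self p) (by omega)
      have hlt : ν (p+2) < x := not_le.mp hnp
      have : w (ν (p+2)) ≤ w x :=
        hwmono.monotoneOn (hnmem (p+2) (by omega) (by omega)) hxm (le_of_lt hlt)
      rwa [(hrec (p+1) h).2] at this
  have hwc : w (ν (p+1)) = ν p := (hrec p hpK).2
  have hwxd : w x ≤ ν p := by
    rw [← hwc]; exact hwmono.monotoneOn hxm hcm hxνp
  have hνpvb : ν (p+1) ≤ vbar := le_trans (hnle0 (p+1) (by omega) (by omega)) (le_of_lt hν₀)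
  have hE2 := Qid p hpK hxνp
  have hE3 := piece hν₀0 hF hFmono hwmono hwdiff hwge hν1 hrec hlamform hΔ
    p hpK x (ν (p+1)) hx.1 hxνp le_rfl hνwx (hsubInt x (ν (p+1)) le_rfl hxνp hνpvb)
  rw [hwc] at hE3
  have hadd : (∫ v in x..ν (p+1), Δ v) + (∫ v in ν (p+1)..vbar, Δ v)
      = ∫ v in x..vbar, Δ v :=
    intervalIntegral.integral_add_adjacent_intervals
      (hsubInt x (ν (p+1)) le_rfl hxνp hνpvb)
      (hsubInt (ν (p+1)) vbar hxνp hνpvb le_rfl)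
  -- continuity facts for integrability of Hs on subintervals
  have hHcontOn : ContinuousOn (Hs F w p) (Icc (ν (p+1)) (ν p)) := fun u hu =>
    ((Hs_diffAt hF hwmono hν1 hwge hwdiff hrec p hpK u hu).continuousAt).continuousWithinAt
  have hI1 : IntervalIntegrable (Hs F w p) volume (ν (p+1)) (w x) := by
    apply ContinuousOn.intervalIntegrable
    apply hHcontOn.mono
    rw [uIcc_of_le hνwx]
    exact Icc_subset_Icc le_rfl hwxd
  have hI2 : IntervalIntegrable (Hs F w p) volume (w x) (ν p) := by
    apply ContinuousOn.intervalIntegrable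
    apply hHcontOn.mono
    rw [uIcc_of_le hwxd]
    exact Icc_subset_Icc hνwx le_rfl
  have hsplit : (∫ t in ν (p+1)..(w x), Hs F w p t) + (∫ t in (w x)..ν p, Hs F w p t)
      = ∫ t in ν (p+1)..ν p, Hs F w p t :=
    intervalIntegral.integral_add_adjacent_intervals hI1 hI2
  -- monotonicity of Hs (p+1) on [x, ν (p+1)]
  have hmemxc : ∀ t ∈ Icc x (ν (p+1)), t ∈ Icc (0:ℝ) ν₀ := fun t ht =>
    ⟨le_trans hx.1 ht.1, le_trans ht.2 hcm.2⟩
  have hwmem : ∀ t ∈ Icc x (ν (p+1)), w t ∈ Icc (ν (p+1)) (ν p) := by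
    intro t ht
    refine ⟨le_trans hνwx (hwmono.monotoneOn hxm (hmemxc t ht) ht.1), ?_⟩
    rw [← hwc]
    exact hwmono.monotoneOn (hmemxc t ht) hcm ht.2
  have hmono1 : ∀ u v, u ∈ Icc x (ν (p+1)) → v ∈ Icc x (ν (p+1)) → u ≤ v →
      Hs F w (p+1) u ≤ Hs F w (p+1) v := by
    intro u v hu hv huv
    rw [Hs_succ, Hs_succ]
    refine add_le_add (hFmono huv) ?_
    exact Hs_mono hFmono hwmono hν1 hwge hrec p hpK _ _ (hwmem u hu) (hwmem v hv)
      (hwmono.monotoneOn (hmemxc u hu) (hmemxc v hv) huv)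
  have hH1contOn : ContinuousOn (Hs F w (p+1)) (Icc x (ν (p+1))) := by
    intro t ht
    have he : Hs F w (p+1) = fun v => F v + Hs F w p (w v) := funext (Hs_succ F w p)
    rw [he]
    refine ContinuousWithinAt.add (hFc.continuousAt).continuousWithinAt ?_
    exact ((((Hs_diffAt hF hwmono hν1 hwge hwdiff hrec p hpK _ (hwmem t ht)).continuousAt).comp
      ((hwdiff t (hmemxc t ht)).continuousAt))).continuousWithinAt
  have hI3 : IntervalIntegrable (Hs F w (p+1)) volume x (ν (p+1)) := by
    apply ContinuousOn.intervalIntegrable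
    rwa [uIcc_of_le hxνp]
  -- lower bounds for the two integrals
  have hB1 : (w x - ν (p+1)) * Hs F w p (ν (p+1)) ≤ ∫ t in ν (p+1)..(w x), Hs F w p t := by
    have hc : IntervalIntegrable (fun _ : ℝ => Hs F w p (ν (p+1))) volume (ν (p+1)) (w x) :=
      intervalIntegrable_const
    have := intervalIntegral.integral_mono_on hνwx hc hI1 (fun t ht =>
      Hs_mono hFmono hwmono hν1 hwge hrec p hpK _ _ ⟨le_rfl, le_trans hνwx hwxd⟩
        ⟨ht.1, le_trans ht.2 hwxd⟩ ht.1)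
    simpa [intervalIntegral.integral_const, smul_eq_mul] using this
  have hB2 : (ν (p+1) - x) * Hs F w (p+1) x ≤ ∫ t in x..ν (p+1), Hs F w (p+1) t := by
    have hc : IntervalIntegrable (fun _ : ℝ => Hs F w (p+1) x) volume x (ν (p+1)) :=
      intervalIntegrable_const
    have := intervalIntegral.integral_mono_on hxνp hc hI3 (fun t ht =>
      hmono1 x t ⟨le_rfl, hxνp⟩ ht ht.1)
    simpa [intervalIntegral.integral_const, smul_eq_mul] using this
  have hB3 : F x + Hs F w p (w x) ≤ Hs F w p (ν (p+1)) + F vbar := by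
    have e1 : Hs F w (p+1) (ν (p+1)) = Hs F w p (ν (p+1)) + F vbar := by
      rw [Hs_top, iterNu hrec (p+1) (p+1) le_rfl (by omega), Nat.sub_self, hν0]
    have e2 : Hs F w (p+1) x ≤ Hs F w (p+1) (ν (p+1)) :=
      hmono1 x (ν (p+1)) ⟨le_rfl, hxνp⟩ ⟨hxνp, le_rfl⟩ hxνp
    rw [Hs_succ, e1] at e2
    linarith
  have e3 : Hs F w (p+1) x = F x + Hs F w p (w x) := Hs_succ F w p x
  rw [e3] at hB2
  have hfin : ∫ v in x..vbar, Δ v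
      = ν (p+1) * F vbar - x * F x + (w x - x) * Hs F w p (w x)
        - (∫ t in ν (p+1)..(w x), Hs F w p t) - ∫ t in x..ν (p+1), Hs F w (p+1) t := by
    rw [← hadd, hE2, hE3, ← hsplit]
    ring
  rw [hfin]
  have hxwx : x ≤ w x := hwge x hxm
  have hwx0 : 0 ≤ w x := le_trans hx.1 hxwx
  have key1 : 0 ≤ (w x - ν (p+1)) * (Hs F w p (ν (p+1)) + F vbar - F x - Hs F w p (w x)) :=
    mul_nonneg (by linarith) (by linarith)
  have key2 : 0 ≤ w x * (1 - F vbar) := mul_nonneg hwx0 (by linarith [hF1 vbar])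
  have key4 : 0 ≤ (w x - x) * (1 + F x) := mul_nonneg (by linarith) (by linarith [hF0 x])
  nlinarith [hB1, hB2, key1, key2, key4]
end

section
/- Consider an IR and ε-IC deterministic mechanism (x, t) with x : [0, v̄] → {0, 1} right-continuous, and let r = inf{v : x(v) = 1} with x(v) = 0 for v < r. Then the transfers satisfy t(v) ≤ 0 for v < r, t(v) ≤ v·x(v) for v ∈ [r, r+ε), and t(v) ≤ r + ε for v ∈ [r+ε, v̄]. -/
open Set

/-- Transfer bounds for a deterministic IR, ε-IC mechanism: with threshold
`r = inf{v : x(v) = 1}` (and `x(v) = 0` below `r`, `x` right-continuous),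
the transfers satisfy `t ≤ 0` below `r`, `t(v) ≤ v·x(v)` on `[r, r+ε)`, and
`t(v) ≤ r + ε` on `[r+ε, v̄]`. -/
theorem deterministic_transfer_bounds
    (vbar ε : ℝ) (hvbar : 0 < vbar) (hε : 0 < ε)
    (x t : ℝ → ℝ)
    (hdet : ∀ v ∈ Set.Icc 0 vbar, x v = 0 ∨ x v = 1)
    (hrc : ∀ v ∈ Set.Ico 0 vbar, ContinuousWithinAt x (Set.Ici v) v)
    (hIR : ∀ v ∈ Set.Icc 0 vbar, 0 ≤ v * x v - t v)
    (hIC : ∀ v ∈ Set.Icc 0 vbar, ∀ v' ∈ Set.Icc 0 vbar,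
      v * x v' - t v' - ε ≤ v * x v - t v)
    (r : ℝ) (hrdef : r = sInf {v | v ∈ Set.Icc 0 vbar ∧ x v = 1})
    (hrmem : r ∈ Set.Icc 0 vbar)
    (hbelow : ∀ v ∈ Set.Icc 0 vbar, v < r → x v = 0)
    (hxr : x r = 1) :
    ∀ v ∈ Set.Icc 0 vbar,
      (v < r → t v ≤ 0) ∧
      (r ≤ v → v < r + ε → t v ≤ v * x v) ∧
      (r + ε ≤ v → t v ≤ r + ε) := by
  intro v hv
  refine ⟨fun hlt => ?_, fun _ _ => ?_, fun hge => ?_⟩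
  · have := hIR v hv
    rw [hbelow v hv hlt] at this
    linarith
  · linarith [hIR v hv]
  · have h1 := hIC v hv r hrmem
    have h2 := hIR r hrmem
    have hx1 : x v ≤ 1 := by rcases hdet v hv with h | h <;> simp [h]
    have hv0 : (0:ℝ) ≤ v := hv.1
    rw [hxr] at h1
    nlinarith [hrmem.1]
end

section
/- Let F be a CDF on [0, v̄] with bounded density, and suppose the optimal posted price p* ∈ argmax_v v(1-F(v)) is interior (0 < p* < v̄). Then there exist constants c > 0 and ε₀ > 0 such that for all ε ∈ (0, ε₀], the supremum of expected revenue over IR, ε-IC deterministic mechanisms is at least R(p*) + (1-F(p*))·ε − f̄·ε², where f̄ bounds the density; in particular the deterministic gain is at least c·ε. Moreover, for any IR, ε-IC deterministic mechanism the revenue is at most R(p*) + ε. Hence the optimal deterministic gain is Θ(ε). -/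
open Set MeasureTheory intervalIntegral

lemma piece_helper (G : ℝ → ℝ) (hG : Continuous G) (lo cut hi : ℝ)
    (h1 : lo ≤ cut) (h2 : cut ≤ hi) :
    IntervalIntegrable (fun v => if cut ≤ v then G v else 0) volume lo hi ∧
    (∫ v in lo..hi, if cut ≤ v then G v else 0) = ∫ v in cut..hi, G v := by
  have hae : ∀ᵐ v : ℝ, v ∈ Set.uIoc lo cut → (if cut ≤ v then G v else 0) = 0 := by
    have h0 : (volume : Measure ℝ) {cut} = 0 := measure_singleton cut
    filter_upwards [measure_eq_zero_iff_ae_notMem.mp h0] with v hv hmem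
    rw [uIoc_of_le h1] at hmem
    have hc : ¬ cut ≤ v := fun hc => hv (by simp [le_antisymm hmem.2 hc])
    simp [hc]
  have hae2 : ∀ v : ℝ, v ∈ Set.uIoc cut hi → G v = (if cut ≤ v then G v else 0) := by
    intro v hv
    rw [uIoc_of_le h2] at hv
    simp [hv.1.le]
  have hint1 : IntervalIntegrable (fun v => if cut ≤ v then G v else 0) volume lo cut := by
    refine (_root_.intervalIntegrable_const (c := (0:ℝ))).congr_ae ?_
    exact ((ae_restrict_iff' measurableSet_uIoc).mpr hae).mono fun v h => (h.symm : _)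
  have hint2 : IntervalIntegrable (fun v => if cut ≤ v then G v else 0) volume cut hi := by
    refine (hG.intervalIntegrable cut hi).congr_ae ?_
    exact (ae_restrict_iff' measurableSet_uIoc).mpr (Filter.Eventually.of_forall hae2)
  refine ⟨hint1.trans hint2, ?_⟩
  rw [← integral_add_adjacent_intervals hint1 hint2, integral_zero_ae hae,
    integral_congr_ae (Filter.Eventually.of_forall hae2)]
  ring

set_option maxHeartbeats 1000000 in
/-- Optimal deterministic gain is `Θ(ε)`: there exist `c > 0`, `ε₀ > 0` such that
for all `ε ∈ (0, ε₀]` there is an IR, ε-IC deterministic mechanism with expected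
revenue at least `R(p*) + (1 − F(p*))·ε − f̄·ε²`, in particular at least
`R(p*) + c·ε`; and every IR, ε-IC deterministic mechanism has expected revenue
at most `R(p*) + ε`. -/
theorem deterministic_gain_theta_eps
    (vbar : ℝ) (hvbar : 0 < vbar)
    (F f : ℝ → ℝ) (fbar : ℝ)
    (hf : ∀ v, HasDerivAt F (f v) v)
    (hfcont : Continuous f)
    (hfnonneg : ∀ v, 0 ≤ f v)
    (hfbar : ∀ v, f v ≤ fbar)
    (hF0 : F 0 = 0) (hFvbar : F vbar = 1)
    (R : ℝ → ℝ) (hR : ∀ v, R v = v * (1 - F v))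
    (pstar : ℝ) (hpstar : pstar ∈ Set.Ioo 0 vbar)
    (hmax : ∀ v ∈ Set.Icc 0 vbar, R v ≤ R pstar) :
    ∃ c > 0, ∃ ε₀ > 0, ∀ ε ∈ Set.Ioc (0:ℝ) ε₀,
      (∃ x t : ℝ → ℝ,
        (∀ v ∈ Set.Icc 0 vbar, x v = 0 ∨ x v = 1) ∧
        (∀ v ∈ Set.Icc 0 vbar, 0 ≤ v * x v - t v) ∧
        (∀ v ∈ Set.Icc 0 vbar, ∀ v' ∈ Set.Icc 0 vbar,
          v * x v' - t v' - ε ≤ v * x v - t v) ∧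
        IntervalIntegrable (fun v => t v * f v) volume 0 vbar ∧
        R pstar + (1 - F pstar) * ε - fbar * ε ^ 2 ≤ ∫ v in (0:ℝ)..vbar, t v * f v ∧
        R pstar + c * ε ≤ ∫ v in (0:ℝ)..vbar, t v * f v) ∧
      (∀ x t : ℝ → ℝ,
        (∀ v ∈ Set.Icc 0 vbar, x v = 0 ∨ x v = 1) →
        (∀ v ∈ Set.Icc 0 vbar, 0 ≤ v * x v - t v) →
        (∀ v ∈ Set.Icc 0 vbar, ∀ v' ∈ Set.Icc 0 vbar,
          v * x v' - t v' - ε ≤ v * x v - t v) →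
        IntervalIntegrable (fun v => t v * f v) volume 0 vbar →
        (∫ v in (0:ℝ)..vbar, t v * f v) ≤ R pstar + ε) := by
  obtain ⟨hp0, hpv⟩ := hpstar
  have hFdiff : Differentiable ℝ F := fun v => (hf v).differentiableAt
  have hFmono : Monotone F := by
    apply monotone_of_deriv_nonneg hFdiff
    intro v; rw [(hf v).deriv]; exact hfnonneg v
  have hFTC : ∀ a b : ℝ, ∫ v in a..b, f v = F b - F a := fun a b =>
    integral_eq_sub_of_hasDerivAt (fun v _ => hf v) (hfcont.intervalIntegrable a b)
  have hfbar0 : 0 ≤ fbar := le_trans (hfnonneg 0) (hfbar 0)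
  have hRp0 : 0 ≤ R pstar := by
    have := hmax 0 ⟨le_refl 0, hvbar.le⟩
    rw [hR 0] at this; linarith
  -- 1 - F pstar > 0
  have hFp : F pstar < 1 := by
    have hc : ContinuousAt F 0 := (hf 0).continuousAt
    obtain ⟨δ, hδ0, hδ⟩ := Metric.continuousAt_iff.mp hc (1/2) (by norm_num)
    set s := min (δ/2) (pstar/2) with hs
    have hs0 : 0 < s := by positivity
    have hsδ : dist s 0 < δ := by
      rw [Real.dist_eq, sub_zero, abs_of_pos hs0]
      calc s ≤ δ/2 := min_le_left _ _
        _ < δ := by linarith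
    have hFs : F s < 1/2 := by
      have := hδ hsδ
      rw [hF0, Real.dist_eq, sub_zero] at this
      exact lt_of_le_of_lt (le_abs_self _) this
    have hsle : s ≤ pstar := le_trans (min_le_right _ _) (by linarith)
    have hRs := hmax s ⟨hs0.le, le_trans hsle hpv.le⟩
    rw [hR s, hR pstar] at hRs
    nlinarith [mul_pos hs0 (by linarith : (0:ℝ) < 1 - F s)]
  set a := 1 - F pstar with ha
  have ha0 : 0 < a := by simp [ha]; linarith
  refine ⟨a/2, by positivity, min (vbar - pstar) (a/(2*(fbar+1))),
    lt_min (by linarith) (by positivity), ?_⟩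
  rintro ε ⟨hε0, hε1⟩
  have hεvb : pstar + ε ≤ vbar := by
    have := le_trans hε1 (min_le_left _ _); linarith
  have hεa : fbar * ε ≤ a/2 := by
    have h1 : ε ≤ a/(2*(fbar+1)) := le_trans hε1 (min_le_right _ _)
    have hpos : (0:ℝ) < 2*(fbar+1) := by linarith
    have h2 : ε * (2*(fbar+1)) ≤ a := (le_div_iff₀ hpos).mp h1
    nlinarith [mul_nonneg hfbar0 hε0.le]
  set q := pstar + ε with hq
  have hpq : pstar ≤ q := by simp [hq]; linarith
  constructor
  · -- lower bound: hard/soft floor mechanism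
    refine ⟨fun v => if pstar ≤ v then 1 else 0,
            fun v => if pstar ≤ v then min v q else 0, ?_, ?_, ?_, ?_⟩
    · intro v _; by_cases h : pstar ≤ v <;> simp [h]
    · intro v _; by_cases h : pstar ≤ v <;> simp [h, min_le_left]
    · intro v hv v' hv'
      by_cases h' : pstar ≤ v'
      · by_cases h : pstar ≤ v
        · simp only [h, h', if_pos, if_neg, ite_true, ite_false, if_true, if_false]
          have h1 : min v q ≤ q := min_le_right _ _
          have h2 : pstar ≤ min v' q := le_min h' (by linarith)
          nlinarith
        · simp only [h, h', if_pos, if_neg, ite_true, ite_false, if_true, if_false]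
          push_neg at h
          have h2 : pstar ≤ min v' q := le_min h' (by linarith)
          nlinarith
      · by_cases h : pstar ≤ v
        · simp only [h, h', if_pos, if_neg, ite_true, ite_false, if_true, if_false]
          have : min v q ≤ v := min_le_left _ _
          nlinarith
        · simp only [h, h', if_pos, if_neg, ite_true, ite_false, if_true, if_false]
          nlinarith
    · -- integrability and revenue bounds
      have hGcont : Continuous (fun v : ℝ => min v q * f v) :=
        (continuous_id.min continuous_const).mul hfcont
      have hfun : (fun v => (if pstar ≤ v then min v q else 0) * f v)
          = fun v => if pstar ≤ v then min v q * f v else 0 := by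
        funext v; by_cases h : pstar ≤ v <;> simp [h]
      obtain ⟨hint, hval⟩ := piece_helper (fun v => min v q * f v) hGcont 0 pstar vbar
        hp0.le (by linarith)
      rw [hfun]
      refine ⟨hint, ?_⟩
      -- compute the revenue
      have hi1 : IntervalIntegrable (fun v : ℝ => min v q * f v) volume pstar q :=
        hGcont.intervalIntegrable _ _
      have hi2 : IntervalIntegrable (fun v : ℝ => min v q * f v) volume q vbar :=
        hGcont.intervalIntegrable _ _
      have hsplit : (∫ v in pstar..vbar, min v q * f v)
          = (∫ v in pstar..q, v * f v) + (∫ v in q..vbar, q * f v) := by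
        rw [← integral_add_adjacent_intervals hi1 hi2]
        congr 1
        · apply integral_congr
          intro v hv
          rw [uIcc_of_le hpq] at hv
          simp [min_eq_left hv.2]
        · apply integral_congr
          intro v hv
          rw [uIcc_of_le (by linarith : q ≤ vbar)] at hv
          simp [min_eq_right hv.1]
      have h2 : (∫ v in q..vbar, q * f v) = q * (1 - F q) := by
        rw [intervalIntegral.integral_const_mul, hFTC, hFvbar]
      have h3 : pstar * (F q - F pstar) ≤ ∫ v in pstar..q, v * f v := by
        have := integral_mono_on (μ := volume) hpq
          ((continuous_const.mul hfcont).intervalIntegrable _ _)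
          ((continuous_id.mul hfcont).intervalIntegrable _ _)
          (fun v hv => mul_le_mul_of_nonneg_right hv.1 (hfnonneg v))
        simp only [Pi.mul_apply, id] at this
        rwa [intervalIntegral.integral_const_mul, hFTC] at this
      have h4 : F q - F pstar ≤ fbar * ε := by
        have := integral_mono_on (μ := volume) hpq (hfcont.intervalIntegrable _ _)
          (_root_.intervalIntegrable_const :
            IntervalIntegrable (fun _ => fbar) volume pstar q) (fun v _ => hfbar v)
        rw [hFTC, intervalIntegral.integral_const, smul_eq_mul] at this
        calc F q - F pstar ≤ (q - pstar) * fbar := this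
          _ = fbar * ε := by rw [hq]; ring
      have hrev : R pstar + (1 - F pstar) * ε - fbar * ε^2
          ≤ ∫ v in (0:ℝ)..vbar, if pstar ≤ v then min v q * f v else 0 := by
        rw [hval, hsplit, h2, hR]
        have := mul_le_mul_of_nonneg_left h4 hε0.le
        nlinarith
      refine ⟨hrev, le_trans ?_ hrev⟩
      have : fbar * ε^2 ≤ (a/2) * ε := by nlinarith
      have haa : (1 - F pstar) = a := ha.symm
      nlinarith
  · -- upper bound
    intro x t hdet hIR hIC hint
    have hloser : ∀ v ∈ Icc (0:ℝ) vbar, x v = 0 → t v ≤ 0 := by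
      intro v hv h0
      have := hIR v hv; rw [h0] at this; simp at this; linarith
    by_cases hS : ∃ v₀ ∈ Icc (0:ℝ) vbar, x v₀ = 1
    · obtain ⟨v₀, hv₀, hx₀⟩ := hS
      set T := t '' {v | v ∈ Icc (0:ℝ) vbar ∧ x v = 1} with hT
      have hTne : (T).Nonempty := ⟨t v₀, ⟨v₀, ⟨hv₀, hx₀⟩, rfl⟩⟩
      have hTbdd : BddBelow T := by
        refine ⟨t v₀ - ε, ?_⟩
        rintro y ⟨v, ⟨hv, hxv⟩, rfl⟩
        have := hIC v₀ hv₀ v hv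
        rw [hx₀, hxv] at this; linarith
      set τ := sInf T with hτ
      have hτle : ∀ v ∈ Icc (0:ℝ) vbar, x v = 1 → τ ≤ t v :=
        fun v hv hxv => csInf_le hTbdd ⟨v, ⟨hv, hxv⟩, rfl⟩
      have htle : ∀ v ∈ Icc (0:ℝ) vbar, x v = 1 → t v ≤ τ + ε := by
        intro v hv hxv
        have : t v - ε ≤ τ := by
          apply le_csInf hTne
          rintro y ⟨v', ⟨hv', hxv'⟩, rfl⟩
          have := hIC v hv v' hv'
          rw [hxv, hxv'] at this; linarith
        linarith
      have hτv : ∀ v ∈ Icc (0:ℝ) vbar, x v = 1 → τ ≤ v := by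
        intro v hv hxv
        have h1 := hτle v hv hxv
        have h2 := hIR v hv; rw [hxv] at h2; simp at h2; linarith
      have hτvb : τ ≤ vbar := le_trans (hτv v₀ hv₀ hx₀) hv₀.2
      by_cases hτ0 : τ ≤ 0
      · -- everyone pays at most ε
        have hb : ∀ v ∈ Icc (0:ℝ) vbar, t v * f v ≤ ε * f v := by
          intro v hv
          rcases hdet v hv with h0 | h1
          · exact mul_le_mul_of_nonneg_right
              (le_trans (hloser v hv h0) hε0.le) (hfnonneg v)
          · exact mul_le_mul_of_nonneg_right
              (by have := htle v hv h1; linarith) (hfnonneg v)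
        have := integral_mono_on hvbar.le hint
          ((continuous_const.mul hfcont).intervalIntegrable _ _) hb
        simp only [Pi.mul_apply] at this
        rw [intervalIntegral.integral_const_mul, hFTC, hFvbar, hF0] at this
        linarith
      · push_neg at hτ0
        have hb : ∀ v ∈ Icc (0:ℝ) vbar, t v * f v
            ≤ (fun v => if τ ≤ v then (τ + ε) * f v else 0) v := by
          intro v hv
          show t v * f v ≤ if τ ≤ v then (τ + ε) * f v else 0
          rcases hdet v hv with h0 | h1
          · have h2 : t v * f v ≤ 0 :=
              mul_nonpos_of_nonpos_of_nonneg (hloser v hv h0) (hfnonneg v)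
            refine le_trans h2 ?_
            by_cases h : τ ≤ v
            · rw [if_pos h]
              exact mul_nonneg (by linarith) (hfnonneg v)
            · rw [if_neg h]
          · rw [if_pos (hτv v hv h1)]
            exact mul_le_mul_of_nonneg_right (htle v hv h1) (hfnonneg v)
        obtain ⟨hgint, hgval⟩ := piece_helper (fun v => (τ + ε) * f v)
          (continuous_const.mul hfcont) 0 τ vbar hτ0.le hτvb
        have := integral_mono_on hvbar.le hint hgint hb
        rw [hgval, intervalIntegral.integral_const_mul, hFTC, hFvbar] at this
        have hRτ := hmax τ ⟨hτ0.le, hτvb⟩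
        rw [hR τ] at hRτ
        have hFτ0 : 0 ≤ F τ := hF0 ▸ hFmono hτ0.le
        nlinarith
    · push_neg at hS
      have hb : ∀ v ∈ Icc (0:ℝ) vbar, t v * f v ≤ (fun _ => (0:ℝ)) v := by
        intro v hv
        rcases hdet v hv with h0 | h1
        · exact mul_nonpos_of_nonpos_of_nonneg (hloser v hv h0) (hfnonneg v)
        · exact absurd h1 (hS v hv)
      have := integral_mono_on hvbar.le hint
        (_root_.intervalIntegrable_const) hb
      rw [intervalIntegral.integral_zero] at this
      linarith
end

section
/- Define Γ(t) = Σ_{j=0}^{⌊t⌋+1} ((-1)^j e^{-j}/j!)·(t+1-j)^j for t ≥ 0. Then 2(t+1)·e^{-1}·e^{-t} < Γ(t) ≤ 2(t+2)·e^{-(t+1)} for all t ≥ 0. -/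
open Real

noncomputable def Fterm (k : ℕ) (s : ℝ) : ℝ :=
  (-1)^k * Real.exp (s - k) * (s - k)^k / (Nat.factorial k)

noncomputable def FP (n : ℕ) (s : ℝ) : ℝ := ∑ k ∈ Finset.range (n+1), Fterm k s

noncomputable def AA (k : ℕ) (u : ℝ) : ℝ :=
  ∑ i ∈ Finset.range (k+1), (-1)^i * Real.exp (u - k) * (u - k)^i / (Nat.factorial i)


lemma continuous_Fterm (k : ℕ) : Continuous (Fterm k) := by
  unfold Fterm; fun_prop

lemma continuous_FP (n : ℕ) : Continuous (FP n) := by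
  unfold FP; exact continuous_finset_sum _ fun k _ => continuous_Fterm k

lemma continuous_AA (k : ℕ) : Continuous (AA k) := by
  unfold AA; exact continuous_finset_sum _ fun i _ => by fun_prop

lemma hasDerivAt_AA (k : ℕ) (u : ℝ) : HasDerivAt (AA k) (Fterm k u) u := by
  have h : ∀ i : ℕ, HasDerivAt (fun u : ℝ => (-1:ℝ)^i * Real.exp (u - k) * (u - k)^i / (Nat.factorial i))
      ((-1:ℝ)^i * (Real.exp (u - k) * (u - k)^i + Real.exp (u - k) * (i * (u - k)^(i-1))) / (Nat.factorial i)) u := by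
    intro i
    have he : HasDerivAt (fun u : ℝ => Real.exp (u - (k:ℝ))) (Real.exp (u - k)) u := by
      simpa using ((hasDerivAt_id u).sub_const (k:ℝ)).exp
    have hp : HasDerivAt (fun u : ℝ => (u - (k:ℝ))^i) (i * (u - k)^(i-1)) u := by
      simpa using ((hasDerivAt_id u).sub_const (k:ℝ)).fun_pow i
    have := ((he.fun_mul hp).const_mul ((-1:ℝ)^i)).div_const (Nat.factorial i)
    convert! this using 1
    funext x; ring
  have hsum := HasDerivAt.fun_sum (fun i (_ : i ∈ Finset.range (k+1)) => h i)
  convert! hsum using 1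
  -- telescoping sum
  set b : ℕ → ℝ := fun i => (-1:ℝ)^i * Real.exp (u - k) * (u - k)^i / (Nat.factorial i) with hb
  set B : ℕ → ℝ := fun i => match i with | 0 => 0 | j+1 => b j with hB
  have hBd : ∀ i, (-1:ℝ)^i * (Real.exp (u - k) * (u - k)^i + Real.exp (u - k) * (i * (u - k)^(i-1))) / (Nat.factorial i)
      = B (i+1) - B i := by
    intro i
    match i with
    | 0 => simp [hB, hb]
    | j+1 =>
      show _ = b (j+1) - b j
      simp only [hb]
      rw [Nat.factorial_succ]
      have hj : ((j:ℝ)+1) ≠ 0 := by positivity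
      have hf : ((Nat.factorial j : ℝ)) ≠ 0 := by positivity
      field_simp
      simp only [Nat.add_sub_cancel, Nat.add_sub_cancel_left, Nat.cast_add, Nat.cast_mul, Nat.cast_one]
      ring
  rw [Finset.sum_congr rfl (fun i _ => hBd i), Finset.sum_range_sub B]
  simp [hB, hb, Fterm]



lemma integral_Fterm (k : ℕ) (a b : ℝ) : ∫ u in a..b, Fterm k u = AA k b - AA k a :=
  intervalIntegral.integral_eq_sub_of_hasDerivAt (fun u _ => hasDerivAt_AA k u)
    ((continuous_Fterm k).intervalIntegrable a b)

lemma integral_FP (n : ℕ) (a b : ℝ) :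
    ∫ u in a..b, FP n u = ∑ k ∈ Finset.range (n+1), (AA k b - AA k a) := by
  unfold FP
  rw [intervalIntegral.integral_finset_sum
    (fun k _ => (continuous_Fterm k).intervalIntegrable a b)]
  exact Finset.sum_congr rfl fun k _ => integral_Fterm k a b

lemma AA_shift' (k : ℕ) (s : ℝ) : AA (k+1) s = AA k (s-1) + Fterm (k+1) s := by
  unfold AA Fterm
  rw [Finset.sum_range_succ]
  push_cast
  have h : (s - 1 - (k:ℝ)) = s - ((k:ℝ)+1) := by ring
  rw [h]

lemma AA_shift (k : ℕ) (s : ℝ) : AA k (s-1) = AA (k+1) s - Fterm (k+1) s := by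
  rw [AA_shift']; ring

lemma AA_self (k : ℕ) : AA k (k : ℝ) = 1 := by
  unfold AA
  rw [Finset.sum_eq_single 0]
  · simp
  · intro i _ hi
    simp [zero_pow hi]
  · simp

lemma key_identity (n : ℕ) (s : ℝ) :
    FP (n+1) s = 1 + (∫ u in (s-1)..((n:ℝ)+1), FP n u) + ∫ u in ((n:ℝ)+1)..s, FP (n+1) u := by
  rw [integral_FP, integral_FP]
  have h1 : ∑ k ∈ Finset.range (n+1), (AA k ((n:ℝ)+1) - AA k (s-1))
      = ∑ k ∈ Finset.range (n+1), AA k ((n:ℝ)+1) - ∑ k ∈ Finset.range (n+1), AA k (s-1) :=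
    Finset.sum_sub_distrib _ _
  have h2 : ∑ k ∈ Finset.range (n+2), (AA k s - AA k ((n:ℝ)+1))
      = ∑ k ∈ Finset.range (n+2), AA k s - ∑ k ∈ Finset.range (n+2), AA k ((n:ℝ)+1) :=
    Finset.sum_sub_distrib _ _
  rw [h1, h2]
  have h3 : ∑ k ∈ Finset.range (n+2), AA k ((n:ℝ)+1)
      = ∑ k ∈ Finset.range (n+1), AA k ((n:ℝ)+1) + AA (n+1) ((n:ℝ)+1) :=
    Finset.sum_range_succ _ _
  have h4 : AA (n+1) ((n:ℝ)+1) = 1 := by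
    have := AA_self (n+1); push_cast at this ⊢; exact this
  have h5 : ∑ k ∈ Finset.range (n+1), AA k (s-1)
      = ∑ k ∈ Finset.range (n+1), AA (k+1) s - ∑ k ∈ Finset.range (n+1), Fterm (k+1) s := by
    rw [← Finset.sum_sub_distrib]
    exact Finset.sum_congr rfl fun k _ => AA_shift k s
  have h6 : ∑ k ∈ Finset.range (n+2), AA k s
      = ∑ k ∈ Finset.range (n+1), AA (k+1) s + AA 0 s := Finset.sum_range_succ' _ _
  have h7 : FP (n+1) s = ∑ k ∈ Finset.range (n+1), Fterm (k+1) s + Fterm 0 s := by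
    unfold FP; exact Finset.sum_range_succ' _ _
  have h8 : AA 0 s = Fterm 0 s := by unfold AA Fterm; simp
  rw [h3, h4, h5, h6, h8, h7]
  ring



lemma integral_linear (a b p q : ℝ) :
    ∫ u in a..b, (p*u + q) = (p*b^2/2 + q*b) - (p*a^2/2 + q*a) := by
  have h : ∀ u : ℝ, HasDerivAt (fun u : ℝ => p*u^2/2 + q*u) (p*u+q) u := by
    intro u
    have h1 : HasDerivAt (fun u:ℝ => u^2) (2*u) u := by simpa using hasDerivAt_pow 2 u
    have := ((h1.const_mul p).div_const 2).fun_add ((hasDerivAt_id u).const_mul q)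
    convert! this using 1
    ring
  exact intervalIntegral.integral_eq_sub_of_hasDerivAt (fun u _ => h u)
    ((Continuous.intervalIntegrable (by continuity) a b))

lemma integral_expq (a b A B C : ℝ) :
    ∫ u in a..b, Real.exp (-u) * (A + B*u + C*u^2)
      = (-Real.exp (-b) * ((A+B+2*C) + (B+2*C)*b + C*b^2))
        - (-Real.exp (-a) * ((A+B+2*C) + (B+2*C)*a + C*a^2)) := by
  have h : ∀ u : ℝ, HasDerivAt (fun u : ℝ => -Real.exp (-u) * ((A+B+2*C) + (B+2*C)*u + C*u^2))
      (Real.exp (-u) * (A + B*u + C*u^2)) u := by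
    intro u
    have he : HasDerivAt (fun u : ℝ => Real.exp (-u)) (-Real.exp (-u)) u := by
      simpa using (hasDerivAt_id u).neg.exp
    have h1 : HasDerivAt (fun u:ℝ => u^2) (2*u) u := by simpa using hasDerivAt_pow 2 u
    have hp : HasDerivAt (fun u : ℝ => (A+B+2*C) + (B+2*C)*u + C*u^2)
        ((B+2*C) + C*(2*u)) u := by
      simpa using (((hasDerivAt_id u).const_mul (B+2*C)).const_add (A+B+2*C)).fun_add (h1.const_mul C)
    have := he.fun_neg.fun_mul hp
    convert! this using 1
    ring
  exact intervalIntegral.integral_eq_sub_of_hasDerivAt (fun u _ => h u)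
    ((Continuous.intervalIntegrable (by continuity) a b))

lemma base_case (s : ℝ) (h0 : (0:ℝ) ≤ s) (h1 : s ≤ 1) :
    2*s + 1/4 ≤ FP 0 s ∧ FP 0 s ≤ 2*s + 2 := by
  have hFP : FP 0 s = Real.exp s := by simp [FP, Fterm]
  rw [hFP]
  have hE : Real.exp s = Real.exp (s/2) * Real.exp (s/2) := by
    rw [← Real.exp_add]; ring_nf
  have hEpos : 0 < Real.exp (s/2) := Real.exp_pos _
  have hlow : 1 + s/2 ≤ Real.exp (s/2) := by
    have := Real.add_one_le_exp (s/2); linarith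
  have hup : 1 - s/2 ≤ Real.exp (-(s/2)) := by
    have := Real.add_one_le_exp (-(s/2)); linarith
  constructor
  · rw [hE]
    nlinarith [sq_nonneg (Real.exp (s/2) - (1+s/2)), sq_nonneg (1-s)]
  · rw [hE]
    have hmul : (1 - s/2) * Real.exp (s/2) ≤ 1 := by
      have := mul_le_mul_of_nonneg_right hup hEpos.le
      rwa [← Real.exp_add, neg_add_cancel, Real.exp_zero] at this
    have ha : 0 ≤ (1 - s/2) * Real.exp (s/2) := mul_nonneg (by linarith) hEpos.le
    nlinarith [mul_le_mul hmul hmul ha (by norm_num : (0:ℝ) ≤ 1), sq_nonneg (1-s/2)]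

lemma keyP : ∀ n : ℕ, ∀ s : ℝ, (n:ℝ) ≤ s → s ≤ (n:ℝ)+1 →
    2*s + 1/4 ≤ FP n s ∧ FP n s ≤ 2*s + 2 := by
  intro n
  induction n with
  | zero => intro s h0 h1; exact base_case s (by exact_mod_cast h0) (by simpa using h1)
  | succ n IH =>
    intro s hs1 hs2
    push_cast at hs1 hs2
    set c : ℝ := (n:ℝ) + 1 with hc
    -- G and Psi
    set G : ℝ → ℝ := fun x => ∫ u in (x-1)..c, FP n u with hG
    set Ψ : ℝ → ℝ := fun x => ∫ u in c..x, FP (n+1) u with hΨ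
    clear_value c
    have hkey : ∀ x : ℝ, FP (n+1) x = 1 + G x + Ψ x := by
      intro x
      simp only [hG, hΨ, hc]
      have := key_identity n x
      linarith
    have hGcont : Continuous G := by
      have : G = fun x => ∑ k ∈ Finset.range (n+1), (AA k c - AA k (x-1)) := by
        funext x; rw [hG]; exact integral_FP n (x-1) c
      rw [this]
      exact continuous_finset_sum _ fun k _ =>
        continuous_const.sub ((continuous_AA k).comp (continuous_id.sub continuous_const))
    have hΨderiv : ∀ x : ℝ, HasDerivAt Ψ (FP (n+1) x) x := by
      intro x
      have hΨc : Ψ = fun x => ∑ k ∈ Finset.range (n+2), (AA k x - AA k c) := by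
        funext x; rw [hΨ]; exact integral_FP (n+1) c x
      rw [hΨc]
      have := HasDerivAt.fun_sum (fun k (_ : k ∈ Finset.range (n+2)) =>
        (hasDerivAt_AA k x).sub_const (AA k c))
      simpa [FP] using this
    have hcs : c ≤ s := hs1
    have hexp : ∀ x : ℝ, HasDerivAt (fun y => Real.exp (-y) * Ψ y) (Real.exp (-x) * (1 + G x)) x := by
      intro x
      have he : HasDerivAt (fun y : ℝ => Real.exp (-y)) (-Real.exp (-x)) x := by
        simpa using (hasDerivAt_id x).neg.exp
      have hm := he.fun_mul (hΨderiv x)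
      convert! hm using 1
      rw [hkey x]; ring
    have hΨc0 : Ψ c = 0 := by
      simp only [hΨ]; exact intervalIntegral.integral_same
    have hicont : Continuous (fun u : ℝ => Real.exp (-u) * (1 + G u)) :=
      (Real.continuous_exp.comp continuous_neg).mul (continuous_const.add hGcont)
    have hFTC : ∫ u in c..s, Real.exp (-u) * (1 + G u)
        = Real.exp (-s) * Ψ s - Real.exp (-c) * Ψ c :=
      intervalIntegral.integral_eq_sub_of_hasDerivAt (fun u _ => hexp u)
        (hicont.intervalIntegrable c s)
    have hGbound : ∀ u ∈ Set.Icc c s,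
        (c^2+c/4) - ((u-1)^2 + (u-1)/4) ≤ G u ∧ G u ≤ (c^2+2*c) - ((u-1)^2 + 2*(u-1)) := by
      intro u hu
      obtain ⟨hu1, hu2⟩ := hu
      have hu1' : u - 1 ≤ c := by linarith
      have hIH : ∀ v ∈ Set.Icc (u-1) c, 2*v + 1/4 ≤ FP n v ∧ FP n v ≤ 2*v + 2 := by
        intro v hv
        exact IH v (by simp only [hc] at hv ⊢; linarith [hv.1]) (by simp only [hc] at hv ⊢; linarith [hv.2])
      constructor
      · have hmono : ∫ v in (u-1)..c, (2*v + 1/4) ≤ ∫ v in (u-1)..c, FP n v := by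
          apply intervalIntegral.integral_mono_on hu1'
            (Continuous.intervalIntegrable (by fun_prop) (u-1) c)
            ((continuous_FP n).intervalIntegrable (u-1) c)
            (fun v hv => (hIH v hv).1)
        rw [integral_linear (u-1) c 2 (1/4)] at hmono
        have hGu : G u = ∫ v in (u-1)..c, FP n v := by simp only [hG]
        rw [hGu]
        linarith [hmono]
      · have hmono : ∫ v in (u-1)..c, FP n v ≤ ∫ v in (u-1)..c, (2*v + 2) := by
          apply intervalIntegral.integral_mono_on hu1'
            ((continuous_FP n).intervalIntegrable (u-1) c)
            (Continuous.intervalIntegrable (by fun_prop) (u-1) c)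
            (fun v hv => (hIH v hv).2)
        rw [integral_linear (u-1) c 2 2] at hmono
        have hGu : G u = ∫ v in (u-1)..c, FP n v := by simp only [hG]
        rw [hGu]
        linarith [hmono]
    -- lower bound for Psi
    have hlowint : ∫ u in c..s, Real.exp (-u) * ((c^2+c/4+1/4) + (7/4)*u + (-1)*u^2)
        ≤ ∫ u in c..s, Real.exp (-u) * (1 + G u) := by
      apply intervalIntegral.integral_mono_on hcs
        (Continuous.intervalIntegrable (by fun_prop) c s)
        (hicont.intervalIntegrable c s)
      intro u hu
      apply mul_le_mul_of_nonneg_left _ (Real.exp_pos (-u)).le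
      have hb := (hGbound u hu).1
      have hr : (c^2+c/4+1/4) + (7/4)*u + (-1)*u^2
          = 1 + ((c^2+c/4) - ((u-1)^2 + (u-1)/4)) := by ring
      linarith [hb, hr.le, hr.ge]
    have hIL : ∫ u in c..s, Real.exp (-u) * ((c^2+c/4+1/4) + (7/4)*u + (-1)*u^2)
        = Real.exp (-s) * (s^2 + s/4 - c^2 - c/4) := by
      rw [integral_expq]; ring
    have hΨlow : s^2 + s/4 - c^2 - c/4 ≤ Ψ s := by
      apply le_of_mul_le_mul_left _ (Real.exp_pos (-s))
      calc Real.exp (-s) * (s^2 + s/4 - c^2 - c/4)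
          = ∫ u in c..s, Real.exp (-u) * ((c^2+c/4+1/4) + (7/4)*u + (-1)*u^2) := hIL.symm
        _ ≤ ∫ u in c..s, Real.exp (-u) * (1 + G u) := hlowint
        _ = Real.exp (-s) * Ψ s := by rw [hFTC, hΨc0]; ring
    -- upper bound for Psi
    have hupint : ∫ u in c..s, Real.exp (-u) * (1 + G u)
        ≤ ∫ u in c..s, Real.exp (-u) * ((2+c^2+2*c) + 0*u + (-1)*u^2) := by
      apply intervalIntegral.integral_mono_on hcs
        (hicont.intervalIntegrable c s)
        (Continuous.intervalIntegrable (by fun_prop) c s)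
      intro u hu
      apply mul_le_mul_of_nonneg_left _ (Real.exp_pos (-u)).le
      have hb := (hGbound u hu).2
      have hr : (2+c^2+2*c) + 0*u + (-1)*u^2
          = 1 + ((c^2+2*c) - ((u-1)^2 + 2*(u-1))) := by ring
      linarith [hb, hr.le, hr.ge]
    have hIU : ∫ u in c..s, Real.exp (-u) * ((2+c^2+2*c) + 0*u + (-1)*u^2)
        = Real.exp (-s) * (s^2 + 2*s - c^2 - 2*c) := by
      rw [integral_expq]; ring
    have hΨup : Ψ s ≤ s^2 + 2*s - c^2 - 2*c := by
      apply le_of_mul_le_mul_left _ (Real.exp_pos (-s))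
      calc Real.exp (-s) * Ψ s
          = ∫ u in c..s, Real.exp (-u) * (1 + G u) := by rw [hFTC, hΨc0]; ring
        _ ≤ ∫ u in c..s, Real.exp (-u) * ((2+c^2+2*c) + 0*u + (-1)*u^2) := hupint
        _ = Real.exp (-s) * (s^2 + 2*s - c^2 - 2*c) := hIU
    have hGs := hGbound s ⟨hcs, le_refl s⟩
    constructor
    · rw [hkey s]; nlinarith [hGs.1, hΨlow]
    · rw [hkey s]; nlinarith [hGs.2, hΨup]

/-- `Γ(t) = Σ_{j=0}^{⌊t⌋+1} ((−1)ʲ e⁻ʲ/j!)·(t + 1 − j)ʲ`. -/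
noncomputable def GammaDDE (t : ℝ) : ℝ :=
  ∑ j ∈ Finset.range (⌊t⌋₊ + 2),
    ((-1 : ℝ) ^ j * Real.exp (-(j : ℝ)) / (Nat.factorial j)) * (t + 1 - (j : ℝ)) ^ j

/-- Two-sided renewal-theoretic bounds on `Γ`:
`2(t+1)e⁻¹e⁻ᵗ < Γ(t) ≤ 2(t+2)e^{−(t+1)}` for all `t ≥ 0`. -/
theorem GammaDDE_bounds (t : ℝ) (ht : 0 ≤ t) :
    2 * (t + 1) * Real.exp (-1) * Real.exp (-t) < GammaDDE t ∧
    GammaDDE t ≤ 2 * (t + 2) * Real.exp (-(t + 1)) := by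
  have hfloor : ⌊t+1⌋₊ = ⌊t⌋₊ + 1 := Nat.floor_add_one ht
  have hΓ : GammaDDE t = Real.exp (-(t+1)) * FP (⌊t+1⌋₊) (t+1) := by
    unfold GammaDDE FP Fterm
    rw [hfloor, Finset.mul_sum]
    apply Finset.sum_congr rfl
    intro j _
    have hx : Real.exp (-(t+1)) * Real.exp (t+1-(j:ℝ)) = Real.exp (-(j:ℝ)) := by
      rw [← Real.exp_add]; ring_nf
    rw [← hx]; ring
  have hn1 : ((⌊t+1⌋₊ : ℕ) : ℝ) ≤ t+1 := Nat.floor_le (by linarith)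
  have hn2 : t+1 ≤ ((⌊t+1⌋₊ : ℕ) : ℝ) + 1 := (Nat.lt_floor_add_one (t+1)).le
  have hb := keyP (⌊t+1⌋₊) (t+1) hn1 hn2
  have hE : 0 < Real.exp (-(t+1)) := Real.exp_pos _
  constructor
  · have h1 : Real.exp (-1) * Real.exp (-t) = Real.exp (-(t+1)) := by
      rw [← Real.exp_add]; ring_nf
    calc 2 * (t + 1) * Real.exp (-1) * Real.exp (-t)
        = 2 * (t+1) * Real.exp (-(t+1)) := by rw [mul_assoc, h1]
      _ < GammaDDE t := by rw [hΓ]; nlinarith [hb.1]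
  · rw [hΓ]; nlinarith [hb.2]
end

section
/- For a renewal process with i.i.d. Uniform[0,1] interarrival times, the renewal function m(t) = E[N(t)] satisfies, for every integer n ≥ 0 and all t ∈ [n, n+1], m(t) = Σ_{k=0}^{n} (-1)^k · e^{t-k} · (t-k)^k / k! − 1. -/
open MeasureTheory ProbabilityTheory Set
open scoped ENNReal NNReal


open Finset in
private lemma alt_sum_pow (j : ℕ) : ∀ m : ℕ, m ≤ j → ∀ t : ℝ,
    ∑ k ∈ Finset.range (j+1), (-1:ℝ)^k * (j.choose k) * (t - k)^m
      = if m = j then (j.factorial : ℝ) else 0 := by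
  induction j with
  | zero => intro m hm t; interval_cases m; simp
  | succ j IH =>
    have key : ∀ (m : ℕ) (t : ℝ),
        ∑ k ∈ Finset.range (j+2), (-1:ℝ)^k * ((j+1).choose k) * (t - k)^m
        = (∑ k ∈ Finset.range (j+1), (-1:ℝ)^k * (j.choose k) * (t - k)^m)
          - ∑ k ∈ Finset.range (j+1), (-1:ℝ)^k * (j.choose k) * ((t-1) - k)^m := by
      intro m t
      rw [Finset.sum_range_succ' (fun k => (-1:ℝ)^k * ((j+1).choose k) * (t - (k:ℕ))^m)]
      have h1 : ∀ i ∈ Finset.range (j+1),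
          (-1:ℝ)^(i+1) * (((j+1).choose (i+1) : ℕ) : ℝ) * (t - ((i+1:ℕ):ℝ))^m
          = ((-1:ℝ)^(i+1) * ((j.choose (i+1) : ℕ) : ℝ) * (t - ((i+1:ℕ):ℝ))^m)
            + (-((-1:ℝ)^i * ((j.choose i : ℕ) : ℝ) * ((t-1) - (i:ℝ))^m)) := by
        intro i _
        rw [Nat.choose_succ_succ]
        have : t - ((i+1:ℕ):ℝ) = (t-1) - (i:ℝ) := by push_cast; ring
        rw [this]
        push_cast
        ring
      rw [Finset.sum_congr rfl h1, Finset.sum_add_distrib, Finset.sum_neg_distrib]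
      have h2 : (∑ i ∈ Finset.range (j+1), (-1:ℝ)^(i+1) * ((j.choose (i+1):ℕ):ℝ) * (t - ((i+1:ℕ):ℝ))^m)
            + (-1:ℝ)^0 * (((j+1).choose 0 : ℕ):ℝ) * (t - ((0:ℕ):ℝ))^m
          = ∑ k ∈ Finset.range (j+1), (-1:ℝ)^k * ((j.choose k:ℕ):ℝ) * (t - (k:ℝ))^m := by
        rw [Finset.sum_range_succ]
        rw [Finset.sum_range_succ' (fun k => (-1:ℝ)^k * ((j.choose k:ℕ):ℝ) * (t - (k:ℝ))^m) j]
        simp [Nat.choose_succ_self]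
      push_cast at h2 ⊢
      linarith [h2]
    intro m hm t
    rcases Nat.lt_or_ge m (j+1) with hmj | hmj
    · have hmj' : m ≤ j := Nat.lt_succ_iff.mp hmj
      rw [key m t, IH m hmj' t, IH m hmj' (t-1)]
      simp [Nat.ne_of_lt hmj]
    · have hm1 : m = j + 1 := le_antisymm hm hmj
      subst hm1
      rw [key (j+1) t]
      have expand : ∀ k ∈ Finset.range (j+1),
          (-1:ℝ)^k * (j.choose k) * ((t - k)^(j+1) - ((t-1) - k)^(j+1))
          = ∑ i ∈ Finset.range (j+1),
              (((j+1).choose i : ℕ):ℝ) * ((-1:ℝ)^k * (j.choose k) * (((t-1) - k))^i) := by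
        intro k _
        have hb : (t - (k:ℝ)) = ((t-1) - k) + 1 := by ring
        rw [hb, add_pow]
        rw [Finset.sum_range_succ]
        simp only [one_pow, mul_one, Nat.choose_self, Nat.cast_one, Nat.sub_self, pow_zero]
        rw [add_sub_cancel_right, Finset.mul_sum]
        exact Finset.sum_congr rfl (fun i _ => by ring)
      have : (∑ k ∈ Finset.range (j+1), (-1:ℝ)^k * (j.choose k) * (t - k)^(j+1))
          - ∑ k ∈ Finset.range (j+1), (-1:ℝ)^k * (j.choose k) * ((t-1) - k)^(j+1)
          = ∑ k ∈ Finset.range (j+1), (-1:ℝ)^k * (j.choose k) * ((t - k)^(j+1) - ((t-1) - k)^(j+1)) := by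
        rw [← Finset.sum_sub_distrib]
        exact Finset.sum_congr rfl (fun k _ => by ring)
      rw [this, Finset.sum_congr rfl expand, Finset.sum_comm]
      have : ∀ i ∈ Finset.range (j+1),
          ∑ k ∈ Finset.range (j+1), (((j+1).choose i : ℕ):ℝ) * ((-1:ℝ)^k * (j.choose k) * ((t-1) - k)^i)
          = (((j+1).choose i : ℕ):ℝ) * (if i = j then (j.factorial : ℝ) else 0) := by
        intro i hi
        rw [← Finset.mul_sum, IH i (Nat.lt_succ_iff.mp (Finset.mem_range.mp hi)) (t-1)]
      rw [Finset.sum_congr rfl this]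
      rw [Finset.sum_eq_single j]
      · simp [Nat.choose_succ_self_right, Nat.factorial_succ]
      · intro b _ hbj; simp [hbj]
      · intro h; exact absurd (Finset.self_mem_range_succ j) h


noncomputable def ihF (ℓ : ℕ) (t : ℝ) : ℝ :=
  ∑ k ∈ Finset.range (ℓ+1), (-1:ℝ)^k * (ℓ.choose k) * (max (t - k) 0)^ℓ / ℓ.factorial

lemma hasDerivAt_maxpow (ℓ : ℕ) (hℓ : 1 ≤ ℓ) (u : ℝ) :
    HasDerivAt (fun v : ℝ => (max v 0)^(ℓ+1) / (ℓ+1)) ((max u 0)^ℓ) u := by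
  rcases lt_trichotomy u 0 with hu | hu | hu
  · have he : (fun v : ℝ => (max v 0)^(ℓ+1) / (ℓ+1)) =ᶠ[nhds u] (fun _ => (0:ℝ)) := by
      filter_upwards [eventually_lt_nhds hu] with v hv
      rw [max_eq_right hv.le, zero_pow (Nat.succ_ne_zero ℓ), zero_div]
    have h1 : HasDerivAt (fun _ : ℝ => (0:ℝ)) 0 u := hasDerivAt_const u 0
    have h2 := h1.congr_of_eventuallyEq he
    simpa [max_eq_right hu.le, zero_pow (by omega : ℓ ≠ 0)] using h2
  · subst hu
    rw [hasDerivAt_iff_tendsto_slope]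
    have hb : ∀ v : ℝ, v ≠ 0 → ‖slope (fun v : ℝ => (max v 0)^(ℓ+1) / (ℓ+1)) 0 v‖ ≤ |v|^ℓ := by
      intro v hv
      have h0 : slope (fun v : ℝ => (max v 0)^(ℓ+1) / (ℓ+1)) 0 v
          = (max v 0)^(ℓ+1) / (((ℓ:ℝ)+1) * v) := by
        rw [slope_def_field]
        rw [max_self, zero_pow (Nat.succ_ne_zero ℓ), zero_div, sub_zero, sub_zero, div_div]
      rw [h0, Real.norm_eq_abs]
      rcases le_or_gt v 0 with h | h
      · rw [max_eq_right h, zero_pow (Nat.succ_ne_zero ℓ), zero_div, abs_zero]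
        positivity
      · rw [max_eq_left h.le, abs_div, abs_pow, abs_mul, abs_of_pos h]
        have hℓ1 : |(ℓ:ℝ)+1| = (ℓ:ℝ)+1 := abs_of_pos (by positivity)
        rw [hℓ1, div_le_iff₀ (by positivity), pow_succ]
        nlinarith [mul_nonneg (mul_nonneg (Nat.cast_nonneg (α:=ℝ) ℓ) (pow_nonneg h.le ℓ)) h.le]
    have hlim : Filter.Tendsto (fun v : ℝ => |v|^ℓ) (nhdsWithin 0 {(0:ℝ)}ᶜ) (nhds 0) := by
      have h4 : Filter.Tendsto (fun v : ℝ => |v|^ℓ) (nhds 0) (nhds 0) := by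
        have := ((continuous_abs.pow ℓ).tendsto (0:ℝ))
        simp only [Pi.pow_apply, abs_zero, zero_pow (by omega : ℓ ≠ 0)] at this
        exact this
      exact h4.mono_left nhdsWithin_le_nhds
    have := squeeze_zero_norm' (Filter.eventually_iff_exists_mem.mpr
      ⟨{(0:ℝ)}ᶜ, self_mem_nhdsWithin, fun v hv => hb v hv⟩) hlim
    simpa [max_self, zero_pow (by omega : ℓ ≠ 0)] using this
  · have he : (fun v : ℝ => (max v 0)^(ℓ+1) / (ℓ+1)) =ᶠ[nhds u] (fun v => v^(ℓ+1) / (ℓ+1)) := by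
      filter_upwards [eventually_gt_nhds hu] with v hv
      rw [max_eq_left hv.le]
    have h1 : HasDerivAt (fun v : ℝ => v^(ℓ+1) / (ℓ+1)) (u^ℓ) u := by
      have h := (hasDerivAt_pow (ℓ+1) u).div_const ((ℓ:ℝ)+1)
      simp only [Nat.add_sub_cancel] at h
      convert h using 1
      · rfl
      · rfl
      push_cast
      have hl : ((ℓ:ℝ)+1) ≠ 0 := by positivity
      field_simp
    have h2 := h1.congr_of_eventuallyEq he
    simpa [max_eq_left hu.le] using h2

lemma integral_maxpow (ℓ : ℕ) (hℓ : 1 ≤ ℓ) (a b : ℝ) :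
    ∫ u in a..b, (max u 0)^ℓ = (max b 0)^(ℓ+1)/(ℓ+1) - (max a 0)^(ℓ+1)/(ℓ+1) :=
  intervalIntegral.integral_eq_sub_of_hasDerivAt (fun u _ => hasDerivAt_maxpow ℓ hℓ u)
    (((continuous_id.max continuous_const).pow ℓ).intervalIntegrable a b)

open Finset in
lemma pascal_sum (j : ℕ) (q : ℕ → ℝ) :
    ∑ k ∈ Finset.range (j+2), (-1:ℝ)^k * ((j+1).choose k) * q k
    = ∑ k ∈ Finset.range (j+1), (-1:ℝ)^k * (j.choose k) * (q k - q (k+1)) := by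
  rw [Finset.sum_range_succ' (fun k => (-1:ℝ)^k * ((j+1).choose k) * q k)]
  have h1 : ∀ i ∈ Finset.range (j+1),
      (-1:ℝ)^(i+1) * (((j+1).choose (i+1):ℕ):ℝ) * q (i+1)
      = ((-1:ℝ)^(i+1) * ((j.choose (i+1):ℕ):ℝ) * q (i+1))
        + (-((-1:ℝ)^i * ((j.choose i:ℕ):ℝ) * q (i+1))) := by
    intro i _
    rw [Nat.choose_succ_succ]
    push_cast; ring
  have h3 : ∀ k ∈ Finset.range (j+1),
      (-1:ℝ)^k * ((j.choose k:ℕ):ℝ) * (q k - q (k+1))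
      = (-1:ℝ)^k * ((j.choose k:ℕ):ℝ) * q k - (-1:ℝ)^k * ((j.choose k:ℕ):ℝ) * q (k+1) :=
    fun k _ => by ring
  rw [Finset.sum_congr rfl h1, Finset.sum_add_distrib, Finset.sum_neg_distrib,
    Finset.sum_congr rfl h3, Finset.sum_sub_distrib]
  have h2 : (∑ i ∈ Finset.range (j+1), (-1:ℝ)^(i+1) * ((j.choose (i+1):ℕ):ℝ) * q (i+1))
        + (-1:ℝ)^0 * (((j+1).choose 0:ℕ):ℝ) * q 0
      = ∑ k ∈ Finset.range (j+1), (-1:ℝ)^k * ((j.choose k:ℕ):ℝ) * q k := by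
    rw [Finset.sum_range_succ]
    rw [Finset.sum_range_succ' (fun k => (-1:ℝ)^k * ((j.choose k:ℕ):ℝ) * q k) j]
    simp [Nat.choose_succ_self]
  push_cast at h2 ⊢
  linarith [h2]

lemma ihF_rec (ℓ : ℕ) (hℓ : 1 ≤ ℓ) (t : ℝ) :
    ∫ x in (0:ℝ)..1, ihF ℓ (t - x) = ihF (ℓ+1) t := by
  rw [intervalIntegral.integral_comp_sub_left (fun u => ihF ℓ u) t]
  simp only [sub_zero]
  unfold ihF
  rw [intervalIntegral.integral_finset_sum]
  · have hterm : ∀ k ∈ Finset.range (ℓ+1),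
        (∫ u in (t-1)..t, (-1:ℝ)^k * (ℓ.choose k) * (max (u - k) 0)^ℓ / ℓ.factorial)
        = (-1:ℝ)^k * (ℓ.choose k) *
            ((max (t - k) 0)^(ℓ+1)/(ℓ+1) - (max (t-1-k) 0)^(ℓ+1)/(ℓ+1)) / ℓ.factorial := by
      intro k _
      rw [intervalIntegral.integral_div, intervalIntegral.integral_const_mul]
      rw [intervalIntegral.integral_comp_sub_right (fun v => (max v 0)^ℓ) (k:ℝ)]
      rw [integral_maxpow ℓ hℓ]
    rw [Finset.sum_congr rfl hterm]
    have hre : ∑ k ∈ Finset.range (ℓ+1+1), (-1:ℝ)^k * ((ℓ+1).choose k)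
          * (max (t - k) 0)^(ℓ+1) / ((ℓ+1).factorial : ℝ)
        = ∑ k ∈ Finset.range (ℓ+2), (-1:ℝ)^k * ((ℓ+1).choose k)
          * ((max (t - k) 0)^(ℓ+1) / ((ℓ+1).factorial : ℝ)) :=
      Finset.sum_congr rfl (fun k _ => by ring)
    rw [hre, pascal_sum ℓ (fun k => (max (t - (k:ℕ)) 0)^(ℓ+1) / ((ℓ+1).factorial : ℝ))]
    refine Finset.sum_congr rfl (fun k _ => ?_)
    have h1 : t - 1 - (k:ℝ) = t - ((k+1:ℕ):ℝ) := by push_cast; ring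
    rw [h1]
    have hf : ((ℓ+1).factorial : ℝ) = ((ℓ:ℝ)+1) * (ℓ.factorial : ℝ) := by
      rw [Nat.factorial_succ]; push_cast; ring
    rw [hf]
    have hfac : (ℓ.factorial : ℝ) ≠ 0 := Nat.cast_ne_zero.mpr (Nat.factorial_ne_zero ℓ)
    have hl1 : ((ℓ:ℝ)+1) ≠ 0 := by positivity
    field_simp
  · intro k _
    exact ((continuous_const.mul
      (((continuous_sub_right ((k:ℕ):ℝ)).max continuous_const).pow ℓ)).div_const
      _).intervalIntegrable _ _


lemma tsum_exp_tail (r : ℕ) (x : ℝ) :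
    ∑' j : ℕ, x^(r+j) / (r+j).factorial
    = Real.exp x - ∑ m ∈ Finset.range r, x^m / m.factorial := by
  have hs : Summable (fun m : ℕ => x^m / m.factorial) := Real.summable_pow_div_factorial x
  have hexp : Real.exp x = ∑' m : ℕ, x^m / m.factorial := by
    rw [Real.exp_eq_exp_ℝ, NormedSpace.exp_eq_tsum_div]
  have h := Summable.sum_add_tsum_nat_add r hs
  have h2 : ∑' j : ℕ, x^(r+j) / (r+j).factorial = ∑' j : ℕ, x^(j+r) / (j+r).factorial :=
    tsum_congr (fun j => by rw [add_comm])
  rw [h2]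
  rw [hexp]
  linarith [h]

lemma summable_tail (r : ℕ) (x c : ℝ) :
    Summable (fun j : ℕ => c * (x^(r+j) / (r+j).factorial)) := by
  have hs : Summable (fun m : ℕ => x^m / m.factorial) := Real.summable_pow_div_factorial x
  have h1 : Summable (fun j : ℕ => x^(j+r) / (j+r).factorial) :=
    (summable_nat_add_iff r).mpr hs
  have h2 : Summable (fun j : ℕ => x^(r+j) / (r+j).factorial) := by
    apply h1.congr
    intro j; rw [add_comm]
  exact h2.mul_left c

lemma triangle_reindex (n : ℕ) (g : ℕ → ℕ → ℝ) :
    ∑ k ∈ Finset.range (n+1), ∑ m ∈ Finset.range (n+1-k), g k m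
    = ∑ j ∈ Finset.range (n+1), ∑ k ∈ Finset.range (j+1), g k (j-k) := by
  rw [Finset.sum_sigma', Finset.sum_sigma']
  refine Finset.sum_nbij' (fun p => ⟨p.1 + p.2, p.1⟩) (fun p => ⟨p.2, p.1 - p.2⟩)
    ?_ ?_ ?_ ?_ ?_
  · rintro ⟨k, m⟩ hp
    simp only [Finset.mem_sigma, Finset.mem_range] at hp ⊢
    omega
  · rintro ⟨j, k⟩ hp
    simp only [Finset.mem_sigma, Finset.mem_range] at hp ⊢
    omega
  · rintro ⟨k, m⟩ hp
    simp only [Finset.mem_sigma, Finset.mem_range] at hp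
    simp only [Sigma.mk.inj_iff, heq_iff_eq, true_and, and_true, eq_self_iff_true]
    omega
  · rintro ⟨j, k⟩ hp
    simp only [Finset.mem_sigma, Finset.mem_range] at hp
    simp only [Sigma.mk.inj_iff, heq_iff_eq, true_and, and_true, eq_self_iff_true]
    omega
  · rintro ⟨k, m⟩ hp
    simp only [Finset.mem_sigma, Finset.mem_range] at hp
    have hkm : k + m - k = m := by omega
    simp only [hkm]

lemma choose_cast_eq (j k : ℕ) (hk : k ≤ j) :
    ((j.choose k : ℕ) : ℝ) = (j.factorial : ℝ) / (k.factorial * (j-k).factorial) := by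
  have h := Nat.choose_mul_factorial_mul_factorial hk
  have h2 : ((j.choose k : ℕ) : ℝ) * (k.factorial * (j-k).factorial) = (j.factorial : ℝ) := by
    push_cast [← h]; ring
  field_simp at h2 ⊢
  linarith [h2]

lemma double_sum_id (n : ℕ) (t : ℝ) :
    ∑ k ∈ Finset.range (n+1), ∑ m ∈ Finset.range (n+1-k),
      (-1:ℝ)^k * (t-k)^(k+m) / (k.factorial * m.factorial) = n+1 := by
  rw [triangle_reindex n (fun k m => (-1:ℝ)^k * (t-k)^(k+m) / (k.factorial * m.factorial))]
  have h : ∀ j ∈ Finset.range (n+1),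
      ∑ k ∈ Finset.range (j+1), (-1:ℝ)^k * (t-k)^(k+(j-k)) / (k.factorial * (j-k).factorial)
      = 1 := by
    intro j _
    have hterm : ∀ k ∈ Finset.range (j+1),
        (-1:ℝ)^k * (t-k)^(k+(j-k)) / (k.factorial * (j-k).factorial)
        = ((-1:ℝ)^k * (j.choose k) * (t-k)^j) / (j.factorial : ℝ) := by
      intro k hk
      have hkj : k ≤ j := Nat.lt_succ_iff.mp (Finset.mem_range.mp hk)
      rw [Nat.add_sub_cancel' hkj, choose_cast_eq j k hkj]
      have hf1 : (k.factorial : ℝ) ≠ 0 := Nat.cast_ne_zero.mpr (Nat.factorial_ne_zero k)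
      have hf2 : ((j-k).factorial : ℝ) ≠ 0 := Nat.cast_ne_zero.mpr (Nat.factorial_ne_zero _)
      have hf3 : (j.factorial : ℝ) ≠ 0 := Nat.cast_ne_zero.mpr (Nat.factorial_ne_zero j)
      field_simp
    rw [Finset.sum_congr rfl hterm, ← Finset.sum_div, alt_sum_pow j j le_rfl t]
    simp [Nat.factorial_ne_zero]
  rw [Finset.sum_congr rfl h]
  simp


lemma ihF_trunc (n j : ℕ) (t : ℝ) (ht : (n:ℝ) ≤ t) (ht2 : t ≤ (n:ℝ)+1) :
    ihF (n+1+j) t = ∑ k ∈ Finset.range (n+1),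
      ((-1:ℝ)^k * (t-k)^k / k.factorial) * ((t-k)^((n+1-k)+j) / ((n+1-k)+j).factorial) := by
  unfold ihF
  rw [← Finset.sum_subset (Finset.range_subset_range.mpr (by omega : n+1 ≤ n+1+j+1))]
  · apply Finset.sum_congr rfl
    intro k hk
    have hkn : k ≤ n := Nat.lt_succ_iff.mp (Finset.mem_range.mp hk)
    have hknr : (k:ℝ) ≤ n := by exact_mod_cast hkn
    have hmax : max (t - k) 0 = t - k := max_eq_left (by linarith)
    rw [hmax, choose_cast_eq _ _ (by omega : k ≤ n+1+j)]
    have he : n+1+j-k = (n+1-k)+j := by omega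
    rw [he]
    have hpow : (t-k)^(n+1+j) = (t-k)^k * (t-k)^((n+1-k)+j) := by
      rw [← pow_add]
      congr 1
      omega
    rw [hpow]
    have hf1 : (k.factorial : ℝ) ≠ 0 := Nat.cast_ne_zero.mpr (Nat.factorial_ne_zero k)
    have hf2 : (((n+1-k)+j).factorial : ℝ) ≠ 0 := Nat.cast_ne_zero.mpr (Nat.factorial_ne_zero _)
    have hf3 : ((n+1+j).factorial : ℝ) ≠ 0 := Nat.cast_ne_zero.mpr (Nat.factorial_ne_zero _)
    field_simp
  · intro k hk1 hk2
    have hk3 : n+1 ≤ k := by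
      simp only [Finset.mem_range] at hk2
      omega
    have hk3r : ((n:ℝ)+1) ≤ (k:ℝ) := by exact_mod_cast hk3
    have hmax : max (t - k) 0 = 0 := max_eq_right (by linarith)
    rw [hmax, zero_pow (by omega : n+1+j ≠ 0)]
    simp

lemma tail_sum (n : ℕ) (t : ℝ) (ht : (n:ℝ) ≤ t) (ht2 : t ≤ (n:ℝ)+1) :
    ∑' j : ℕ, ihF (n+1+j) t
    = (∑ k ∈ Finset.range (n+1), (-1:ℝ)^k * Real.exp (t-k) * (t-k)^k / k.factorial)
      - (n+1) := by
  have hrw : ∀ j : ℕ, ihF (n+1+j) t = ∑ k ∈ Finset.range (n+1),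
      ((-1:ℝ)^k * (t-k)^k / k.factorial) * ((t-k)^((n+1-k)+j) / ((n+1-k)+j).factorial) :=
    fun j => ihF_trunc n j t ht ht2
  rw [tsum_congr hrw, Summable.tsum_finsetSum (fun k _ => summable_tail (n+1-k) (t-k) _)]
  have hper : ∀ k ∈ Finset.range (n+1),
      ∑' j : ℕ, ((-1:ℝ)^k * (t-k)^k / k.factorial)
        * ((t-k)^((n+1-k)+j) / ((n+1-k)+j).factorial)
      = ((-1:ℝ)^k * (t-k)^k / k.factorial)
        * (Real.exp (t-k) - ∑ m ∈ Finset.range (n+1-k), (t-k)^m / m.factorial) := by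
    intro k _
    rw [tsum_mul_left, tsum_exp_tail (n+1-k) (t-k)]
  rw [Finset.sum_congr rfl hper]
  have hsplit : ∀ k ∈ Finset.range (n+1),
      ((-1:ℝ)^k * (t-k)^k / k.factorial)
        * (Real.exp (t-k) - ∑ m ∈ Finset.range (n+1-k), (t-k)^m / m.factorial)
      = (-1:ℝ)^k * Real.exp (t-k) * (t-k)^k / k.factorial
        - ∑ m ∈ Finset.range (n+1-k), (-1:ℝ)^k * (t-k)^(k+m) / (k.factorial * m.factorial) := by
    intro k _
    rw [mul_sub, Finset.mul_sum]
    congr 1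
    · ring
    · apply Finset.sum_congr rfl
      intro m _
      rw [pow_add]
      have hf1 : (k.factorial : ℝ) ≠ 0 := Nat.cast_ne_zero.mpr (Nat.factorial_ne_zero k)
      have hf2 : (m.factorial : ℝ) ≠ 0 := Nat.cast_ne_zero.mpr (Nat.factorial_ne_zero m)
      field_simp
  rw [Finset.sum_congr rfl hsplit, Finset.sum_sub_distrib, double_sum_id n t]


lemma prob_step {Ω : Type*} [MeasurableSpace Ω] (P : Measure Ω) [IsProbabilityMeasure P]
    (Y W : Ω → ℝ) (hY : Measurable Y) (hW : Measurable W)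
    (hind : IndepFun W Y P) (t : ℝ) :
    P {ω | W ω + Y ω ≤ t}
      = ∫⁻ x, P {ω | Y ω ≤ t - x} ∂(Measure.map W P) := by
  have hmap : Measure.map (fun ω => (W ω, Y ω)) P
      = (Measure.map W P).prod (Measure.map Y P) :=
    (indepFun_iff_map_prod_eq_prod_map_map hW.aemeasurable hY.aemeasurable).mp hind
  have hset : {ω | W ω + Y ω ≤ t} = (fun ω => (W ω, Y ω)) ⁻¹' {p : ℝ × ℝ | p.1 + p.2 ≤ t} := rfl
  have hms : MeasurableSet {p : ℝ × ℝ | p.1 + p.2 ≤ t} := by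
    apply measurableSet_le <;> fun_prop
  rw [hset, ← Measure.map_apply (hW.prodMk hY) hms, hmap, Measure.prod_apply hms]
  apply lintegral_congr
  intro x
  have : (Prod.mk x ⁻¹' {p : ℝ × ℝ | p.1 + p.2 ≤ t}) = Set.Iic (t - x) := by
    ext y
    simp [Set.mem_Iic]
    constructor <;> intro h <;> linarith
  rw [this, Measure.map_apply hY measurableSet_Iic]
  rfl


lemma ihF_one (t : ℝ) : ihF 1 t = max t 0 - max (t-1) 0 := by
  unfold ihF
  rw [Finset.sum_range_succ, Finset.sum_range_one]
  norm_num
  ring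

lemma ihF_cont (ℓ : ℕ) : Continuous (ihF ℓ) := by
  unfold ihF
  apply continuous_finset_sum
  intro k _
  exact (continuous_const.mul
    (((continuous_id.sub continuous_const).max continuous_const).pow ℓ)).div_const _

lemma ihF_nonneg : ∀ ℓ, 1 ≤ ℓ → ∀ t, 0 ≤ ihF ℓ t := by
  intro ℓ hℓ
  induction ℓ, hℓ using Nat.le_induction with
  | base =>
    intro t
    rw [ihF_one]
    have : max (t-1) 0 ≤ max t 0 := max_le_max (by linarith) le_rfl
    linarith
  | succ ℓ hℓ IH =>
    intro t
    rw [← ihF_rec ℓ hℓ t]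
    exact intervalIntegral.integral_nonneg (by norm_num) (fun u _ => IH _)

lemma unif_cdf (t : ℝ) :
    (volume.restrict (Set.Icc (0:ℝ) 1)) (Set.Iic t) = ENNReal.ofReal (ihF 1 t) := by
  rw [ihF_one, Measure.restrict_apply measurableSet_Iic]
  rcases lt_or_ge t 0 with h | h
  · have hs : Set.Iic t ∩ Set.Icc (0:ℝ) 1 = ∅ := by
      ext x; simp only [Set.mem_inter_iff, Set.mem_Iic, Set.mem_Icc, Set.mem_empty_iff_false,
        iff_false, not_and]
      intro hx hy
      intro h2
      linarith
    rw [hs, max_eq_right h.le, max_eq_right (by linarith : t - 1 ≤ 0)]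
    simp
  · rcases le_or_gt t 1 with h1 | h1
    · have hs : Set.Iic t ∩ Set.Icc (0:ℝ) 1 = Set.Icc 0 t := by
        ext x; simp only [Set.mem_inter_iff, Set.mem_Iic, Set.mem_Icc]
        constructor
        · rintro ⟨hx, hy, hz⟩; exact ⟨hy, hx⟩
        · rintro ⟨hx, hy⟩; exact ⟨hy, hx, by linarith⟩
      rw [hs, Real.volume_Icc, max_eq_left h, max_eq_right (by linarith : t - 1 ≤ 0)]
    · have hs : Set.Iic t ∩ Set.Icc (0:ℝ) 1 = Set.Icc 0 1 := by
        ext x; simp only [Set.mem_inter_iff, Set.mem_Iic, Set.mem_Icc]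
        constructor
        · rintro ⟨hx, hy, hz⟩; exact ⟨hy, hz⟩
        · rintro ⟨hx, hy⟩; exact ⟨by linarith, hx, hy⟩
      rw [hs, Real.volume_Icc, max_eq_left (by linarith : (0:ℝ) ≤ t),
        max_eq_left (by linarith : (0:ℝ) ≤ t - 1)]
      norm_num

lemma prob_closed {Ω : Type*} [MeasurableSpace Ω] (P : Measure Ω) [IsProbabilityMeasure P]
    (X : ℕ → Ω → ℝ) (hmeas : ∀ i, Measurable (X i))
    (hindep : iIndepFun X P)
    (hunif : ∀ i, Measure.map (X i) P = volume.restrict (Set.Icc (0:ℝ) 1)) :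
    ∀ ℓ, 1 ≤ ℓ → ∀ t, P {ω | (∑ i ∈ Finset.range ℓ, X i ω) ≤ t}
      = ENNReal.ofReal (ihF ℓ t) := by
  intro ℓ hℓ
  induction ℓ, hℓ using Nat.le_induction with
  | base =>
    intro t
    have hset : {ω | (∑ i ∈ Finset.range 1, X i ω) ≤ t} = X 0 ⁻¹' (Set.Iic t) := by
      ext ω; simp [Finset.sum_range_one, Set.mem_Iic]
    rw [hset, ← Measure.map_apply (hmeas 0) measurableSet_Iic, hunif 0]
    exact unif_cdf t
  | succ ℓ hℓ IH =>
    intro t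
    have hYm : Measurable (fun ω => ∑ i ∈ Finset.range ℓ, X i ω) := by
      apply Finset.measurable_sum
      intro i _
      exact hmeas i
    have hind : IndepFun (X ℓ) (fun ω => ∑ i ∈ Finset.range ℓ, X i ω) P := by
      have h := (hindep.indepFun_sum_range_succ hmeas ℓ).symm
      have he : (∑ j ∈ Finset.range ℓ, X j) = (fun ω => ∑ i ∈ Finset.range ℓ, X i ω) := by
        funext ω
        exact Finset.sum_apply ω (Finset.range ℓ) X
      rwa [he] at h
    have hset : {ω | (∑ i ∈ Finset.range (ℓ+1), X i ω) ≤ t}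
        = {ω | X ℓ ω + (∑ i ∈ Finset.range ℓ, X i ω) ≤ t} := by
      ext ω
      rw [Set.mem_setOf_eq, Set.mem_setOf_eq, Finset.sum_range_succ, add_comm]
    rw [hset, prob_step P (fun ω => ∑ i ∈ Finset.range ℓ, X i ω) (X ℓ) hYm (hmeas ℓ) hind t,
      hunif ℓ]
    have hIH : ∀ x : ℝ, P {ω | (∑ i ∈ Finset.range ℓ, X i ω) ≤ t - x}
        = ENNReal.ofReal (ihF ℓ (t - x)) := fun x => IH (t - x)
    rw [lintegral_congr (fun x => hIH x)]
    have hint : MeasureTheory.Integrable (fun x => ihF ℓ (t - x))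
        (volume.restrict (Set.Icc (0:ℝ) 1)) := by
      apply Continuous.integrableOn_Icc
      exact (ihF_cont ℓ).comp (continuous_const.sub continuous_id)
    rw [← MeasureTheory.ofReal_integral_eq_lintegral_ofReal hint
      (Filter.Eventually.of_forall (fun x => ihF_nonneg ℓ hℓ (t - x)))]
    congr 1
    have h1 : ∫ x in Set.Icc (0:ℝ) 1, ihF ℓ (t - x) = ∫ x in (0:ℝ)..1, ihF ℓ (t - x) := by
      rw [intervalIntegral.integral_of_le (by norm_num : (0:ℝ) ≤ 1),
        MeasureTheory.integral_Icc_eq_integral_Ioc]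
    rw [h1, ihF_rec ℓ hℓ t]


lemma ae_unit {Ω : Type*} [MeasurableSpace Ω] (P : Measure Ω) [IsProbabilityMeasure P]
    (X : ℕ → Ω → ℝ) (hmeas : ∀ i, Measurable (X i))
    (hunif : ∀ i, Measure.map (X i) P = volume.restrict (Set.Icc (0:ℝ) 1)) :
    ∀ᵐ ω ∂P, ∀ i : ℕ, X i ω ∈ Set.Icc (0:ℝ) 1 := by
  rw [MeasureTheory.ae_all_iff]
  intro i
  have h1 : P (X i ⁻¹' Set.Icc (0:ℝ) 1) = 1 := by
    rw [← Measure.map_apply (hmeas i) measurableSet_Icc, hunif i,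
      Measure.restrict_apply measurableSet_Icc]
    simp [Real.volume_Icc]
  rw [MeasureTheory.ae_iff]
  have hs : {ω | ¬ X i ω ∈ Set.Icc (0:ℝ) 1} = (X i ⁻¹' Set.Icc (0:ℝ) 1)ᶜ := rfl
  rw [hs, measure_compl ((hmeas i) measurableSet_Icc) (measure_ne_top P _), h1]
  simp

lemma prob_one {Ω : Type*} [MeasurableSpace Ω] (P : Measure Ω) [IsProbabilityMeasure P]
    (X : ℕ → Ω → ℝ) (hmeas : ∀ i, Measurable (X i))
    (hunif : ∀ i, Measure.map (X i) P = volume.restrict (Set.Icc (0:ℝ) 1))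
    (ℓ : ℕ) (t : ℝ) (ht : (ℓ:ℝ) ≤ t) :
    P {ω | (∑ i ∈ Finset.range ℓ, X i ω) ≤ t} = 1 := by
  have h : ∀ᵐ ω ∂P, ω ∈ {ω | (∑ i ∈ Finset.range ℓ, X i ω) ≤ t} := by
    filter_upwards [ae_unit P X hmeas hunif] with ω hω
    have hb : ∑ i ∈ Finset.range ℓ, X i ω ≤ ∑ i ∈ Finset.range ℓ, (1:ℝ) :=
      Finset.sum_le_sum (fun i _ => (hω i).2)
    rw [Finset.sum_const, Finset.card_range, nsmul_eq_mul, mul_one] at hb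
    show (∑ i ∈ Finset.range ℓ, X i ω) ≤ t
    exact le_trans hb ht
  rw [← measure_univ (μ := P)]
  exact measure_congr (Filter.eventuallyEq_univ.mpr h)

/-- Closed form of the renewal function for i.i.d. Uniform[0,1] interarrival
times: for `t ∈ [n, n+1]`,
`m(t) = E[N(t)] = Σ_{k=0}^{n} (−1)ᵏ e^{t−k} (t−k)ᵏ/k! − 1`,
where `N(t) = sup{k : Z_k ≤ t}` and `Z_k = X₁ + ⋯ + X_k`. -/
theorem renewal_function_uniform_closed_form
    {Ω : Type*} [MeasurableSpace Ω] (P : Measure Ω) [IsProbabilityMeasure P]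
    (X : ℕ → Ω → ℝ)
    (hmeas : ∀ i, Measurable (X i))
    (hindep : iIndepFun X P)
    (hunif : ∀ i, Measure.map (X i) P = volume.restrict (Set.Icc (0:ℝ) 1))
    (Z : ℕ → Ω → ℝ) (hZ : ∀ k ω, Z k ω = ∑ i ∈ Finset.range k, X i ω)
    (N : ℝ → Ω → ℕ) (hN : ∀ t ω, N t ω = sSup {k : ℕ | Z k ω ≤ t})
    (n : ℕ) (t : ℝ) (ht : t ∈ Set.Icc (n : ℝ) ((n : ℝ) + 1)) :
    ∫ ω, ((N t ω : ℝ)) ∂P =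
      (∑ k ∈ Finset.range (n + 1),
        (-1 : ℝ) ^ k * Real.exp (t - k) * (t - (k : ℝ)) ^ k / (Nat.factorial k)) - 1 := by
  obtain ⟨htn, htn1⟩ := ht
  have hn0 : (0:ℝ) ≤ t := le_trans (Nat.cast_nonneg n) htn
  have hZm : ∀ k, Measurable (fun ω => ∑ i ∈ Finset.range k, X i ω) :=
    fun k => Finset.measurable_sum _ (fun i _ => hmeas i)
  set A : ℕ → Set Ω := fun ℓ => {ω | (∑ i ∈ Finset.range ℓ, X i ω) ≤ t} with hA
  have hAm : ∀ ℓ, MeasurableSet (A ℓ) := fun ℓ => measurableSet_le (hZm ℓ) measurable_const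
  have hAprob : ∀ ℓ, 1 ≤ ℓ → P (A ℓ) = ENNReal.ofReal (ihF ℓ t) :=
    fun ℓ hℓ => prob_closed P X hmeas hindep hunif ℓ hℓ t
  have hAone : ∀ ℓ:ℕ, (ℓ:ℝ) ≤ t → P (A ℓ) = 1 :=
    fun ℓ hℓ => prob_one P X hmeas hunif ℓ t hℓ
  have hnn : ∀ j : ℕ, 0 ≤ ihF (n+1+j) t := fun j => ihF_nonneg _ (by omega) t
  have hsumtail : Summable (fun j : ℕ => ihF (n+1+j) t) := by
    refine Summable.congr ?_ (fun j => (ihF_trunc n j t htn htn1).symm)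
    exact summable_sum (fun k _ => summable_tail (n+1-k) (t-k) _)
  have hT0 : 0 ≤ ∑' j : ℕ, ihF (n+1+j) t := tsum_nonneg hnn
  have htailE : ∑' j:ℕ, P (A (n+1+j)) = ENNReal.ofReal (∑' j : ℕ, ihF (n+1+j) t) := by
    rw [tsum_congr (fun j => hAprob (n+1+j) (by omega))]
    exact (ENNReal.ofReal_tsum_of_nonneg hnn hsumtail).symm
  have hsplit0 : ∑' ℓ:ℕ, P (A ℓ)
      = (∑ i ∈ Finset.range (n+1), P (A i)) + ∑' j:ℕ, P (A (j + (n+1))) :=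
    (Summable.sum_add_tsum_nat_add' (f := fun ℓ => P (A ℓ)) (k := n+1) ENNReal.summable).symm
  have hfin : ∑' ℓ:ℕ, P (A ℓ) ≠ ⊤ := by
    rw [hsplit0]
    apply ENNReal.add_ne_top.mpr
    constructor
    · exact (ENNReal.sum_lt_top.mpr (fun i _ => (measure_lt_top P _))).ne
    · rw [tsum_congr (fun j => by rw [(by omega : j + (n+1) = n+1+j)]), htailE]
      exact ENNReal.ofReal_ne_top
  have hbc : ∀ᵐ ω ∂P, {ℓ : ℕ | ω ∈ A ℓ}.Finite := ae_finite_setOf_mem hfin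
  -- the counting function
  set g : Ω → ℝ≥0∞ := fun ω => ∑' ℓ : ℕ, Set.indicator (A (ℓ+1)) (fun _ => (1:ℝ≥0∞)) ω
    with hg
  have hgm : Measurable g :=
    Measurable.ennreal_tsum (fun ℓ => measurable_const.indicator (hAm (ℓ+1)))
  have haeN : ∀ᵐ ω ∂P, ((N t ω : ℕ) : ℝ≥0∞) = g ω := by
    filter_upwards [hbc, ae_unit P X hmeas hunif] with ω hfinω hXω
    set S : Set ℕ := {k | Z k ω ≤ t} with hS
    have hSA : ∀ k, k ∈ S ↔ ω ∈ A k := by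
      intro k
      rw [hS, Set.mem_setOf_eq, hZ k ω]
      exact Iff.rfl
    have h0S : 0 ∈ S := by
      rw [hSA 0]
      simp only [hA, Set.mem_setOf_eq, Finset.range_zero, Finset.sum_empty]
      exact hn0
    have hbdd : BddAbove S := by
      have : S = {ℓ : ℕ | ω ∈ A ℓ} := Set.ext (fun k => hSA k)
      rw [this]
      exact hfinω.bddAbove
    have hmono : ∀ j k : ℕ, j ≤ k →
        (∑ i ∈ Finset.range j, X i ω) ≤ ∑ i ∈ Finset.range k, X i ω := by
      intro j k hjk
      exact Finset.sum_le_sum_of_subset_of_nonneg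
        (Finset.range_subset_range.mpr hjk) (fun i _ _ => (hXω i).1)
    set M : ℕ := sSup S with hM
    have hMS : M ∈ S := Nat.sSup_mem ⟨0, h0S⟩ hbdd
    have hiff : ∀ k, k ∈ S ↔ k ≤ M := by
      intro k
      constructor
      · exact fun hk => le_csSup hbdd hk
      · intro hk
        rw [hS, Set.mem_setOf_eq, hZ k ω]
        have h2 : Z M ω ≤ t := hMS
        rw [hZ M ω] at h2
        exact le_trans (hmono k M hk) h2
    have hNM : N t ω = M := by rw [hN t ω]
    have hgω : g ω = (M : ℝ≥0∞) := by
      rw [hg]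
      simp only
      have hterm : ∀ ℓ : ℕ, Set.indicator (A (ℓ+1)) (fun _ => (1:ℝ≥0∞)) ω
          = if ℓ < M then 1 else 0 := by
        intro ℓ
        by_cases hℓ : ℓ < M
        · rw [if_pos hℓ, Set.indicator_of_mem]
          rw [← hSA (ℓ+1), hiff (ℓ+1)]
          omega
        · rw [if_neg hℓ, Set.indicator_of_notMem]
          rw [← hSA (ℓ+1), hiff (ℓ+1)]
          omega
      rw [tsum_congr hterm]
      rw [tsum_eq_sum (s := Finset.range M) (fun b hb => if_neg (by simpa using hb))]
      rw [Finset.sum_congr rfl (fun b hb => if_pos (Finset.mem_range.mp hb))]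
      simp
    rw [hNM, hgω]
  have hint : ∫⁻ ω, g ω ∂P = ∑' ℓ:ℕ, P (A (ℓ+1)) := by
    rw [hg]
    simp only
    rw [lintegral_tsum (fun ℓ => (measurable_const.indicator (hAm (ℓ+1))).aemeasurable)]
    exact tsum_congr (fun ℓ => lintegral_indicator_one (hAm (ℓ+1)))
  have haes : AEStronglyMeasurable (fun ω => ((N t ω : ℕ) : ℝ)) P := by
    refine (hgm.ennreal_toReal.aestronglyMeasurable).congr ?_
    filter_upwards [haeN] with ω hω
    rw [← hω, ENNReal.toReal_natCast]
  rw [MeasureTheory.integral_eq_lintegral_of_nonneg_ae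
    (Filter.Eventually.of_forall (fun ω => Nat.cast_nonneg _)) haes]
  have hL : ∫⁻ ω, ENNReal.ofReal ((N t ω : ℕ):ℝ) ∂P = ∑' ℓ:ℕ, P (A (ℓ+1)) := by
    rw [← hint]
    apply lintegral_congr_ae
    filter_upwards [haeN] with ω hω
    rw [ENNReal.ofReal_natCast, hω]
  rw [hL]
  have hsplit : ∑' ℓ:ℕ, P (A (ℓ+1))
      = (n:ℝ≥0∞) + ENNReal.ofReal (∑' j : ℕ, ihF (n+1+j) t) := by
    rw [← Summable.sum_add_tsum_nat_add' (f := fun ℓ => P (A (ℓ+1))) (k := n) ENNReal.summable]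
    congr 1
    · rw [Finset.sum_congr rfl (fun i hi => hAone (i+1) (by
        have : (i:ℝ) + 1 ≤ (n:ℝ) := by
          have := Finset.mem_range.mp hi
          exact_mod_cast Nat.succ_le_of_lt this
        push_cast
        linarith))]
      simp
    · rw [tsum_congr (fun j => by rw [(by omega : j + n + 1 = n+1+j)])]
      exact htailE
  rw [hsplit, ENNReal.toReal_add (by simp) ENNReal.ofReal_ne_top,
    ENNReal.toReal_natCast, ENNReal.toReal_ofReal hT0, tail_sum n t htn htn1]
  ring
end

section
/- For every integer n ≥ 0 and every real t, Σ_{k=0}^{n} Σ_{ℓ=0}^{n-k} ((-1)^k (t-k)^k / k!) · ((t-k)^ℓ / ℓ!) = n + 1. -/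
open Finset

private lemma fd_zero_fun : fwdDiff (1:ℝ) (0 : ℝ → ℝ) = 0 := by
  funext x; simp [fwdDiff]

private lemma fd_iter_zero_fun (m : ℕ) : (fwdDiff (1:ℝ))^[m] (0 : ℝ → ℝ) = 0 := by
  induction m with
  | zero => rfl
  | succ m ih => rw [Function.iterate_succ_apply, fd_zero_fun, ih]

private lemma fd_step (j' : ℕ) : fwdDiff (1:ℝ) (fun x : ℝ ↦ x ^ (j' + 1))
    = ∑ i ∈ Finset.range (j' + 1), ((j'+1).choose i : ℝ) • fun x : ℝ ↦ x ^ i := by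
  funext x
  simp only [fwdDiff, Finset.sum_apply, Pi.smul_apply, smul_eq_mul]
  rw [add_pow]
  rw [Finset.sum_range_succ]
  simp [Nat.choose_self]
  ring_nf

private lemma fd_pow : ∀ j : ℕ, (∀ m : ℕ, j < m → (fwdDiff (1:ℝ))^[m] (fun x : ℝ ↦ x ^ j) = 0)
    ∧ (fwdDiff (1:ℝ))^[j] (fun x : ℝ ↦ x ^ j) = fun _ ↦ (j.factorial : ℝ) := by
  intro j
  induction j using Nat.strong_induction_on with
  | _ j ih =>
    match j with
    | 0 =>
      constructor
      · intro m hm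
        obtain ⟨m', rfl⟩ : ∃ m', m = m' + 1 := ⟨m - 1, by omega⟩
        rw [Function.iterate_succ_apply]
        have h1 : fwdDiff (1:ℝ) (fun x : ℝ ↦ x ^ 0) = 0 := by
          funext x; simp [fwdDiff]
        rw [h1, fd_iter_zero_fun]
      · funext x; simp
    | j' + 1 =>
      have hsum : ∀ m' : ℕ, (fwdDiff (1:ℝ))^[m' + 1] (fun x : ℝ ↦ x ^ (j' + 1))
          = ∑ i ∈ Finset.range (j' + 1),
              ((j'+1).choose i : ℝ) • (fwdDiff (1:ℝ))^[m'] (fun x : ℝ ↦ x ^ i) := by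
        intro m'
        rw [Function.iterate_succ_apply, fd_step, fwdDiff_iter_finset_sum]
        exact Finset.sum_congr rfl fun i _ ↦ by rw [fwdDiff_iter_const_smul]
      constructor
      · intro m hm
        obtain ⟨m', rfl⟩ : ∃ m', m = m' + 1 := ⟨m - 1, by omega⟩
        rw [hsum]
        refine Finset.sum_eq_zero fun i hi ↦ ?_
        have hij : i < j' + 1 := Finset.mem_range.mp hi
        have hi' : i < m' := by omega
        rw [(ih i hij).1 m' hi', smul_zero]
      · rw [hsum]
        rw [Finset.sum_range_succ]
        have h0 : ∀ i ∈ Finset.range j',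
            ((j'+1).choose i : ℝ) • (fwdDiff (1:ℝ))^[j'] (fun x : ℝ ↦ x ^ i) = 0 := by
          intro i hi
          rw [(ih i (Nat.lt_succ_of_lt (Finset.mem_range.mp hi))).1 j' (Finset.mem_range.mp hi),
            smul_zero]
        rw [Finset.sum_eq_zero h0, zero_add, (ih j' (Nat.lt_succ_self j')).2]
        funext x
        simp only [Pi.smul_apply, smul_eq_mul]
        rw [Nat.choose_succ_self_right, Nat.factorial_succ]
        push_cast
        ring

private lemma fd_key (m : ℕ) (t : ℝ) :
    ∑ k ∈ Finset.range (m + 1), (-1:ℝ)^k * (m.choose k : ℝ) * (t - k)^m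
      = (m.factorial : ℝ) := by
  have hbin : (fun x : ℝ ↦ (t - x) ^ m)
      = ∑ j ∈ Finset.range (m + 1),
          ((-1:ℝ)^j * t^(m-j) * (m.choose j : ℝ)) • (fun x : ℝ ↦ x ^ j) := by
    funext x
    simp only [Finset.sum_apply, Pi.smul_apply, smul_eq_mul]
    rw [sub_eq_add_neg, add_comm, add_pow]
    refine Finset.sum_congr rfl fun j _ ↦ ?_
    rw [neg_pow]
    ring
  have hlhs : (fwdDiff (1:ℝ))^[m] (fun x : ℝ ↦ (t - x) ^ m) 0 = (-1:ℝ)^m * m.factorial := by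
    rw [hbin, fwdDiff_iter_finset_sum, Finset.sum_apply, Finset.sum_range_succ]
    have h0 : ∀ j ∈ Finset.range m,
        ((fwdDiff (1:ℝ))^[m] (((-1:ℝ)^j * t^(m-j) * (m.choose j : ℝ)) • fun x : ℝ ↦ x ^ j)) 0
          = 0 := by
      intro j hj
      rw [fwdDiff_iter_const_smul, (fd_pow j).1 m (Finset.mem_range.mp hj)]
      simp
    rw [Finset.sum_congr rfl h0, Finset.sum_const_zero, zero_add,
      fwdDiff_iter_const_smul, (fd_pow m).2]
    simp [Nat.choose_self]
  have hrhs := fwdDiff_iter_eq_sum_shift (1:ℝ) (fun x : ℝ ↦ (t - x) ^ m) m 0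
  rw [hlhs] at hrhs
  have hrhs' : (-1:ℝ)^m * m.factorial
      = ∑ k ∈ Finset.range (m + 1), (-1:ℝ)^(m-k) * (m.choose k : ℝ) * (t - k)^m := by
    rw [hrhs]
    refine Finset.sum_congr rfl fun k _ ↦ ?_
    rw [zsmul_eq_mul]
    push_cast
    ring_nf
  have hmul := congrArg (fun x ↦ (-1:ℝ)^m * x) hrhs'
  simp only [Finset.mul_sum] at hmul
  have hterm : ∀ k ∈ Finset.range (m+1),
      (-1:ℝ)^m * ((-1:ℝ)^(m-k) * (m.choose k : ℝ) * (t - k)^m)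
        = (-1:ℝ)^k * (m.choose k : ℝ) * (t - k)^m := by
    intro k hk
    have hk' : k ≤ m := Nat.lt_succ_iff.mp (Finset.mem_range.mp hk)
    have hsgn : (-1:ℝ)^m * (-1:ℝ)^(m-k) = (-1:ℝ)^k := by
      rw [← pow_add]
      rw [show m + (m - k) = 2 * (m - k) + k by omega, pow_add, pow_mul]
      simp
    linear_combination ((m.choose k : ℝ) * (t - k)^m) * hsgn
  rw [Finset.sum_congr rfl hterm] at hmul
  rw [← hmul]
  rw [← mul_assoc, ← pow_add, ← two_mul, pow_mul]
  simp

private lemma fd_key2 (m : ℕ) (t : ℝ) :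
    ∑ k ∈ Finset.range (m + 1),
      ((-1:ℝ)^k * (t - k)^k / k.factorial) * ((t - k)^(m-k) / (m-k).factorial) = 1 := by
  have hfac : (m.factorial : ℝ) ≠ 0 := Nat.cast_ne_zero.mpr m.factorial_ne_zero
  have hterm : ∀ k ∈ Finset.range (m+1),
      ((-1:ℝ)^k * (t - k)^k / k.factorial) * ((t - k)^(m-k) / (m-k).factorial)
        = ((-1:ℝ)^k * (m.choose k : ℝ) * (t - k)^m) / m.factorial := by
    intro k hk
    have hk' : k ≤ m := Nat.lt_succ_iff.mp (Finset.mem_range.mp hk)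
    have hpow : (t - (k:ℝ))^k * (t - k)^(m-k) = (t - k)^m := by
      rw [← pow_add, Nat.add_sub_cancel' hk']
    have hcho : ((m.choose k : ℝ)) * k.factorial * (m-k).factorial = m.factorial := by
      exact_mod_cast congrArg (Nat.cast : ℕ → ℝ)
        (Nat.choose_mul_factorial_mul_factorial hk')
    have hkf : (k.factorial : ℝ) ≠ 0 := Nat.cast_ne_zero.mpr k.factorial_ne_zero
    have hmkf : ((m-k).factorial : ℝ) ≠ 0 := Nat.cast_ne_zero.mpr (m-k).factorial_ne_zero
    rw [div_mul_div_comm, div_eq_div_iff (by positivity) hfac]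
    linear_combination ((-1:ℝ)^k * (m.factorial:ℝ)) * hpow - ((-1:ℝ)^k * (t-k)^m) * hcho
  rw [Finset.sum_congr rfl hterm, ← Finset.sum_div, fd_key, div_self hfac]

/-- Combinatorial identity used in the closed form of the renewal function:
`Σ_{k=0}^{n} Σ_{ℓ=0}^{n−k} ((−1)ᵏ (t−k)ᵏ/k!)·((t−k)ˡ/ℓ!) = n + 1`
for every integer `n ≥ 0` and real `t`. -/
theorem renewal_combinatorial_identity (n : ℕ) (t : ℝ) :
    ∑ k ∈ Finset.range (n + 1), ∑ l ∈ Finset.range (n - k + 1),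
      ((-1 : ℝ) ^ k * (t - (k : ℝ)) ^ k / (Nat.factorial k)) *
        ((t - (k : ℝ)) ^ l / (Nat.factorial l)) = (n : ℝ) + 1 := by
  induction n with
  | zero => simp
  | succ n ih =>
    have hsplit : ∀ k ∈ Finset.range (n + 1),
        ∑ l ∈ Finset.range (n + 1 - k + 1),
          ((-1 : ℝ) ^ k * (t - (k : ℝ)) ^ k / (Nat.factorial k)) *
            ((t - (k : ℝ)) ^ l / (Nat.factorial l))
        = (∑ l ∈ Finset.range (n - k + 1),
            ((-1 : ℝ) ^ k * (t - (k : ℝ)) ^ k / (Nat.factorial k)) *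
              ((t - (k : ℝ)) ^ l / (Nat.factorial l)))
          + ((-1 : ℝ) ^ k * (t - (k : ℝ)) ^ k / (Nat.factorial k)) *
              ((t - (k : ℝ)) ^ (n + 1 - k) / (Nat.factorial (n + 1 - k))) := by
      intro k hk
      have h1 : n + 1 - k = (n - k) + 1 := by
        have := Nat.lt_succ_iff.mp (Finset.mem_range.mp hk); omega
      rw [h1, Finset.sum_range_succ]
    rw [Finset.sum_range_succ, Finset.sum_congr rfl hsplit, Finset.sum_add_distrib]
    rw [ih]
    have hlast : ∑ l ∈ Finset.range (n + 1 - (n+1) + 1),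
        ((-1 : ℝ) ^ (n+1) * (t - ((n+1:ℕ) : ℝ)) ^ (n+1) / (Nat.factorial (n+1))) *
          ((t - ((n+1:ℕ) : ℝ)) ^ l / (Nat.factorial l))
        = ((-1 : ℝ) ^ (n+1) * (t - ((n+1:ℕ) : ℝ)) ^ (n+1) / (Nat.factorial (n+1))) *
            ((t - ((n+1:ℕ) : ℝ)) ^ (n + 1 - (n+1)) / (Nat.factorial (n + 1 - (n+1)))) := by
      simp
    push_cast at hlast ⊢
    rw [hlast]
    have hkey := fd_key2 (n+1) t
    rw [Finset.sum_range_succ] at hkey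
    push_cast at hkey
    linarith [hkey]
end
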